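/- arXiv:2002.08545 — 11 statements merged into one kernel-verified Lean document; each statement's English description precedes it below -/
import Mathlib

section
/- Let p* ∈ (0,1) and let P be a random variable uniformly distributed on [0,1]. Define the missing bit h(P) = 1 if P < p* and h(P) = -1 otherwise, and the masked p-value g(P) = min{P, (p*/(1-p*))(1-P)} (the tent masking). Then h(P) and g(P) are independent, h(P) = 1 with probability p*, and g(P) is uniformly distributed on (0, p*). -/
open MeasureTheory ProbabilityTheory Set

/-- For `P` uniform on `[0,1]` and tent masking with parameter `p* ∈ (0,1)`,
the missing bit `h(P) = if P < p* then 1 else -1` and the masked p-value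
`g(P) = min(P, p*/(1-p*)·(1-P))` are independent, `h(P) = 1` with probability `p*`,
and `g(P)` is uniformly distributed on `(0, p*)`. -/
theorem tent_masking_independent
    {Ω : Type*} [MeasurableSpace Ω] (μ : Measure Ω) [IsProbabilityMeasure μ]
    (pstar : ℝ) (hp : pstar ∈ Set.Ioo (0:ℝ) 1)
    (P : Ω → ℝ) (hPm : Measurable P)
    (hunif : μ.map P = volume.restrict (Set.Icc 0 1)) :
    IndepFun (fun ω => if P ω < pstar then (1:ℝ) else -1)
        (fun ω => min (P ω) (pstar / (1 - pstar) * (1 - P ω))) μ ∧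
    μ {ω | (if P ω < pstar then (1:ℝ) else -1) = 1} = ENNReal.ofReal pstar ∧
    μ.map (fun ω => min (P ω) (pstar / (1 - pstar) * (1 - P ω)))
      = (ENNReal.ofReal pstar)⁻¹ • volume.restrict (Set.Ioo 0 pstar) := by
  obtain ⟨hp0, hp1⟩ := hp
  have h1p : (0:ℝ) < 1 - pstar := by linarith
  set c : ℝ := pstar / (1 - pstar) with hcdef
  have hc0 : 0 < c := div_pos hp0 h1p
  have hcp : c * (1 - pstar) = pstar := by
    rw [hcdef, div_mul_cancel₀ _ h1p.ne']
  set G : ℝ → ℝ := fun x => min x (c * (1 - x)) with hGdef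
  set H : ℝ → ℝ := fun x => if x < pstar then (1:ℝ) else -1 with hHdef
  have hGm : Measurable G :=
    (continuous_id.min (by fun_prop)).measurable
  have hHm : Measurable H :=
    Measurable.ite measurableSet_Iio measurable_const measurable_const
  -- pointwise description of G
  have hGlt : ∀ x : ℝ, x < pstar → G x = x := by
    intro x hx
    exact min_eq_left (by nlinarith)
  have hGge : ∀ x : ℝ, pstar ≤ x → G x = c * (1 - x) := by
    intro x hx
    exact min_eq_right (by nlinarith)
  set φ : ℝ → ℝ := fun x => c - c * x with hφdef
  have hGφ : ∀ x : ℝ, pstar ≤ x → G x = φ x := by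
    intro x hx
    rw [hGge x hx, hφdef, mul_one_sub]
  -- set identities
  have hset1 : ∀ T : Set ℝ, G ⁻¹' T ∩ Ico 0 pstar = T ∩ Ico 0 pstar := by
    intro T
    ext x
    simp only [mem_inter_iff, mem_preimage, mem_Ico, and_congr_left_iff]
    intro hx
    rw [hGlt x hx.2]
  have hset2 : ∀ T : Set ℝ, G ⁻¹' T ∩ Icc pstar 1 = φ ⁻¹' (T ∩ Icc 0 pstar) := by
    intro T
    ext x
    simp only [mem_inter_iff, mem_preimage, mem_Icc, hφdef]
    constructor
    · rintro ⟨hGx, hx1, hx2⟩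
      rw [hGφ x hx1] at hGx
      exact ⟨hGx, by nlinarith, by nlinarith⟩
    · rintro ⟨hT, h0, hps⟩
      have hx1 : pstar ≤ x := by nlinarith
      refine ⟨?_, hx1, by nlinarith⟩
      rw [hGφ x hx1]
      exact hT
  -- volume of φ-preimages
  have hφvol : ∀ T : Set ℝ, MeasurableSet T →
      volume (φ ⁻¹' T) = ENNReal.ofReal c⁻¹ * volume T := by
    intro T hT
    have heq : φ ⁻¹' T = (fun x => c * x) ⁻¹' ((fun y => c - y) ⁻¹' T) := by
      ext x; simp [hφdef]
    rw [heq, Real.volume_preimage_mul_left hc0.ne',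
      (Measure.measurePreserving_sub_left volume c).measure_preimage hT.nullMeasurableSet,
      abs_of_pos (inv_pos.mpr hc0)]
  -- the two halves of the computation
  have hIooIco : ∀ T : Set ℝ, volume (T ∩ Ico 0 pstar) = volume (T ∩ Ioo 0 pstar) :=
    fun T => (measure_congr (ae_eq_set_inter (ae_eq_refl T) Ioo_ae_eq_Ico)).symm
  have hIooIcc : ∀ T : Set ℝ, volume (T ∩ Icc 0 pstar) = volume (T ∩ Ioo 0 pstar) :=
    fun T => (measure_congr (ae_eq_set_inter (ae_eq_refl T) Ioo_ae_eq_Icc)).symm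
  have key1 : ∀ T : Set ℝ,
      volume (G ⁻¹' T ∩ Ico 0 pstar) = volume (T ∩ Ioo 0 pstar) := by
    intro T; rw [hset1, hIooIco]
  have key2 : ∀ T : Set ℝ, MeasurableSet T →
      volume (G ⁻¹' T ∩ Icc pstar 1) = ENNReal.ofReal c⁻¹ * volume (T ∩ Ioo 0 pstar) := by
    intro T hT
    rw [hset2, hφvol _ (hT.inter measurableSet_Icc), hIooIcc]
  -- total measure of G-preimage on [0,1]
  have hdisj : Disjoint (Ico (0:ℝ) pstar) (Icc pstar 1) := by
    rw [Set.disjoint_left]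
    rintro x ⟨_, h⟩ ⟨h', _⟩
    exact absurd h' (not_le.mpr h)
  have hsplit : ∀ A : Set ℝ, MeasurableSet A →
      volume (A ∩ Icc 0 1) = volume (A ∩ Ico 0 pstar) + volume (A ∩ Icc pstar 1) := by
    intro A hA
    calc volume (A ∩ Icc 0 1) = volume ((A ∩ Ico 0 pstar) ∪ (A ∩ Icc pstar 1)) := by
          rw [← inter_union_distrib_left, Ico_union_Icc_eq_Icc (le_of_lt hp0) (le_of_lt hp1)]
      _ = volume (A ∩ Ico 0 pstar) + volume (A ∩ Icc pstar 1) :=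
          measure_union (hdisj.mono inter_subset_right inter_subset_right)
            (hA.inter measurableSet_Icc)
  have hc_inv : (1:ℝ) + c⁻¹ = pstar⁻¹ := by
    rw [hcdef]; field_simp; ring
  have keyG : ∀ T : Set ℝ, MeasurableSet T →
      volume (G ⁻¹' T ∩ Icc 0 1) = ENNReal.ofReal pstar⁻¹ * volume (T ∩ Ioo 0 pstar) := by
    intro T hT
    rw [hsplit _ (hGm hT), key1, key2 _ hT, ← hc_inv,
      ENNReal.ofReal_add zero_le_one (inv_pos.mpr hc0).le, ENNReal.ofReal_one, add_mul, one_mul]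
  -- transfer to μ via the map hypothesis
  have hmap : ∀ A : Set ℝ, MeasurableSet A → μ (P ⁻¹' A) = volume (A ∩ Icc 0 1) := by
    intro A hA
    rw [← Measure.map_apply hPm hA, hunif, Measure.restrict_apply hA]
  -- measures of the basic events
  have hμIio : μ (P ⁻¹' Iio pstar) = ENNReal.ofReal pstar := by
    rw [hmap _ measurableSet_Iio]
    have h : Iio pstar ∩ Icc 0 1 = Ico 0 pstar := by
      ext x; simp only [mem_inter_iff, mem_Iio, mem_Icc, mem_Ico]
      constructor
      · rintro ⟨ha, hb, _⟩; exact ⟨hb, ha⟩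
      · rintro ⟨ha, hb⟩; exact ⟨hb, ha, by linarith⟩
    rw [h, Real.volume_Ico, sub_zero]
  have hμIci : μ (P ⁻¹' Ici pstar) = ENNReal.ofReal (1 - pstar) := by
    rw [hmap _ measurableSet_Ici]
    have h : Ici pstar ∩ Icc 0 1 = Icc pstar 1 := by
      ext x; simp only [mem_inter_iff, mem_Ici, mem_Icc]
      constructor
      · rintro ⟨ha, _, hb⟩; exact ⟨ha, hb⟩
      · rintro ⟨ha, hb⟩; exact ⟨ha, by linarith, hb⟩
    rw [h, Real.volume_Icc]
  have hμG : ∀ T : Set ℝ, MeasurableSet T →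
      μ (P ⁻¹' (G ⁻¹' T)) = ENNReal.ofReal pstar⁻¹ * volume (T ∩ Ioo 0 pstar) := by
    intro T hT
    rw [hmap _ (hGm hT), keyG _ hT]
  have hofmul : ENNReal.ofReal pstar * ENNReal.ofReal pstar⁻¹ = 1 := by
    rw [← ENNReal.ofReal_mul (le_of_lt hp0), mul_inv_cancel₀ hp0.ne', ENNReal.ofReal_one]
  have e1 : ∀ s : Set ℝ,
      (fun ω => if P ω < pstar then (1:ℝ) else -1) ⁻¹' s = P ⁻¹' (H ⁻¹' s) := fun _ => rfl
  have e2 : ∀ t : Set ℝ,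
      (fun ω => min (P ω) (c * (1 - P ω))) ⁻¹' t = P ⁻¹' (G ⁻¹' t) := fun _ => rfl
  refine ⟨?_, ?_, ?_⟩
  · -- independence
    rw [indepFun_iff_measure_inter_preimage_eq_mul]
    intro s t hs ht
    rw [e1, e2, ← Set.preimage_inter]
    by_cases h1 : (1:ℝ) ∈ s <;> by_cases h2 : (-1:ℝ) ∈ s
    · have hu : H ⁻¹' s = univ := by
        ext x
        simp only [mem_preimage, mem_univ, iff_true, hHdef]
        by_cases h : x < pstar
        · rw [if_pos h]; exact h1
        · rw [if_neg h]; exact h2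
      rw [hu, univ_inter, preimage_univ, measure_univ, one_mul]
    · have hu : H ⁻¹' s = Iio pstar := by
        ext x
        simp only [mem_preimage, mem_Iio, hHdef]
        by_cases h : x < pstar
        · rw [if_pos h]; exact iff_of_true h1 h
        · rw [if_neg h]; exact iff_of_false h2 h
      rw [hu, hμIio, hμG t ht]
      have hL : (Iio pstar ∩ G ⁻¹' t) ∩ Icc 0 1 = G ⁻¹' t ∩ Ico 0 pstar := by
        ext x
        simp only [mem_inter_iff, mem_Iio, mem_Icc, mem_Ico]
        constructor
        · rintro ⟨⟨ha, hb⟩, hcx, _⟩; exact ⟨hb, hcx, ha⟩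
        · rintro ⟨ha, hb, hcx⟩; exact ⟨⟨hcx, ha⟩, hb, by linarith⟩
      rw [hmap _ ((measurableSet_Iio).inter (hGm ht)), hL, key1, ← mul_assoc, hofmul, one_mul]
    · have hu : H ⁻¹' s = Ici pstar := by
        ext x
        simp only [mem_preimage, mem_Ici, hHdef]
        by_cases h : x < pstar
        · rw [if_pos h]; exact iff_of_false h1 (not_le.mpr h)
        · rw [if_neg h]; exact iff_of_true h2 (not_lt.mp h)
      rw [hu, hμIci, hμG t ht]
      have hL : (Ici pstar ∩ G ⁻¹' t) ∩ Icc 0 1 = G ⁻¹' t ∩ Icc pstar 1 := by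
        ext x
        simp only [mem_inter_iff, mem_Ici, mem_Icc]
        constructor
        · rintro ⟨⟨ha, hb⟩, _, hd⟩; exact ⟨hb, ha, hd⟩
        · rintro ⟨ha, hb, hcx⟩; exact ⟨⟨hb, ha⟩, by linarith, hcx⟩
      rw [hmap _ ((measurableSet_Ici).inter (hGm ht)), hL, key2 _ ht, ← mul_assoc,
        ← ENNReal.ofReal_mul (le_of_lt h1p)]
      congr 2
      rw [hcdef]
      field_simp
    · have hu : H ⁻¹' s = ∅ := by
        ext x
        simp only [mem_preimage, mem_empty_iff_false, iff_false, hHdef]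
        by_cases h : x < pstar
        · rw [if_pos h]; exact h1
        · rw [if_neg h]; exact h2
      rw [hu, empty_inter, preimage_empty, measure_empty, zero_mul]
  · -- probability of the missing bit being 1
    have h : {ω | (if P ω < pstar then (1:ℝ) else -1) = 1} = P ⁻¹' Iio pstar := by
      ext ω
      simp only [mem_setOf_eq, mem_preimage, mem_Iio]
      by_cases h : P ω < pstar
      · rw [if_pos h]; exact iff_of_true rfl h
      · rw [if_neg h]; exact iff_of_false (by norm_num) h
    rw [h, hμIio]
  · -- distribution of the masked p-value
    ext T hT
    rw [Measure.map_apply (by exact (hGm.comp hPm)) hT]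
    rw [show (fun ω => min (P ω) (c * (1 - P ω))) ⁻¹' T = P ⁻¹' (G ⁻¹' T) from rfl,
      hμG T hT, Measure.smul_apply, Measure.restrict_apply hT, smul_eq_mul,
      ENNReal.ofReal_inv_of_pos hp0]
end

section
/- Let p* ∈ (0,1) and let P be a random variable uniformly distributed on [0,1]. Define h(P) = 1 if P < p* and h(P) = -1 otherwise, and the railway masking g(P) = P if 0 ≤ P < p*, and g(P) = (p*/(1-p*))(P - p*) if p* ≤ P ≤ 1. Then h(P) and g(P) are independent, h(P) = 1 with probability p*, and g(P) is uniformly distributed on (0, p*). -/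
open MeasureTheory ProbabilityTheory Set

private lemma vol_inter_Ico (pstar : ℝ) (t : Set ℝ) :
    volume (t ∩ Ico 0 pstar) = volume (t ∩ Ioo 0 pstar) := by
  refine le_antisymm ?_ (measure_mono (inter_subset_inter_right _ Ioo_subset_Ico_self))
  have hsub : t ∩ Ico 0 pstar ⊆ (t ∩ Ioo 0 pstar) ∪ {0} := by
    rintro x ⟨hxt, hx0, hxp⟩
    rcases eq_or_lt_of_le hx0 with h | h
    · exact Or.inr (by simp [← h])
    · exact Or.inl ⟨hxt, h, hxp⟩
  calc volume (t ∩ Ico 0 pstar) ≤ volume ((t ∩ Ioo 0 pstar) ∪ {0}) := measure_mono hsub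
    _ ≤ volume (t ∩ Ioo 0 pstar) + volume ({0} : Set ℝ) := measure_union_le _ _
    _ = volume (t ∩ Ioo 0 pstar) := by simp

private lemma vol_inter_Icc (pstar : ℝ) (t : Set ℝ) :
    volume (t ∩ Icc 0 pstar) = volume (t ∩ Ioo 0 pstar) := by
  refine le_antisymm ?_ (measure_mono (inter_subset_inter_right _ Ioo_subset_Icc_self))
  have hsub : t ∩ Icc 0 pstar ⊆ (t ∩ Ioo 0 pstar) ∪ ({0, pstar} : Set ℝ) := by
    rintro x ⟨hxt, hx0, hxp⟩
    rcases eq_or_lt_of_le hx0 with h | h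
    · exact Or.inr (by simp [← h])
    rcases eq_or_lt_of_le hxp with h' | h'
    · exact Or.inr (by simp [h'])
    · exact Or.inl ⟨hxt, h, h'⟩
  calc volume (t ∩ Icc 0 pstar) ≤ volume ((t ∩ Ioo 0 pstar) ∪ ({0, pstar} : Set ℝ)) :=
        measure_mono hsub
    _ ≤ volume (t ∩ Ioo 0 pstar) + volume ({0, pstar} : Set ℝ) := measure_union_le _ _
    _ = volume (t ∩ Ioo 0 pstar) := by
        have hz : volume ({0, pstar} : Set ℝ) = 0 := by
          rw [Set.insert_eq]
          exact measure_union_null Real.volume_singleton Real.volume_singleton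
        rw [hz, add_zero]

/-- Volume of the preimage of the affine part. -/
private lemma vol_phi_preimage (pstar : ℝ) (h0 : 0 < pstar) (h1 : pstar < 1) (S : Set ℝ) :
    volume ((fun x : ℝ => pstar / (1 - pstar) * (x - pstar)) ⁻¹' S)
      = ENNReal.ofReal ((1 - pstar) / pstar) * volume S := by
  have hc : (0:ℝ) < pstar / (1 - pstar) := div_pos h0 (by linarith)
  have hEq : (fun x : ℝ => pstar / (1 - pstar) * (x - pstar)) ⁻¹' S
      = (fun x : ℝ => x + (-pstar)) ⁻¹' ((pstar / (1 - pstar) * ·) ⁻¹' S) := by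
    ext x; simp [sub_eq_add_neg]
  rw [hEq, measure_preimage_add_right, Real.volume_preimage_mul_left (ne_of_gt hc)]
  congr 2
  rw [abs_of_pos (inv_pos.2 hc)]
  field_simp

/-- Key computation : volume of `G⁻¹ t ∩ [0,1]`. -/
private lemma vol_G_preimage (pstar : ℝ) (h0 : 0 < pstar) (h1 : pstar < 1) {t : Set ℝ} (ht : MeasurableSet t) :
    volume ((fun x : ℝ => if x < pstar then x else pstar / (1 - pstar) * (x - pstar)) ⁻¹' t
      ∩ Icc 0 1) = (ENNReal.ofReal pstar)⁻¹ * volume (t ∩ Ioo 0 pstar) := by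
  set G : ℝ → ℝ := fun x => if x < pstar then x else pstar / (1 - pstar) * (x - pstar) with hG
  set φ : ℝ → ℝ := fun x => pstar / (1 - pstar) * (x - pstar) with hφ
  have hsplit : G ⁻¹' t ∩ Icc 0 1 = (t ∩ Ico 0 pstar) ∪ (φ ⁻¹' t ∩ Icc pstar 1) := by
    ext x
    simp only [mem_inter_iff, mem_preimage, mem_Icc, mem_Ico, mem_union, hG]
    constructor
    · rintro ⟨hxt, hx0, hx1⟩
      by_cases h : x < pstar
      · left; rw [if_pos h] at hxt; exact ⟨hxt, hx0, h⟩
      · right; rw [if_neg h] at hxt; exact ⟨hxt, le_of_not_gt h, hx1⟩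
    · rintro (⟨hxt, hx0, hxp⟩ | ⟨hxt, hxp, hx1⟩)
      · exact ⟨by rw [if_pos hxp]; exact hxt, hx0, by linarith⟩
      · exact ⟨by rw [if_neg (not_lt.2 hxp)]; exact hxt, by linarith, hx1⟩
  have hdisj : Disjoint (t ∩ Ico 0 pstar) (φ ⁻¹' t ∩ Icc pstar 1) := by
    refine Set.disjoint_left.2 ?_
    rintro x ⟨_, _, hx2⟩ ⟨_, hx3, _⟩
    exact absurd hx3 (not_le.2 hx2)
  have hphiIcc : φ ⁻¹' t ∩ Icc pstar 1 = φ ⁻¹' (t ∩ Icc 0 pstar) := by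
    ext x
    simp only [mem_inter_iff, mem_preimage, mem_Icc, hφ]
    have h1p : (0:ℝ) < 1 - pstar := by linarith
    constructor
    · rintro ⟨hxt, hxp, hx1⟩
      refine ⟨hxt, mul_nonneg (le_of_lt (div_pos h0 h1p)) (by linarith), ?_⟩
      rw [div_mul_eq_mul_div, div_le_iff₀ h1p]
      nlinarith
    · rintro ⟨hxt, hge, hle⟩
      have hxp : pstar ≤ x := by nlinarith [div_pos h0 h1p]
      refine ⟨hxt, hxp, ?_⟩
      rw [div_mul_eq_mul_div, div_le_iff₀ h1p] at hle
      nlinarith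
  have hφm : Measurable φ := (measurable_id.sub measurable_const).const_mul _
  rw [hsplit, measure_union hdisj ((hφm ht).inter measurableSet_Icc), hphiIcc,
    vol_phi_preimage pstar h0 h1, vol_inter_Icc, vol_inter_Ico]
  have hkey : (ENNReal.ofReal pstar)⁻¹ = 1 + ENNReal.ofReal ((1 - pstar) / pstar) := by
    rw [← ENNReal.ofReal_one, ← ENNReal.ofReal_add (by norm_num) (div_nonneg (by linarith) (le_of_lt h0)),
      ← ENNReal.ofReal_inv_of_pos h0]
    congr 1
    field_simp
    ring
  rw [hkey, add_mul, one_mul]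

/-- For `P` uniform on `[0,1]` and railway masking with parameter `p* ∈ (0,1)`,
the missing bit `h(P) = if P < p* then 1 else -1` and the masked p-value
`g(P) = P` for `P < p*`, `g(P) = p*/(1-p*)·(P - p*)` for `P ≥ p*`, are independent,
`h(P) = 1` with probability `p*`, and `g(P)` is uniformly distributed on `(0, p*)`. -/
theorem railway_masking_independent
    {Ω : Type*} [MeasurableSpace Ω] (μ : Measure Ω) [IsProbabilityMeasure μ]
    (pstar : ℝ) (hp : pstar ∈ Set.Ioo (0:ℝ) 1)
    (P : Ω → ℝ) (hPm : Measurable P)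
    (hunif : μ.map P = volume.restrict (Set.Icc 0 1)) :
    IndepFun (fun ω => if P ω < pstar then (1:ℝ) else -1)
        (fun ω => if P ω < pstar then P ω else pstar / (1 - pstar) * (P ω - pstar)) μ ∧
    μ {ω | (if P ω < pstar then (1:ℝ) else -1) = 1} = ENNReal.ofReal pstar ∧
    μ.map (fun ω => if P ω < pstar then P ω else pstar / (1 - pstar) * (P ω - pstar))
      = (ENNReal.ofReal pstar)⁻¹ • volume.restrict (Set.Ioo 0 pstar) := by
  obtain ⟨h0, h1⟩ := hp
  set G : ℝ → ℝ := fun x => if x < pstar then x else pstar / (1 - pstar) * (x - pstar) with hG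
  have hGm : Measurable G := by
    apply Measurable.ite (measurableSet_Iio (a := pstar)) measurable_id
    exact (measurable_id.sub measurable_const).const_mul _
  have hgP : (fun ω => if P ω < pstar then P ω else pstar / (1 - pstar) * (P ω - pstar))
      = G ∘ P := rfl
  have hgm : Measurable (G ∘ P) := hGm.comp hPm
  -- μ of preimages of P
  have hμP : ∀ {S : Set ℝ}, MeasurableSet S → μ (P ⁻¹' S) = volume (S ∩ Icc 0 1) := by
    intro S hS
    rw [← Measure.map_apply hPm hS, hunif, Measure.restrict_apply hS]
  -- measure of the "left" event
  have hA : μ (P ⁻¹' Iio pstar) = ENNReal.ofReal pstar := by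
    rw [hμP measurableSet_Iio]
    have : Iio pstar ∩ Icc 0 1 = Ico 0 pstar := by
      ext x; simp only [mem_inter_iff, mem_Iio, mem_Icc, mem_Ico]
      constructor
      · rintro ⟨hx, hx0, _⟩; exact ⟨hx0, hx⟩
      · rintro ⟨hx0, hx⟩; exact ⟨hx, hx0, by linarith⟩
    rw [this, Real.volume_Ico, sub_zero]
  -- measure of g-preimages
  have hgmeas : ∀ {t : Set ℝ}, MeasurableSet t →
      μ ((G ∘ P) ⁻¹' t) = (ENNReal.ofReal pstar)⁻¹ * volume (t ∩ Ioo 0 pstar) := by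
    intro t ht
    rw [Set.preimage_comp, hμP (hGm ht), vol_G_preimage pstar h0 h1 ht]
  -- the joint measure
  have hjoint : ∀ {t : Set ℝ}, MeasurableSet t →
      μ (P ⁻¹' Iio pstar ∩ (G ∘ P) ⁻¹' t) = volume (t ∩ Ioo 0 pstar) := by
    intro t ht
    have hset : P ⁻¹' Iio pstar ∩ (G ∘ P) ⁻¹' t = P ⁻¹' (Iio pstar ∩ t) := by
      ext ω
      simp only [mem_inter_iff, mem_preimage, Function.comp_apply, mem_Iio, hG]
      constructor
      · rintro ⟨hlt, hmem⟩; rw [if_pos hlt] at hmem; exact ⟨hlt, hmem⟩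
      · rintro ⟨hlt, hmem⟩; exact ⟨hlt, by rw [if_pos hlt]; exact hmem⟩
    rw [hset, hμP (measurableSet_Iio.inter ht)]
    have : Iio pstar ∩ t ∩ Icc 0 1 = t ∩ Ico 0 pstar := by
      ext x; simp only [mem_inter_iff, mem_Iio, mem_Icc, mem_Ico]
      constructor
      · rintro ⟨⟨hx, hxt⟩, hx0, _⟩; exact ⟨hxt, hx0, hx⟩
      · rintro ⟨hxt, hx0, hx⟩; exact ⟨⟨hx, hxt⟩, hx0, by linarith⟩
    rw [this, vol_inter_Ico]
  have hpne : ENNReal.ofReal pstar ≠ 0 := by simp [h0, ENNReal.ofReal_eq_zero, not_le]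
  have hpnetop : ENNReal.ofReal pstar ≠ ⊤ := ENNReal.ofReal_ne_top
  -- key independence relation
  have hkey : ∀ {t : Set ℝ}, MeasurableSet t →
      μ (P ⁻¹' Iio pstar ∩ (G ∘ P) ⁻¹' t)
        = ENNReal.ofReal pstar * μ ((G ∘ P) ⁻¹' t) := by
    intro t ht
    rw [hjoint ht, hgmeas ht, ← mul_assoc, ENNReal.mul_inv_cancel hpne hpnetop, one_mul]
  -- complement version
  have hAc : μ ((P ⁻¹' Iio pstar)ᶜ) = ENNReal.ofReal (1 - pstar) := by
    rw [measure_compl (hPm measurableSet_Iio) (measure_ne_top μ _), hA, measure_univ,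
      ← ENNReal.ofReal_one, ← ENNReal.ofReal_sub _ (le_of_lt h0)]
  have hAmeas : MeasurableSet (P ⁻¹' Iio pstar) := hPm measurableSet_Iio
  have hkeyc : ∀ {t : Set ℝ}, MeasurableSet t →
      μ ((P ⁻¹' Iio pstar)ᶜ ∩ (G ∘ P) ⁻¹' t)
        = ENNReal.ofReal (1 - pstar) * μ ((G ∘ P) ⁻¹' t) := by
    intro t ht
    have hsum := measure_inter_add_diff ((G ∘ P) ⁻¹' t) hAmeas (μ := μ)
    have hdiff : (G ∘ P) ⁻¹' t \ P ⁻¹' Iio pstar = (P ⁻¹' Iio pstar)ᶜ ∩ (G ∘ P) ⁻¹' t := by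
      rw [diff_eq, inter_comm]
    rw [hdiff, inter_comm, hkey ht] at hsum
    have hsum2 : ENNReal.ofReal pstar * μ ((G ∘ P) ⁻¹' t)
        + ENNReal.ofReal (1 - pstar) * μ ((G ∘ P) ⁻¹' t) = μ ((G ∘ P) ⁻¹' t) := by
      rw [← add_mul, ← ENNReal.ofReal_add (le_of_lt h0) (by linarith)]
      norm_num
    have hfin : ENNReal.ofReal pstar * μ ((G ∘ P) ⁻¹' t) ≠ ⊤ :=
      ENNReal.mul_ne_top hpnetop (measure_ne_top μ _)
    exact (ENNReal.add_right_inj hfin).1 (hsum.trans hsum2.symm)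
  refine ⟨?_, ?_, ?_⟩
  · -- independence
    rw [indepFun_iff_measure_inter_preimage_eq_mul]
    intro s t hs ht
    have hne : ((-1:ℝ) = 1) = False := by norm_num
    show μ (_ ∩ (G ∘ P) ⁻¹' t) = μ _ * μ ((G ∘ P) ⁻¹' t)
    by_cases h1s : (1:ℝ) ∈ s <;> by_cases h2s : (-1:ℝ) ∈ s
    · have hfs : (fun ω => if P ω < pstar then (1:ℝ) else -1) ⁻¹' s = univ := by
        ext ω; by_cases hω : P ω < pstar <;> simp [hω, h1s, h2s]
      rw [hfs, univ_inter, measure_univ, one_mul]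
    · have hfs : (fun ω => if P ω < pstar then (1:ℝ) else -1) ⁻¹' s = P ⁻¹' Iio pstar := by
        ext ω; by_cases hω : P ω < pstar <;> simp [hω, h1s, h2s]
      rw [hfs, hkey ht, hA]
    · have hfs : (fun ω => if P ω < pstar then (1:ℝ) else -1) ⁻¹' s
          = (P ⁻¹' Iio pstar)ᶜ := by
        ext ω; by_cases hω : P ω < pstar <;> simp [hω, h1s, h2s]
      rw [hfs, hkeyc ht, hAc]
    · have hfs : (fun ω => if P ω < pstar then (1:ℝ) else -1) ⁻¹' s = ∅ := by
        ext ω; by_cases hω : P ω < pstar <;> simp [hω, h1s, h2s]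
      rw [hfs, empty_inter, measure_empty, zero_mul]
  · -- probability of h = 1
    have : {ω | (if P ω < pstar then (1:ℝ) else -1) = 1} = P ⁻¹' Iio pstar := by
      ext ω
      by_cases hω : P ω < pstar <;> simp [hω, show ¬((-1:ℝ) = 1) by norm_num]
    rw [this, hA]
  · -- distribution of g
    rw [hgP]
    refine Measure.ext fun t ht => ?_
    rw [Measure.map_apply hgm ht, hgmeas ht, Measure.smul_apply,
      Measure.restrict_apply ht, smul_eq_mul]
end

section
/- Let 0 < p_l ≤ p_u < 1 and let P be uniformly distributed on [0,1]. On the event {P < p_l or P > p_u}, define h(P) = 1 if P < p_l and h(P) = -1 if P > p_u, and define the gap masking g(P) = P if P < p_l, g(P) = (p_l/(1-p_u))(1-P) if P > p_u. Then, conditionally on the event {P < p_l or P > p_u}: the probability that h(P) = 1 equals p_l/(p_l + 1 - p_u), g(P) is uniformly distributed on (0, p_l), and h(P) and g(P) are conditionally independent. -/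
open MeasureTheory ProbabilityTheory Set
open scoped ENNReal

private lemma gap_aux_cancel (a b u v : ℝ≥0∞) (ha0 : a ≠ 0) (hat : a ≠ ⊤) :
    (a⁻¹ * u) * (a⁻¹ * (a * (b⁻¹ * v))) = a⁻¹ * (u * (b⁻¹ * v)) := by
  have h : (a⁻¹ * u) * (a⁻¹ * (a * (b⁻¹ * v))) = (a⁻¹ * a) * (a⁻¹ * (u * (b⁻¹ * v))) := by ring
  rw [h, ENNReal.inv_mul_cancel ha0 hat, one_mul]

private lemma gap_map_affine (c : ℝ) (hc : c ≠ 0) :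
    Measure.map (fun x : ℝ => c * (1 - x)) volume = ENNReal.ofReal |c|⁻¹ • volume := by
  have h1 : (fun x : ℝ => c * (1 - x)) = (fun y : ℝ => c + y) ∘ (fun x : ℝ => (-c) * x) := by
    funext x; simp [Function.comp]; ring
  rw [h1, ← Measure.map_map (by fun_prop) (by fun_prop),
    Real.map_volume_mul_left (neg_ne_zero.2 hc), Measure.map_smul,
    Measure.IsAddLeftInvariant.map_add_left_eq_self c]
  simp only [abs_inv, abs_neg]

/-- For `P` uniform on `[0,1]` and gap masking with parameters
`0 < p_l ≤ p_u < 1`, conditionally on the event `{P < p_l ∨ P > p_u}`: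
`h(P) = 1` (i.e. `P < p_l`) with probability `p_l/(p_l + 1 - p_u)`,
the masked value `g(P)` is uniform on `(0, p_l)`, and `h(P)` and `g(P)` are
conditionally independent. -/
theorem gap_masking_conditional_independent
    {Ω : Type*} [MeasurableSpace Ω] (μ : Measure Ω) [IsProbabilityMeasure μ]
    (pl pu : ℝ) (hl : 0 < pl) (hlu : pl ≤ pu) (hu : pu < 1)
    (P : Ω → ℝ) (hPm : Measurable P)
    (hunif : μ.map P = volume.restrict (Set.Icc 0 1)) :
    (μ[|{ω | P ω < pl ∨ pu < P ω}]) {ω | P ω < pl} = ENNReal.ofReal (pl / (pl + 1 - pu)) ∧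
    (μ[|{ω | P ω < pl ∨ pu < P ω}]).map
        (fun ω => if P ω < pl then P ω else pl / (1 - pu) * (1 - P ω))
      = (ENNReal.ofReal pl)⁻¹ • volume.restrict (Set.Ioo 0 pl) ∧
    IndepFun (fun ω => if P ω < pl then (1:ℝ) else -1)
        (fun ω => if P ω < pl then P ω else pl / (1 - pu) * (1 - P ω))
        (μ[|{ω | P ω < pl ∨ pu < P ω}]) := by
  have hpu1 : (0:ℝ) < 1 - pu := by linarith
  set c : ℝ := pl / (1 - pu) with hcdef
  have hcpos : 0 < c := div_pos hl hpu1
  have hcpl : c * (1 - pu) = pl := by rw [hcdef]; field_simp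
  have hq : (0:ℝ) < pl + 1 - pu := by linarith
  set f : ℝ → ℝ := fun x => if x < pl then x else c * (1 - x) with hfdef
  have hfm : Measurable f :=
    Measurable.ite measurableSet_Iio measurable_id (by fun_prop)
  have hfx1 : ∀ x : ℝ, x < pl → f x = x := by intro x hx; rw [hfdef]; exact if_pos hx
  have hfx2 : ∀ x : ℝ, pu < x → f x = c * (1 - x) := by
    intro x hx; rw [hfdef]; exact if_neg (not_lt.2 (hlu.trans hx.le))
  set A : Set Ω := {ω | P ω < pl ∨ pu < P ω} with hAdef
  have hApre : A = P ⁻¹' (Iio pl ∪ Ioi pu) := rfl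
  have hAm : MeasurableSet A :=
    hApre ▸ hPm (measurableSet_Iio.union measurableSet_Ioi)
  have hμS : ∀ S : Set ℝ, MeasurableSet S → μ (P ⁻¹' S) = volume (S ∩ Icc 0 1) := by
    intro S hS
    rw [← Measure.map_apply hPm hS, hunif, Measure.restrict_apply hS]
  have hAset : (Iio pl ∪ Ioi pu) ∩ Icc 0 1 = Ico 0 pl ∪ Ioc pu 1 := by
    ext x
    simp only [mem_inter_iff, mem_union, mem_Iio, mem_Ioi, mem_Icc, mem_Ico, mem_Ioc]
    constructor
    · rintro ⟨h | h, h0, h1⟩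
      · exact Or.inl ⟨h0, h⟩
      · exact Or.inr ⟨h, h1⟩
    · rintro (⟨h0, h⟩ | ⟨h, h1⟩)
      · exact ⟨Or.inl h, h0, by linarith⟩
      · exact ⟨Or.inr h, by linarith, h1⟩
  have hdisj : Disjoint (Ico (0:ℝ) pl) (Ioc pu 1) := by
    rw [Set.disjoint_left]
    rintro x ⟨_, h2⟩ ⟨h3, _⟩
    linarith
  have hμA : μ A = ENNReal.ofReal (pl + 1 - pu) := by
    rw [hApre, hμS _ (measurableSet_Iio.union measurableSet_Ioi), hAset,
      measure_union hdisj measurableSet_Ioc, Real.volume_Ico, Real.volume_Ioc,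
      sub_zero, ← ENNReal.ofReal_add hl.le (by linarith)]
    congr 1; ring
  have hq'0 : ENNReal.ofReal (pl + 1 - pu) ≠ 0 := (ENNReal.ofReal_pos.2 hq).ne'
  have hq't : ENNReal.ofReal (pl + 1 - pu) ≠ ⊤ := ENNReal.ofReal_ne_top
  have hpl'0 : ENNReal.ofReal pl ≠ 0 := (ENNReal.ofReal_pos.2 hl).ne'
  have hpl't : ENNReal.ofReal pl ≠ ⊤ := ENNReal.ofReal_ne_top
  have heS : ∀ S : Set ℝ, MeasurableSet S →
      volume ((fun x : ℝ => c * (1 - x)) ⁻¹' S) = ENNReal.ofReal c⁻¹ * volume S := by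
    intro S hS
    rw [← Measure.map_apply (by fun_prop) hS, gap_map_affine c hcpos.ne',
      abs_of_pos hcpos, Measure.smul_apply, smul_eq_mul]
  have hSI1 : ∀ t : Set ℝ, Iio pl ∩ f ⁻¹' t ∩ Icc 0 1 = Ico 0 pl ∩ t := by
    intro t; ext x
    simp only [mem_inter_iff, mem_Iio, mem_preimage, mem_Icc, mem_Ico]
    constructor
    · rintro ⟨⟨hx, hft⟩, hx0, _⟩
      exact ⟨⟨hx0, hx⟩, by rwa [hfx1 x hx] at hft⟩
    · rintro ⟨⟨hx0, hx⟩, hxt⟩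
      exact ⟨⟨hx, by rwa [hfx1 x hx]⟩, hx0, by linarith⟩
  have hSI2 : ∀ t : Set ℝ,
      Ioi pu ∩ f ⁻¹' t ∩ Icc 0 1 = (fun x : ℝ => c * (1 - x)) ⁻¹' (Ico 0 pl ∩ t) := by
    intro t; ext x
    simp only [mem_inter_iff, mem_Ioi, mem_preimage, mem_Icc, mem_Ico]
    constructor
    · rintro ⟨⟨hx, hft⟩, _, hx1⟩
      refine ⟨⟨by nlinarith, ?_⟩, by rwa [hfx2 x hx] at hft⟩
      nlinarith [mul_pos hcpos (sub_pos.2 hx)]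
    · rintro ⟨⟨he0, hepl⟩, het⟩
      have hx1 : x ≤ 1 := by
        by_contra h
        push_neg at h
        nlinarith [mul_pos hcpos (show (0:ℝ) < x - 1 by linarith)]
      have hpux : pu < x := by
        by_contra h
        push_neg at h
        have := mul_le_mul_of_nonneg_left (show 1 - pu ≤ 1 - x by linarith) hcpos.le
        linarith
      exact ⟨⟨hpux, by rwa [hfx2 x hpux]⟩, by linarith, hx1⟩
  have hco : (1 : ℝ≥0∞) + ENNReal.ofReal c⁻¹ =
      ENNReal.ofReal (pl + 1 - pu) * (ENNReal.ofReal pl)⁻¹ := by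
    have h3 : c⁻¹ = (1 - pu) / pl := by rw [hcdef, inv_div]
    rw [h3, ← ENNReal.ofReal_one, ← ENNReal.ofReal_add zero_le_one (by positivity),
      show (1 : ℝ) + (1 - pu) / pl = (pl + 1 - pu) / pl by field_simp; ring,
      ENNReal.ofReal_div_of_pos hl, div_eq_mul_inv]
  have hrc : ENNReal.ofReal c⁻¹ = ENNReal.ofReal (1 - pu) * (ENNReal.ofReal pl)⁻¹ := by
    rw [show c⁻¹ = (1 - pu) / pl by rw [hcdef, inv_div],
      ENNReal.ofReal_div_of_pos hl, div_eq_mul_inv]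
  have hkey : ∀ t : Set ℝ, MeasurableSet t →
      μ (A ∩ P ⁻¹' (f ⁻¹' t)) =
        ENNReal.ofReal (pl + 1 - pu) * ((ENNReal.ofReal pl)⁻¹ * volume (Ico 0 pl ∩ t)) := by
    intro t ht
    have h1 : μ (P ⁻¹' (Iio pl) ∩ P ⁻¹' (f ⁻¹' t)) = volume (Ico 0 pl ∩ t) := by
      rw [← Set.preimage_inter, hμS _ (measurableSet_Iio.inter (hfm ht)), hSI1 t]
    have h2 : μ (P ⁻¹' (Ioi pu) ∩ P ⁻¹' (f ⁻¹' t)) =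
        ENNReal.ofReal c⁻¹ * volume (Ico 0 pl ∩ t) := by
      rw [← Set.preimage_inter, hμS _ (measurableSet_Ioi.inter (hfm ht)), hSI2 t,
        heS _ (measurableSet_Ico.inter ht)]
    have hsplit : A ∩ P ⁻¹' (f ⁻¹' t) =
        (P ⁻¹' (Iio pl) ∩ P ⁻¹' (f ⁻¹' t)) ∪ (P ⁻¹' (Ioi pu) ∩ P ⁻¹' (f ⁻¹' t)) := by
      rw [hApre, Set.preimage_union, Set.union_inter_distrib_right]
    have hdisj2 : Disjoint (P ⁻¹' (Iio pl) ∩ P ⁻¹' (f ⁻¹' t))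
        (P ⁻¹' (Ioi pu) ∩ P ⁻¹' (f ⁻¹' t)) := by
      rw [Set.disjoint_left]
      rintro ω ⟨h1', _⟩ ⟨h2', _⟩
      simp only [mem_preimage, mem_Iio, mem_Ioi] at h1' h2'
      linarith
    rw [hsplit, measure_union hdisj2 ((hPm measurableSet_Ioi).inter (hPm (hfm ht))), h1, h2]
    calc volume (Ico 0 pl ∩ t) + ENNReal.ofReal c⁻¹ * volume (Ico 0 pl ∩ t)
        = (1 + ENNReal.ofReal c⁻¹) * volume (Ico 0 pl ∩ t) := by ring
      _ = _ := by rw [hco, mul_assoc]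
  have hcondA : ∀ X : Set Ω,
      (μ[|A]) X = (ENNReal.ofReal (pl + 1 - pu))⁻¹ * μ (A ∩ X) := by
    intro X; rw [cond_apply hAm, hμA]
  have hA1 : A ∩ P ⁻¹' (Iio pl) = P ⁻¹' (Iio pl) :=
    Set.inter_eq_self_of_subset_right (fun ω h => Or.inl h)
  have hμIio : μ (P ⁻¹' (Iio pl)) = ENNReal.ofReal pl := by
    rw [hμS _ measurableSet_Iio]
    have hset : Iio pl ∩ Icc (0:ℝ) 1 = Ico 0 pl := by
      ext x; simp only [mem_inter_iff, mem_Iio, mem_Icc, mem_Ico]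
      constructor
      · rintro ⟨h, h0, _⟩; exact ⟨h0, h⟩
      · rintro ⟨h0, h⟩; exact ⟨h, h0, by linarith⟩
    rw [hset, Real.volume_Ico, sub_zero]
  have claim1 : (μ[|A]) {ω | P ω < pl} = ENNReal.ofReal (pl / (pl + 1 - pu)) := by
    have hset : {ω | P ω < pl} = P ⁻¹' (Iio pl) := rfl
    rw [hset, hcondA, hA1, hμIio, ENNReal.ofReal_div_of_pos hq, div_eq_mul_inv]
    exact mul_comm _ _
  have hIcoIoo : ∀ t : Set ℝ, volume (Ico 0 pl ∩ t) = volume (t ∩ Ioo 0 pl) := by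
    intro t
    rw [Set.inter_comm]
    exact measure_congr
      (Filter.EventuallyEq.inter (Filter.EventuallyEq.refl _ _) Ioo_ae_eq_Ico.symm)
  have hgm : Measurable (fun ω => if P ω < pl then P ω else c * (1 - P ω)) := hfm.comp hPm
  have hgpre : ∀ t : Set ℝ,
      (fun ω => if P ω < pl then P ω else c * (1 - P ω)) ⁻¹' t = P ⁻¹' (f ⁻¹' t) :=
    fun t => rfl
  have hcondg : ∀ t : Set ℝ, MeasurableSet t →
      (μ[|A]) (P ⁻¹' (f ⁻¹' t)) = (ENNReal.ofReal (pl + 1 - pu))⁻¹ *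
        (ENNReal.ofReal (pl + 1 - pu) * ((ENNReal.ofReal pl)⁻¹ * volume (Ico 0 pl ∩ t))) := by
    intro t ht; rw [hcondA, hkey t ht]
  have claim2 : (μ[|A]).map (fun ω => if P ω < pl then P ω else c * (1 - P ω))
      = (ENNReal.ofReal pl)⁻¹ • volume.restrict (Ioo 0 pl) := by
    ext t ht
    rw [Measure.map_apply hgm ht, hgpre t, hcondg t ht, ← mul_assoc,
      ENNReal.inv_mul_cancel hq'0 hq't, one_mul,
      Measure.smul_apply, Measure.restrict_apply ht, smul_eq_mul, hIcoIoo t]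
  have claim3 : IndepFun (fun ω => if P ω < pl then (1:ℝ) else -1)
      (fun ω => if P ω < pl then P ω else c * (1 - P ω)) (μ[|A]) := by
    rw [indepFun_iff_measure_inter_preimage_eq_mul]
    intro s t hs ht
    haveI : IsProbabilityMeasure (μ[|A]) :=
      cond_isProbabilityMeasure (by rw [hμA]; exact hq'0)
    by_cases h1 : (1:ℝ) ∈ s <;> by_cases h2 : (-1:ℝ) ∈ s
    · have hH : (fun ω => if P ω < pl then (1:ℝ) else -1) ⁻¹' s = univ := by
        ext ω; simp only [mem_preimage, mem_univ, iff_true]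
        split_ifs
        exacts [h1, h2]
      rw [hH, Set.univ_inter, measure_univ, one_mul]
    · -- 1 ∈ s, -1 ∉ s
      have hH : (fun ω => if P ω < pl then (1:ℝ) else -1) ⁻¹' s = P ⁻¹' (Iio pl) := by
        ext ω; simp only [mem_preimage, mem_Iio]
        split_ifs with h
        · simp [h1, h]
        · simp [h2, h]
      have hint : A ∩ (P ⁻¹' (Iio pl) ∩ P ⁻¹' (f ⁻¹' t)) = P ⁻¹' (Iio pl) ∩ P ⁻¹' (f ⁻¹' t) :=
        Set.inter_eq_self_of_subset_right (fun ω h => Or.inl h.1)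
      rw [hH, hgpre t, hcondA (P ⁻¹' (Iio pl) ∩ P ⁻¹' (f ⁻¹' t)), hint,
        ← Set.preimage_inter, hμS _ (measurableSet_Iio.inter (hfm ht)), hSI1 t,
        hcondA (P ⁻¹' (Iio pl)), hA1, hμIio, hcondg t ht,
        gap_aux_cancel _ _ _ _ hq'0 hq't,
        ← mul_assoc (ENNReal.ofReal pl), ENNReal.mul_inv_cancel hpl'0 hpl't, one_mul]
    · -- 1 ∉ s, -1 ∈ s
      have hH : (fun ω => if P ω < pl then (1:ℝ) else -1) ⁻¹' s = {ω | ¬ P ω < pl} := by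
        ext ω; simp only [mem_preimage, mem_setOf_eq]
        split_ifs with h
        · simp [h1, h]
        · simp [h2, h]
      have hint : A ∩ ({ω | ¬ P ω < pl} ∩ P ⁻¹' (f ⁻¹' t)) =
          P ⁻¹' (Ioi pu) ∩ P ⁻¹' (f ⁻¹' t) := by
        ext ω
        simp only [hAdef, mem_inter_iff, mem_setOf_eq, mem_preimage, mem_Ioi]
        constructor
        · rintro ⟨hA', hnp, hft⟩
          exact ⟨hA'.resolve_left hnp, hft⟩
        · rintro ⟨hpu', hft⟩
          exact ⟨Or.inr hpu', not_lt.2 (by linarith), hft⟩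
      have hint2 : A ∩ {ω | ¬ P ω < pl} = P ⁻¹' (Ioi pu) := by
        ext ω
        simp only [hAdef, mem_inter_iff, mem_setOf_eq, mem_preimage, mem_Ioi]
        constructor
        · rintro ⟨hA', hnp⟩
          exact hA'.resolve_left hnp
        · intro hpu'
          exact ⟨Or.inr hpu', not_lt.2 (by linarith)⟩
      have hμIoi : μ (P ⁻¹' (Ioi pu)) = ENNReal.ofReal (1 - pu) := by
        rw [hμS _ measurableSet_Ioi]
        have hset : Ioi pu ∩ Icc (0:ℝ) 1 = Ioc pu 1 := by
          ext x; simp only [mem_inter_iff, mem_Ioi, mem_Icc, mem_Ioc]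
          constructor
          · rintro ⟨h, _, h1⟩; exact ⟨h, h1⟩
          · rintro ⟨h, h1⟩; exact ⟨h, by linarith, h1⟩
        rw [hset, Real.volume_Ioc]
      have h2' : μ (P ⁻¹' (Ioi pu) ∩ P ⁻¹' (f ⁻¹' t)) =
          ENNReal.ofReal c⁻¹ * volume (Ico 0 pl ∩ t) := by
        rw [← Set.preimage_inter, hμS _ (measurableSet_Ioi.inter (hfm ht)), hSI2 t,
          heS _ (measurableSet_Ico.inter ht)]
      rw [hH, hgpre t, hcondA ({ω | ¬ P ω < pl} ∩ P ⁻¹' (f ⁻¹' t)), hint, h2',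
        hcondA {ω | ¬ P ω < pl}, hint2, hμIoi, hcondg t ht,
        gap_aux_cancel _ _ _ _ hq'0 hq't, hrc]
      ring
    · have hH : (fun ω => if P ω < pl then (1:ℝ) else -1) ⁻¹' s = (∅ : Set Ω) := by
        ext ω; simp only [mem_preimage, mem_empty_iff_false, iff_false]
        split_ifs
        exacts [h1, h2]
      rw [hH, Set.empty_inter, measure_empty, zero_mul]
  exact ⟨claim1, claim2, claim3⟩
end

section
/- Let p* ∈ (0,1) and let P be a random variable on [0,1] with a density f that is mirror-conservative, i.e. f(a) ≤ f(1 - ((1-p*)/p*)·a) for all 0 ≤ a ≤ p*. With tent masking h(P) = 1{P < p*} (coded as ±1) and g(P) = min{P, (p*/(1-p*))(1-P)}, for every measurable set A ⊆ (0, p*) it holds that ℙ(P < p* and g(P) ∈ A) ≤ p* · ℙ(g(P) ∈ A); equivalently, ℙ(h(P) = 1 | g(P)) ≤ p* almost surely. -/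
open MeasureTheory ProbabilityTheory Set

lemma lintegral_affine_change (F : ℝ → ENNReal) (hF : Measurable F) {a : ℝ} (ha : a ≠ 0) (b : ℝ) :
    ∫⁻ x, F (a * x + b) = ENNReal.ofReal |a|⁻¹ * ∫⁻ y, F y := by
  calc ∫⁻ x, F (a * x + b) ∂volume
      = ∫⁻ y, F (y + b) ∂(Measure.map (a * ·) volume) :=
        (lintegral_map (f := fun y => F (y + b)) (hF.comp (measurable_add_const b))
          (measurable_const_mul a)).symm
    _ = ENNReal.ofReal |a⁻¹| * ∫⁻ y, F (y + b) ∂volume := by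
        rw [Real.map_volume_mul_left ha, lintegral_smul_measure, smul_eq_mul]
    _ = ENNReal.ofReal |a|⁻¹ * ∫⁻ y, F y := by
        rw [lintegral_add_right_eq_self (fun y => F y) b, abs_inv]

/-- If `P` has a mirror-conservative density `f` on `[0,1]`
(`f a ≤ f (1 - (1-p*)/p* · a)` for all `a ∈ [0, p*]`), then under tent masking
`h(P) = 1{P < p*}`, `g(P) = min(P, p*/(1-p*)·(1-P))`, for every measurable
`A ⊆ (0, p*)` we have `ℙ(P < p* ∧ g(P) ∈ A) ≤ p* · ℙ(g(P) ∈ A)`, i.e.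
`ℙ(h(P) = 1 | g(P)) ≤ p*` a.s. -/
theorem tent_masking_mirror_conservative
    {Ω : Type*} [MeasurableSpace Ω] (μ : Measure Ω) [IsProbabilityMeasure μ]
    (pstar : ℝ) (hp : pstar ∈ Set.Ioo (0:ℝ) 1)
    (P : Ω → ℝ) (hPm : Measurable P)
    (f : ℝ → ℝ) (hfm : Measurable f) (hf0 : ∀ x, 0 ≤ f x)
    (hsupp : ∀ x ∉ Set.Icc (0:ℝ) 1, f x = 0)
    (hdens : μ.map P = volume.withDensity (fun x => ENNReal.ofReal (f x)))
    (hmirror : ∀ a, 0 ≤ a → a ≤ pstar → f a ≤ f (1 - (1 - pstar) / pstar * a)) :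
    ∀ A : Set ℝ, MeasurableSet A → A ⊆ Set.Ioo 0 pstar →
      μ {ω | P ω < pstar ∧ min (P ω) (pstar / (1 - pstar) * (1 - P ω)) ∈ A}
        ≤ ENNReal.ofReal pstar * μ {ω | min (P ω) (pstar / (1 - pstar) * (1 - P ω)) ∈ A} := by
  intro A hA hAsub
  obtain ⟨hp0, hp1⟩ := hp
  have h1p : (0:ℝ) < 1 - pstar := by linarith
  set c : ℝ := pstar / (1 - pstar) with hc
  set k : ℝ := (1 - pstar) / pstar with hk
  have hcpos : 0 < c := div_pos hp0 h1p
  have hkpos : 0 < k := div_pos h1p hp0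
  have hck : c * k = 1 := by
    rw [hc, hk, div_mul_div_comm, mul_comm (1 - pstar) pstar]
    exact div_self (mul_pos hp0 h1p).ne'
  have hcp : c * (1 - pstar) = pstar := by
    rw [hc, div_mul_cancel₀ _ h1p.ne']
  set g : ℝ → ℝ := fun x => min x (c * (1 - x)) with hg
  have hgm : Measurable g := measurable_id.min ((measurable_const.sub measurable_id).const_mul c)
  -- pointwise description of g
  have hg_lt : ∀ x : ℝ, x < pstar → g x = x := by
    intro x hx
    have : x < c * (1 - x) := by
      have h1 : pstar < c * (1 - x) := by
        rw [← hcp]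
        exact mul_lt_mul_of_pos_left (by linarith) hcpos
      linarith
    simp [hg, min_eq_left this.le]
  have hg_ge : ∀ x : ℝ, pstar ≤ x → g x = c * (1 - x) := by
    intro x hx
    have : c * (1 - x) ≤ pstar := by
      rw [← hcp]
      exact mul_le_mul_of_nonneg_left (by linarith) hcpos.le
    simp [hg, min_eq_right (le_trans this hx)]
  -- the mirrored set
  set ψ : ℝ → ℝ := fun x => c * (1 - x) with hψ
  have hψm : Measurable ψ := (measurable_const.sub measurable_id).const_mul c
  have hψ_gt : ∀ x : ℝ, x < pstar → pstar < ψ x := by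
    intro x hx
    rw [hψ, ← hcp]
    exact mul_lt_mul_of_pos_left (by linarith) hcpos
  -- set identities
  have hS1 : {x : ℝ | x < pstar ∧ g x ∈ A} = A := by
    ext x
    constructor
    · rintro ⟨hx, hxA⟩
      rwa [hg_lt x hx] at hxA
    · intro hxA
      have := hAsub hxA
      refine ⟨this.2, ?_⟩
      rwa [hg_lt x this.2]
  have hS2 : {x : ℝ | g x ∈ A} = A ∪ ψ ⁻¹' A := by
    ext x
    rcases lt_or_ge x pstar with hx | hx
    · simp only [mem_setOf_eq, hg_lt x hx, mem_union, mem_preimage]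
      constructor
      · exact fun h => Or.inl h
      · rintro (h | h)
        · exact h
        · exact absurd (hAsub h).2 (not_lt.mpr (hψ_gt x hx).le)
    · simp only [mem_setOf_eq, hg_ge x hx, mem_union, mem_preimage, hψ]
      constructor
      · exact fun h => Or.inr h
      · rintro (h | h)
        · exact absurd (hAsub h).2 (not_lt.mpr hx)
        · exact h
  have hdisj : Disjoint A (ψ ⁻¹' A) := by
    rw [Set.disjoint_left]
    intro x hxA hxB
    exact absurd (hAsub hxB).2 (not_lt.mpr (hψ_gt x (hAsub hxA).2).le)
  -- measures via density
  have hmap : ∀ S : Set ℝ, MeasurableSet S →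
      μ (P ⁻¹' S) = ∫⁻ x in S, ENNReal.ofReal (f x) := by
    intro S hS
    rw [← Measure.map_apply hPm hS, hdens, withDensity_apply _ hS]
  have hψA : MeasurableSet (ψ ⁻¹' A) := hψm hA
  -- LHS
  have hL : μ {ω | P ω < pstar ∧ g (P ω) ∈ A} = ∫⁻ x in A, ENNReal.ofReal (f x) := by
    have : {ω | P ω < pstar ∧ g (P ω) ∈ A} = P ⁻¹' {x : ℝ | x < pstar ∧ g x ∈ A} := rfl
    rw [this, hS1, hmap A hA]
  -- RHS measure
  have hR : μ {ω | g (P ω) ∈ A}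
      = (∫⁻ x in A, ENNReal.ofReal (f x)) + ∫⁻ x in ψ ⁻¹' A, ENNReal.ofReal (f x) := by
    have : {ω | g (P ω) ∈ A} = P ⁻¹' {x : ℝ | g x ∈ A} := rfl
    rw [this, hS2, hmap _ ((hA.union hψA)),
      lintegral_union hψA hdisj]
  -- change of variables: integral over ψ⁻¹A equals ofReal k times mirrored integral over A
  have hFm : Measurable ((ψ ⁻¹' A).indicator (fun x => ENNReal.ofReal (f x))) :=
    (hfm.ennreal_ofReal).indicator hψA
  have hcov : ∫⁻ x in ψ ⁻¹' A, ENNReal.ofReal (f x)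
      = ENNReal.ofReal k * ∫⁻ a in A, ENNReal.ofReal (f (1 - k * a)) := by
    have key := lintegral_affine_change _ hFm (a := -k) (neg_ne_zero.mpr hkpos.ne') 1
    have hcomp : ∀ a : ℝ, (ψ ⁻¹' A).indicator (fun x => ENNReal.ofReal (f x)) (-k * a + 1)
        = A.indicator (fun a => ENNReal.ofReal (f (1 - k * a))) a := by
      intro a
      have hmem : (-k * a + 1) ∈ ψ ⁻¹' A ↔ a ∈ A := by
        simp only [mem_preimage, hψ]
        have hh : c * (1 - (-k * a + 1)) = a := by
          have : c * (1 - (-k * a + 1)) = (c * k) * a := by ring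
          rw [this, hck, one_mul]
        rw [hh]
      by_cases ha : a ∈ A
      · rw [Set.indicator_of_mem (hmem.mpr ha), Set.indicator_of_mem ha,
          show -k * a + 1 = 1 - k * a from by ring]
      · rw [Set.indicator_of_notMem (fun h => ha (hmem.mp h)), Set.indicator_of_notMem ha]
    have h2 : (∫⁻ a, (ψ ⁻¹' A).indicator (fun x => ENNReal.ofReal (f x)) (-k * a + 1))
        = ∫⁻ a in A, ENNReal.ofReal (f (1 - k * a)) := by
      simp_rw [hcomp]
      rw [lintegral_indicator hA]
    rw [abs_neg, abs_of_pos hkpos, h2] at key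
    rw [← lintegral_indicator hψA, key, ← mul_assoc,
      ← ENNReal.ofReal_mul hkpos.le, mul_inv_cancel₀ hkpos.ne',
      ENNReal.ofReal_one, one_mul]
  -- mirror inequality
  have hmono : (∫⁻ a in A, ENNReal.ofReal (f a)) ≤ ∫⁻ a in A, ENNReal.ofReal (f (1 - k * a)) := by
    refine setLIntegral_mono (hfm.comp (measurable_const.sub (measurable_id.const_mul k))).ennreal_ofReal
      (fun a ha => ?_)
    exact ENNReal.ofReal_le_ofReal (hmirror a (hAsub ha).1.le (hAsub ha).2.le)
  set I : ENNReal := ∫⁻ x in A, ENNReal.ofReal (f x) with hI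
  set J : ENNReal := ∫⁻ x in ψ ⁻¹' A, ENNReal.ofReal (f x) with hJ
  have hJge : ENNReal.ofReal k * I ≤ J := by
    rw [hcov]
    exact mul_le_mul_right hmono _
  rw [hL, hR, mul_add]
  calc I = ENNReal.ofReal pstar * I + ENNReal.ofReal (1 - pstar) * I := by
        rw [← add_mul, ← ENNReal.ofReal_add hp0.le h1p.le]
        norm_num
    _ ≤ ENNReal.ofReal pstar * I + ENNReal.ofReal pstar * J := by
        refine add_le_add_right ?_ _
        calc ENNReal.ofReal (1 - pstar) * I
            = ENNReal.ofReal pstar * (ENNReal.ofReal k * I) := by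
              rw [← mul_assoc, ← ENNReal.ofReal_mul hp0.le]
              congr 2
              rw [hk, mul_comm, div_mul_cancel₀ _ hp0.ne']
          _ ≤ ENNReal.ofReal pstar * J := mul_le_mul_right hJge _
end

section
/- Let p* ∈ (0,1) and let P be a random variable on [0,1] with a nondecreasing density f. With railway masking h(P) = 1{P < p*} (coded as ±1) and g(P) = P for P < p*, g(P) = (p*/(1-p*))(P - p*) for P ≥ p*, for every measurable set A ⊆ (0, p*) it holds that ℙ(P < p* and g(P) ∈ A) ≤ p* · ℙ(g(P) ∈ A); equivalently, ℙ(h(P) = 1 | g(P)) ≤ p* almost surely. -/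
open MeasureTheory ProbabilityTheory Set

/-- If `P` has a nondecreasing density `f` on `[0,1]`, then under railway
masking `h(P) = 1{P < p*}`, `g(P) = P` for `P < p*` and `g(P) = p*/(1-p*)·(P - p*)`
for `P ≥ p*`, for every measurable `A ⊆ (0, p*)` we have
`ℙ(P < p* ∧ g(P) ∈ A) ≤ p* · ℙ(g(P) ∈ A)`, i.e. `ℙ(h(P) = 1 | g(P)) ≤ p*` a.s. -/
theorem railway_masking_nondecreasing_density
    {Ω : Type*} [MeasurableSpace Ω] (μ : Measure Ω) [IsProbabilityMeasure μ]
    (pstar : ℝ) (hp : pstar ∈ Set.Ioo (0:ℝ) 1)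
    (P : Ω → ℝ) (hPm : Measurable P)
    (f : ℝ → ℝ) (hfm : Measurable f) (hf0 : ∀ x, 0 ≤ f x)
    (hsupp : ∀ x ∉ Set.Icc (0:ℝ) 1, f x = 0)
    (hdens : μ.map P = volume.withDensity (fun x => ENNReal.ofReal (f x)))
    (hmono : MonotoneOn f (Set.Icc (0:ℝ) 1)) :
    ∀ A : Set ℝ, MeasurableSet A → A ⊆ Set.Ioo 0 pstar →
      μ {ω | P ω < pstar ∧
            (if P ω < pstar then P ω else pstar / (1 - pstar) * (P ω - pstar)) ∈ A}
        ≤ ENNReal.ofReal pstar *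
          μ {ω | (if P ω < pstar then P ω else pstar / (1 - pstar) * (P ω - pstar)) ∈ A} := by
  intro A hA hAsub
  obtain ⟨hp0, hp1⟩ := hp
  have h1p : (0:ℝ) < 1 - pstar := by linarith
  set c : ℝ := pstar / (1 - pstar) with hc
  have hc0 : 0 < c := div_pos hp0 h1p
  set a : ℝ := (1 - pstar) / pstar with ha
  have ha0 : 0 < a := div_pos h1p hp0
  set T : ℝ → ℝ := fun y => a * y + pstar with hT
  set B : Set ℝ := (fun x => c * (x - pstar)) ⁻¹' A with hB
  have hBmeas : MeasurableSet B := (measurable_const.mul (measurable_id.sub measurable_const)) hA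
  -- B ⊆ Ioi pstar
  have hBsub : B ⊆ Set.Ioi pstar := by
    intro x hx
    have h1 : 0 < c * (x - pstar) := (hAsub hx).1
    have h2 : 0 < x - pstar := by nlinarith
    exact lt_of_sub_pos h2
  -- event equalities
  have hE1 : {ω | P ω < pstar ∧
      (if P ω < pstar then P ω else pstar / (1 - pstar) * (P ω - pstar)) ∈ A} = P ⁻¹' A := by
    ext ω
    simp only [Set.mem_setOf_eq, Set.mem_preimage]
    constructor
    · rintro ⟨h1, h2⟩; simpa [if_pos h1] using h2
    · intro hmem
      have h1 : P ω < pstar := (hAsub hmem).2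
      exact ⟨h1, by simpa [if_pos h1] using hmem⟩
  have hE2 : {ω | (if P ω < pstar then P ω else pstar / (1 - pstar) * (P ω - pstar)) ∈ A}
      = P ⁻¹' (A ∪ B) := by
    ext ω
    simp only [Set.mem_setOf_eq, Set.mem_preimage, Set.mem_union]
    by_cases h : P ω < pstar
    · simp only [if_pos h]
      constructor
      · exact Or.inl
      · rintro (hmem | hmem)
        · exact hmem
        · exact absurd (hBsub hmem) (not_lt.mpr h.le)
    · simp only [if_neg h]
      constructor
      · intro hmem; exact Or.inr hmem
      · rintro (hmem | hmem)
        · exact absurd (hAsub hmem).2 h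
        · exact hmem
  -- measure via density
  have key : ∀ S : Set ℝ, MeasurableSet S →
      μ (P ⁻¹' S) = ∫⁻ x in S, ENNReal.ofReal (f x) := by
    intro S hS
    rw [← Measure.map_apply hPm hS, hdens, withDensity_apply _ hS]
  set IA := ∫⁻ x in A, ENNReal.ofReal (f x) with hIA
  set IB := ∫⁻ x in B, ENNReal.ofReal (f x) with hIB
  have hdisj : Disjoint A B := by
    rw [Set.disjoint_left]
    intro x hxA hxB
    exact absurd (hBsub hxB) (not_lt.mpr (hAsub hxA).2.le)
  have hsplit : μ (P ⁻¹' (A ∪ B)) = IA + IB := by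
    rw [key _ (hA.union hBmeas), lintegral_union hBmeas hdisj]
  have hTm : Measurable T := (measurable_const.mul measurable_id).add measurable_const
  have hmapT : Measure.map T volume = ENNReal.ofReal c • volume := by
    have h1 : T = (fun x => x + pstar) ∘ (fun y => a * y) := rfl
    have h2 : |a⁻¹| = c := by
      rw [abs_of_pos (inv_pos.mpr ha0), ha, hc]
      field_simp
    rw [h1, ← Measure.map_map (measurable_add_const pstar) (measurable_const_mul a),
      Real.map_volume_mul_left (ne_of_gt ha0), Measure.map_smul,
      map_add_right_eq_self volume pstar, h2]
  set G : ℝ → ENNReal := B.indicator (fun x => ENNReal.ofReal (f x)) with hGdef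
  have hGm : Measurable G := (ENNReal.measurable_ofReal.comp hfm).indicator hBmeas
  have hca : c * a = 1 := by
    rw [hc, ha]; field_simp
  have hGT : ∀ y, G (T y) = A.indicator (fun z => ENNReal.ofReal (f (T z))) y := by
    intro y
    have hTy : c * (T y - pstar) = y := by
      simp only [hT, add_sub_cancel_right, ← mul_assoc, hca, one_mul]
    by_cases hy : y ∈ A
    · have hTB : T y ∈ B := by simpa [hB, Set.mem_preimage, hTy] using hy
      simp [hGdef, Set.indicator_of_mem hTB, Set.indicator_of_mem hy]
    · have hTB : T y ∉ B := by simpa [hB, Set.mem_preimage, hTy] using hy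
      simp [hGdef, Set.indicator_of_notMem hTB, Set.indicator_of_notMem hy]
  have hKey : ∫⁻ y in A, ENNReal.ofReal (f (T y)) = ENNReal.ofReal c * IB := by
    calc ∫⁻ y in A, ENNReal.ofReal (f (T y))
        = ∫⁻ y, A.indicator (fun z => ENNReal.ofReal (f (T z))) y := by
          rw [lintegral_indicator hA _]
      _ = ∫⁻ y, G (T y) := by
          refine lintegral_congr fun y => (hGT y).symm
      _ = ∫⁻ x, G x ∂(Measure.map T volume) := (lintegral_map hGm hTm).symm
      _ = ENNReal.ofReal c * ∫⁻ x, G x := by rw [hmapT, lintegral_smul_measure, smul_eq_mul]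
      _ = ENNReal.ofReal c * IB := by rw [hGdef, lintegral_indicator hBmeas _]
  have hIAle : IA ≤ ENNReal.ofReal c * IB := by
    rw [← hKey, hIA]
    refine setLIntegral_mono ((ENNReal.measurable_ofReal.comp hfm).comp hTm) fun y hy => ?_
    obtain ⟨hy0, hyp⟩ := hAsub hy
    have hy1 : y ∈ Set.Icc (0:ℝ) 1 := ⟨hy0.le, by linarith⟩
    have hap : a * pstar = 1 - pstar := by rw [ha]; field_simp
    have hTy1 : T y ∈ Set.Icc (0:ℝ) 1 := by
      constructor
      · have : 0 ≤ a * y := le_of_lt (mul_pos ha0 hy0)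
        simp only [hT]; linarith
      · have : a * y ≤ a * pstar := by nlinarith
        simp only [hT]; nlinarith
    have hle : y ≤ T y := by
      have : pstar ≤ T y := by
        have : 0 ≤ a * y := le_of_lt (mul_pos ha0 hy0)
        simp only [hT]; linarith
      linarith
    exact ENNReal.ofReal_le_ofReal (hmono hy1 hTy1 hle)
  -- piece together
  rw [hE1, hE2, hsplit, key _ hA]
  rw [← hIA]
  have h1pI : ENNReal.ofReal (1 - pstar) * IA ≤ ENNReal.ofReal pstar * IB := by
    calc ENNReal.ofReal (1 - pstar) * IA
        ≤ ENNReal.ofReal (1 - pstar) * (ENNReal.ofReal c * IB) :=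
          mul_le_mul_right hIAle _
      _ = ENNReal.ofReal ((1 - pstar) * c) * IB := by
          rw [← mul_assoc, ← ENNReal.ofReal_mul h1p.le]
      _ = ENNReal.ofReal pstar * IB := by
          congr 1
          rw [hc]; field_simp
  calc IA = (ENNReal.ofReal pstar + ENNReal.ofReal (1 - pstar)) * IA := by
        rw [← ENNReal.ofReal_add hp0.le h1p.le]
        norm_num
    _ = ENNReal.ofReal pstar * IA + ENNReal.ofReal (1 - pstar) * IA := by ring
    _ ≤ ENNReal.ofReal pstar * IA + ENNReal.ofReal pstar * IB :=
        add_le_add le_rfl h1pI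
    _ = ENNReal.ofReal pstar * (IA + IB) := by ring
end

section
/- Let 0 < p_l ≤ p_u < 1, set p̃ = p_l/(p_l + 1 - p_u), and let P be a random variable on [0,1] with a nondecreasing density f. With gap masking (h(P) = 1 if P < p_l, h(P) = -1 if P > p_u; g(P) = P for P < p_l, g(P) = (p_l/(1-p_u))(1-P) for P > p_u), for every measurable set A ⊆ (0, p_l) it holds that ℙ(P < p_l and g(P) ∈ A) ≤ p̃ · ℙ((P < p_l or P > p_u) and g(P) ∈ A). -/
open MeasureTheory ProbabilityTheory Set

/-- If `P` has a nondecreasing density `f` on `[0,1]`, then under gap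
masking with parameters `0 < p_l ≤ p_u < 1` (`g(P) = P` for `P < p_l`,
`g(P) = p_l/(1-p_u)·(1-P)` for `P > p_u`), for every measurable `A ⊆ (0, p_l)`,
`ℙ(P < p_l ∧ g(P) ∈ A) ≤ p̃ · ℙ((P < p_l ∨ P > p_u) ∧ g(P) ∈ A)` where
`p̃ = p_l/(p_l + 1 - p_u)`. -/
theorem gap_masking_nondecreasing_density
    {Ω : Type*} [MeasurableSpace Ω] (μ : Measure Ω) [IsProbabilityMeasure μ]
    (pl pu : ℝ) (hl : 0 < pl) (hlu : pl ≤ pu) (hu : pu < 1)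
    (P : Ω → ℝ) (hPm : Measurable P)
    (f : ℝ → ℝ) (hfm : Measurable f) (hf0 : ∀ x, 0 ≤ f x)
    (hsupp : ∀ x ∉ Set.Icc (0:ℝ) 1, f x = 0)
    (hdens : μ.map P = volume.withDensity (fun x => ENNReal.ofReal (f x)))
    (hmono : MonotoneOn f (Set.Icc (0:ℝ) 1)) :
    ∀ A : Set ℝ, MeasurableSet A → A ⊆ Set.Ioo 0 pl →
      μ {ω | P ω < pl ∧ (if P ω < pl then P ω else pl / (1 - pu) * (1 - P ω)) ∈ A}
        ≤ ENNReal.ofReal (pl / (pl + 1 - pu)) *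
          μ {ω | (P ω < pl ∨ pu < P ω) ∧
                 (if P ω < pl then P ω else pl / (1 - pu) * (1 - P ω)) ∈ A} := by
  intro A hAm hA
  have hup : (0:ℝ) < 1 - pu := by linarith
  have hden : (0:ℝ) < pl + 1 - pu := by linarith
  set c : ℝ := pl / (1 - pu) with hc
  have hcpos : 0 < c := div_pos hl hup
  -- T maps A into (pu, 1); it is the inverse of x ↦ c * (1 - x)
  set T : ℝ → ℝ := fun y => 1 - (1 - pu) / pl * y with hT
  set B : Set ℝ := (fun x => c * (1 - x)) ⁻¹' A with hB
  have hBm : MeasurableSet B := hAm.preimage (by fun_prop)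
  have hBsub : ∀ x ∈ B, pu < x ∧ x ≤ 1 := by
    intro x hx
    have h1 : c * (1 - x) ∈ Set.Ioo 0 pl := hA hx
    constructor
    · have : 1 - x < pl / c := (lt_div_iff₀ hcpos).2 (by linarith [h1.2, mul_comm c (1-x)])
      have hpc : pl / c = 1 - pu := by
        rw [hc]; field_simp
      linarith [this, hpc ▸ this]
    · nlinarith [h1.1]
  -- Set identities
  have hset1 : {ω | P ω < pl ∧ (if P ω < pl then P ω else pl / (1 - pu) * (1 - P ω)) ∈ A}
      = P ⁻¹' A := by
    ext ω
    simp only [Set.mem_setOf_eq, Set.mem_preimage]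
    constructor
    · rintro ⟨h1, h2⟩; rwa [if_pos h1] at h2
    · intro h; have := hA h
      exact ⟨this.2, by rwa [if_pos this.2]⟩
  have hset2 : {ω | (P ω < pl ∨ pu < P ω) ∧
        (if P ω < pl then P ω else pl / (1 - pu) * (1 - P ω)) ∈ A}
      = P ⁻¹' (A ∪ B) := by
    ext ω
    simp only [Set.mem_setOf_eq, Set.mem_preimage, Set.mem_union]
    constructor
    · rintro ⟨h1 | h1, h2⟩
      · left; rwa [if_pos h1] at h2
      · right
        have hnlt : ¬ P ω < pl := by linarith
        rwa [if_neg hnlt] at h2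
    · rintro (h | h)
      · have := hA h
        exact ⟨Or.inl this.2, by rwa [if_pos this.2]⟩
      · have hgt : pu < P ω := (hBsub _ h).1
        have hnlt : ¬ P ω < pl := by linarith
        exact ⟨Or.inr hgt, by rwa [if_neg hnlt]⟩
  -- disjointness of A and B
  have hdisj : Disjoint A B := by
    rw [Set.disjoint_left]
    intro x hx hxB
    have := (hBsub x hxB).1
    have := (hA hx).2
    linarith
  -- Express measures as integrals
  have key : ∀ S : Set ℝ, MeasurableSet S →
      μ (P ⁻¹' S) = ∫⁻ x in S, ENNReal.ofReal (f x) := by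
    intro S hS
    rw [← Measure.map_apply hPm hS, hdens, withDensity_apply _ hS]
  rw [hset1, hset2, key A hAm, key _ (hAm.union hBm),
    lintegral_union hBm hdisj]
  -- B = T '' A
  have hBim : B = T '' A := by
    ext x
    simp only [hB, Set.mem_preimage, Set.mem_image]
    constructor
    · intro h
      refine ⟨c * (1 - x), h, ?_⟩
      rw [hT, hc]
      field_simp
      ring
    · rintro ⟨y, hy, rfl⟩
      have : c * (1 - T y) = y := by
        rw [hT, hc]; field_simp; ring
      rwa [this]
  -- change of variables on B
  have hderiv : ∀ y ∈ A, HasDerivWithinAt T (-((1 - pu) / pl)) A y := by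
    intro y hy
    have : HasDerivAt T (0 - ((1 - pu) / pl * 1)) y := by
      exact (hasDerivAt_const y 1).sub ((hasDerivAt_id y).const_mul _)
    simpa using this.hasDerivWithinAt
  have hinj : Set.InjOn T A := by
    intro a ha b hb hab
    have hne : (1 - pu) / pl ≠ 0 := ne_of_gt (div_pos hup hl)
    have : (1 - pu) / pl * a = (1 - pu) / pl * b := by
      simp only [hT] at hab; linarith [hab]
    exact mul_left_cancel₀ hne this
  have hCoV : ∫⁻ x in B, ENNReal.ofReal (f x)
      = ∫⁻ y in A, ENNReal.ofReal ((1 - pu) / pl) * ENNReal.ofReal (f (T y)) := by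
    rw [hBim]
    have := lintegral_image_eq_lintegral_abs_det_fderiv_mul volume hAm
      (fun y hy => ((hderiv y hy).hasFDerivWithinAt)) hinj
      (fun x => ENNReal.ofReal (f x))
    rw [this]
    refine setLIntegral_congr_fun hAm (fun y hy => ?_)
    congr 1
    rw [ContinuousLinearMap.det_toSpanSingleton, abs_neg, abs_of_pos (div_pos hup hl)]
  rw [hCoV, lintegral_const_mul _ (by fun_prop)]
  -- pointwise comparison on A
  have hcomp : ∫⁻ y in A, ENNReal.ofReal (f y)
      ≤ ∫⁻ y in A, ENNReal.ofReal (f (T y)) := by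
    refine setLIntegral_mono (by fun_prop) fun y hy => ?_
    have hyA := hA hy
    have hTy : T y ∈ Set.Icc (0:ℝ) 1 := by
      have h1 : pu < T y ∧ T y ≤ 1 := by
        apply hBsub
        rw [hBim]; exact ⟨y, hy, rfl⟩
      constructor <;> linarith [h1.1, h1.2]
    have hyI : y ∈ Set.Icc (0:ℝ) 1 := ⟨le_of_lt hyA.1, by linarith [hyA.2]⟩
    have : f y ≤ f (T y) := by
      apply hmono hyI hTy
      have := hBsub (T y) (by rw [hBim]; exact ⟨y, hy, rfl⟩)
      linarith [hyA.2, this.1]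
    exact ENNReal.ofReal_le_ofReal this
  -- final arithmetic in ℝ≥0∞
  set I := ∫⁻ y in A, ENNReal.ofReal (f y)
  set J := ∫⁻ y in A, ENNReal.ofReal (f (T y))
  set a := ENNReal.ofReal (pl / (pl + 1 - pu))
  have hmul : a * ENNReal.ofReal ((1 - pu) / pl)
      = ENNReal.ofReal ((1 - pu) / (pl + 1 - pu)) := by
    rw [← ENNReal.ofReal_mul (by positivity)]
    congr 1
    field_simp
  have hsum : a + ENNReal.ofReal ((1 - pu) / (pl + 1 - pu)) = 1 := by
    rw [← ENNReal.ofReal_add (by positivity) (by positivity), ← ENNReal.ofReal_one]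
    congr 1
    field_simp
    ring
  calc I = (a + ENNReal.ofReal ((1 - pu) / (pl + 1 - pu))) * I := by rw [hsum, one_mul]
    _ = a * I + ENNReal.ofReal ((1 - pu) / (pl + 1 - pu)) * I := by rw [add_mul]
    _ ≤ a * I + ENNReal.ofReal ((1 - pu) / (pl + 1 - pu)) * J := by
        gcongr
    _ = a * I + a * (ENNReal.ofReal ((1 - pu) / pl) * J) := by rw [← hmul, mul_assoc]
    _ = a * (I + ENNReal.ofReal ((1 - pu) / pl) * J) := by rw [mul_add]
end

section
/- Let 0 < p_l ≤ p_u < 1, set p̃ = p_l/(p_l + 1 - p_u), and let P be a random variable on [0,1] with a nondecreasing density f. With gap-railway masking (h(P) = 1 if P < p_l, h(P) = -1 if P > p_u; g(P) = P for P < p_l, g(P) = (p_l/(1-p_u))(P - p_u) for P > p_u), for every measurable set A ⊆ (0, p_l) it holds that ℙ(P < p_l and g(P) ∈ A) ≤ p̃ · ℙ((P < p_l or P > p_u) and g(P) ∈ A). -/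
open MeasureTheory ProbabilityTheory Set

/-- If `P` has a nondecreasing density `f` on `[0,1]`, then under
gap-railway masking with parameters `0 < p_l ≤ p_u < 1` (`g(P) = P` for `P < p_l`,
`g(P) = p_l/(1-p_u)·(P - p_u)` for `P > p_u`), for every measurable `A ⊆ (0, p_l)`,
`ℙ(P < p_l ∧ g(P) ∈ A) ≤ p̃ · ℙ((P < p_l ∨ P > p_u) ∧ g(P) ∈ A)` where
`p̃ = p_l/(p_l + 1 - p_u)`. -/
theorem gap_railway_masking_nondecreasing_density
    {Ω : Type*} [MeasurableSpace Ω] (μ : Measure Ω) [IsProbabilityMeasure μ]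
    (pl pu : ℝ) (hl : 0 < pl) (hlu : pl ≤ pu) (hu : pu < 1)
    (P : Ω → ℝ) (hPm : Measurable P)
    (f : ℝ → ℝ) (hfm : Measurable f) (hf0 : ∀ x, 0 ≤ f x)
    (hsupp : ∀ x ∉ Set.Icc (0:ℝ) 1, f x = 0)
    (hdens : μ.map P = volume.withDensity (fun x => ENNReal.ofReal (f x)))
    (hmono : MonotoneOn f (Set.Icc (0:ℝ) 1)) :
    ∀ A : Set ℝ, MeasurableSet A → A ⊆ Set.Ioo 0 pl →
      μ {ω | P ω < pl ∧ (if P ω < pl then P ω else pl / (1 - pu) * (P ω - pu)) ∈ A}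
        ≤ ENNReal.ofReal (pl / (pl + 1 - pu)) *
          μ {ω | (P ω < pl ∨ pu < P ω) ∧
                 (if P ω < pl then P ω else pl / (1 - pu) * (P ω - pu)) ∈ A} := by
  intro A hA hAsub
  have h1pu : (0:ℝ) < 1 - pu := by linarith
  set c : ℝ := pl / (1 - pu) with hc_def
  have hcpos : 0 < c := div_pos hl h1pu
  set F : ℝ → ENNReal := fun x => ENNReal.ofReal (f x) with hF_def
  have hFm : Measurable F := hfm.ennreal_ofReal
  set φ : ℝ → ℝ := fun x => c * (x - pu) with hφ_def
  have hφm : Measurable φ := (measurable_id.sub_const pu).const_mul c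
  set T : Set ℝ := φ ⁻¹' A with hT_def
  have hT : MeasurableSet T := hφm hA
  -- membership facts
  have hTgt : ∀ x ∈ T, pu < x := by
    intro x hx
    have h0 : 0 < c * (x - pu) := (hAsub hx).1
    nlinarith
  have hE1 : {ω | P ω < pl ∧ (if P ω < pl then P ω else pl / (1 - pu) * (P ω - pu)) ∈ A}
      = P ⁻¹' A := by
    ext ω
    simp only [mem_setOf_eq, mem_preimage]
    constructor
    · rintro ⟨h1, h2⟩; rwa [if_pos h1] at h2
    · intro h
      exact ⟨(hAsub h).2, by rwa [if_pos (hAsub h).2]⟩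
  have hE2 : {ω | (P ω < pl ∨ pu < P ω) ∧
        (if P ω < pl then P ω else pl / (1 - pu) * (P ω - pu)) ∈ A}
      = P ⁻¹' (A ∪ T) := by
    ext ω
    simp only [mem_setOf_eq, mem_preimage, mem_union]
    by_cases h : P ω < pl
    · rw [if_pos h]
      constructor
      · rintro ⟨-, h2⟩; exact Or.inl h2
      · rintro (h2 | h2)
        · exact ⟨Or.inl h, h2⟩
        · exact absurd (lt_of_le_of_lt hlu (hTgt _ h2)) (not_lt.2 h.le)
    · rw [if_neg h]
      constructor
      · rintro ⟨-, h2⟩; exact Or.inr h2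
      · rintro (h2 | h2)
        · exact absurd ((hAsub h2).2) (by push_neg at h; exact not_lt.2 h)
        · exact ⟨Or.inr (hTgt _ h2), h2⟩
  have hmap : ∀ S : Set ℝ, MeasurableSet S → μ (P ⁻¹' S) = ∫⁻ x in S, F x := by
    intro S hS
    rw [← Measure.map_apply hPm hS, hdens, withDensity_apply _ hS]
  have hdisj : Disjoint A T := by
    rw [disjoint_left]
    intro x hxA hxT
    exact lt_irrefl x (((hAsub hxA).2.trans_le (hlu.trans (hTgt _ hxT).le)))
  -- change of variables
  have hmapφ : Measure.map φ volume = ENNReal.ofReal c⁻¹ • volume := by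
    have : φ = (fun y => y + (-(c * pu))) ∘ (fun x => c * x) := by
      funext x; simp [hφ_def]; ring
    rw [this, ← Measure.map_map (measurable_add_const _) (measurable_const_mul c),
      Real.map_volume_mul_left (ne_of_gt hcpos), Measure.map_smul,
      map_add_right_eq_self volume, abs_of_pos (inv_pos.2 hcpos)]
  set ψ : ℝ → ℝ := fun y => y / c + pu with hψ_def
  have hψm : Measurable ψ := (measurable_id.div_const c).add_const pu
  have hψφ : ∀ x, ψ (φ x) = x := by
    intro x
    simp only [hψ_def, hφ_def]; rw [mul_div_cancel_left₀ _ hcpos.ne']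
    ring
  have hsub : ∫⁻ x in T, F x = ENNReal.ofReal c⁻¹ * ∫⁻ y in A, F (ψ y) := by
    have h1 : ∫⁻ x in T, F x = ∫⁻ x, A.indicator (fun y => F (ψ y)) (φ x) := by
      rw [← lintegral_indicator hT _]
      congr 1
      funext x
      by_cases hx : x ∈ T
      · rw [indicator_of_mem hx, indicator_of_mem (by exact hx), hψφ]
      · rw [indicator_of_notMem hx, indicator_of_notMem (by exact hx)]
    have h2 : ∫⁻ x, A.indicator (fun y => F (ψ y)) (φ x)
        = ∫⁻ y, A.indicator (fun y => F (ψ y)) y ∂(Measure.map φ volume) := by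
      exact (lintegral_map ((hFm.comp hψm).indicator hA) hφm).symm
    rw [h1, h2, hmapφ, lintegral_smul_measure, lintegral_indicator hA _, smul_eq_mul]
  have hptwise : ∀ y ∈ A, F y ≤ F (ψ y) := by
    intro y hy
    have hy0 : 0 < y := (hAsub hy).1
    have hypl : y < pl := (hAsub hy).2
    have hψ1 : ψ y ≤ 1 := by
      have : y / c ≤ pl / c := by
        gcongr
      have hplc : pl / c = 1 - pu := by
        rw [hc_def, div_div_eq_mul_div, mul_div_cancel_left₀ _ hl.ne']
      simp only [hψ_def]
      linarith [this, hplc ▸ this]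
    have hψ0 : pu ≤ ψ y := by
      have : 0 ≤ y / c := div_nonneg hy0.le hcpos.le
      simp only [hψ_def]; linarith
    have hyψ : y ≤ ψ y := by linarith
    exact ENNReal.ofReal_le_ofReal
      (hmono ⟨hy0.le, by linarith⟩ ⟨by linarith, hψ1⟩ hyψ)
  have hkey : ENNReal.ofReal (1 - pu) * ∫⁻ x in A, F x ≤ ENNReal.ofReal pl * ∫⁻ x in T, F x := by
    have h3 : ∫⁻ y in A, F y ≤ ∫⁻ y in A, F (ψ y) :=
      setLIntegral_mono (hFm.comp hψm) hptwise
    calc ENNReal.ofReal (1 - pu) * ∫⁻ x in A, F x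
        = ENNReal.ofReal pl * (ENNReal.ofReal c⁻¹ * ∫⁻ x in A, F x) := by
          rw [← mul_assoc, ← ENNReal.ofReal_mul hl.le]
          congr 2
          field_simp [hc_def]
          rw [hc_def]; field_simp [h1pu.ne']
      _ ≤ ENNReal.ofReal pl * (ENNReal.ofReal c⁻¹ * ∫⁻ y in A, F (ψ y)) := by
          gcongr
      _ = ENNReal.ofReal pl * ∫⁻ x in T, F x := by rw [hsub]
  rw [hE1, hE2, hmap A hA, hmap _ (hA.union hT), lintegral_union hT hdisj]
  have hs : (0:ℝ) < pl + 1 - pu := by linarith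
  rw [← ENNReal.mul_le_mul_iff_right (a := ENNReal.ofReal (pl + 1 - pu))
    (ENNReal.ofReal_pos.2 hs).ne' ENNReal.ofReal_ne_top, ← mul_assoc,
    ← ENNReal.ofReal_mul hs.le]
  have : (pl + 1 - pu) * (pl / (pl + 1 - pu)) = pl := by field_simp
  rw [this]
  have hsplit : ENNReal.ofReal (pl + 1 - pu) = ENNReal.ofReal pl + ENNReal.ofReal (1 - pu) := by
    rw [← ENNReal.ofReal_add hl.le h1pu.le]; ring_nf
  rw [hsplit, add_mul, mul_add]
  exact add_le_add le_rfl hkey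
end

section
/- Let P_1, ..., P_n be i.i.d. uniform random variables on [0,1], let p* ∈ (0,1), and apply tent masking to each: h(P_i) = 2·1{P_i < p*} - 1 and g(P_i) = min{P_i, (p*/(1-p*))(1-P_i)}. Let (π_n, π_{n-1}, ..., π_1) be a random ordering (permutation) of {1,...,n} such that for every j, the index π_j is measurable with respect to the σ-field σ(g(P_1), ..., g(P_n), P_{π_n}, P_{π_{n-1}}, ..., P_{π_{j+1}}) (i.e., each next choice uses only the masked p-values and the fully revealed p-values of previously chosen indices). Then the random variables 1{h(P_{π_1}) = 1}, ..., 1{h(P_{π_n}) = 1} are mutually independent, each Bernoulli with parameter p*. -/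
open MeasureTheory ProbabilityTheory Set

namespace TentAux

variable {pstar : ℝ}

lemma min_eq_left_of_lt (h1 : pstar < 1) {x : ℝ} (hx : x < pstar) :
    min x (pstar / (1 - pstar) * (1 - x)) = x := by
  apply min_eq_left
  rw [div_mul_eq_mul_div, le_div_iff₀ (by linarith)]
  nlinarith

lemma min_eq_right_of_ge (h1 : pstar < 1) {x : ℝ} (hx : pstar ≤ x) :
    min x (pstar / (1 - pstar) * (1 - x)) = pstar / (1 - pstar) * (1 - x) := by
  apply min_eq_right
  rw [div_mul_eq_mul_div, div_le_iff₀ (by linarith)]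
  nlinarith

lemma recover_of_ge (h0 : 0 < pstar) (h1 : pstar < 1) {x : ℝ} (hx : pstar ≤ x) :
    1 - min x (pstar / (1 - pstar) * (1 - x)) / (pstar / (1 - pstar)) = x := by
  rw [min_eq_right_of_ge h1 hx]
  have hc : pstar / (1 - pstar) ≠ 0 := ne_of_gt (div_pos h0 (by linarith))
  have : pstar / (1 - pstar) * (1 - x) / (pstar / (1 - pstar)) = 1 - x := by
    rw [mul_comm, mul_div_assoc, div_self hc, mul_one]
  rw [this]; ring

lemma affine_preimage_volume (c : ℝ) (hc : 0 < c) {T : Set ℝ} (hT : MeasurableSet T) :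
    volume ((fun x => c - c * x) ⁻¹' T) = ENNReal.ofReal c⁻¹ * volume T := by
  have h1 : MeasurePreserving (fun y : ℝ => c - y) volume volume :=
    Measure.measurePreserving_sub_left volume c
  have h2 : (fun x : ℝ => c - c * x) = (fun y : ℝ => c - y) ∘ (fun x : ℝ => c * x) := by
    ext x; simp [Function.comp]
  rw [h2, Set.preimage_comp, Real.volume_preimage_mul_left (ne_of_gt hc),
    h1.measure_preimage hT.nullMeasurableSet, abs_of_pos (by positivity)]

/-- Key scalar computation: for the uniform law on `[0,1]`, the event `{x < p*}` is
independent of the masked value, with probability `p*`. -/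
lemma L1 (h0 : 0 < pstar) (h1 : pstar < 1) {S : Set ℝ} (hS : MeasurableSet S) :
    volume.restrict (Icc 0 1) (Iio pstar ∩ (fun x => min x (pstar / (1 - pstar) * (1 - x))) ⁻¹' S)
      = ENNReal.ofReal pstar
        * volume.restrict (Icc 0 1) ((fun x => min x (pstar / (1 - pstar) * (1 - x))) ⁻¹' S) := by
  set c := pstar / (1 - pstar) with hc
  have hcpos : 0 < c := div_pos h0 (by linarith)
  set g : ℝ → ℝ := fun x => min x (c * (1 - x)) with hg
  have hgm : Measurable g := measurable_id.min (measurable_const.mul (measurable_const.sub measurable_id))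
  have hpre : MeasurableSet (g ⁻¹' S) := hgm hS
  rw [Measure.restrict_apply (measurableSet_Iio.inter hpre), Measure.restrict_apply hpre]
  -- left set
  have hL : (Iio pstar ∩ g ⁻¹' S) ∩ Icc 0 1 = S ∩ Ico 0 pstar := by
    ext x
    simp only [mem_inter_iff, mem_Iio, mem_preimage, mem_Icc, mem_Ico]
    constructor
    · rintro ⟨⟨hx, hxS⟩, hx0, hx1⟩
      rw [hg] at hxS; simp only at hxS
      rw [min_eq_left_of_lt h1 hx] at hxS
      exact ⟨hxS, hx0, hx⟩
    · rintro ⟨hxS, hx0, hx⟩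
      refine ⟨⟨hx, ?_⟩, hx0, by linarith⟩
      show min x (c * (1 - x)) ∈ S
      rw [min_eq_left_of_lt h1 hx]; exact hxS
  -- right set
  have hR : g ⁻¹' S ∩ Icc 0 1
      = (S ∩ Ico 0 pstar) ∪ (fun x => c - c * x) ⁻¹' (S ∩ Icc 0 pstar) := by
    ext x
    simp only [mem_inter_iff, mem_preimage, mem_Icc, mem_Ico, mem_union]
    constructor
    · rintro ⟨hxS, hx0, hx1⟩
      by_cases hx : x < pstar
      · left
        rw [hg] at hxS; simp only at hxS
        rw [min_eq_left_of_lt h1 hx] at hxS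
        exact ⟨hxS, hx0, hx⟩
      · right
        push_neg at hx
        have hgx : g x = c * (1 - x) := min_eq_right_of_ge h1 hx
        have h2 : c - c * x = c * (1 - x) := by ring
        rw [h2]
        refine ⟨by rw [← hgx]; exact hxS, by nlinarith, ?_⟩
        have : c * (1 - x) ≤ c * (1 - pstar) := by nlinarith
        have hcp : c * (1 - pstar) = pstar := by rw [hc]; exact div_mul_cancel₀ _ (by linarith)
        linarith
    · rintro (⟨hxS, hx0, hx⟩ | ⟨hxS, hfx0, hfx1⟩)
      · have : g x = x := min_eq_left_of_lt h1 hx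
        exact ⟨by rw [this]; exact hxS, hx0, by linarith⟩
      · -- c - c*x ∈ [0, pstar] forces x ∈ [pstar, 1]
        have hx1 : x ≤ 1 := by nlinarith
        have hxp : pstar ≤ x := by
          have hcp : c * (1 - pstar) = pstar := by rw [hc]; exact div_mul_cancel₀ _ (by linarith)
          nlinarith
        have hgx : g x = c * (1 - x) := min_eq_right_of_ge h1 hxp
        refine ⟨?_, by linarith, hx1⟩
        rw [hgx, show c * (1 - x) = c - c * x by ring]; exact hxS
  rw [hL, hR]
  have hdisj : Disjoint (S ∩ Ico 0 pstar) ((fun x => c - c * x) ⁻¹' (S ∩ Icc 0 pstar)) := by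
    rw [Set.disjoint_left]
    rintro x ⟨-, -, hx⟩ ⟨-, hfx0, hfx1⟩
    have hcp : c * (1 - pstar) = pstar := by rw [hc]; exact div_mul_cancel₀ _ (by linarith)
    simp only at hfx0 hfx1
    nlinarith [mul_lt_mul_of_pos_left hx hcpos]
  have hBm : MeasurableSet ((fun x : ℝ => c - c * x) ⁻¹' (S ∩ Icc 0 pstar)) :=
    (measurable_const.sub (measurable_const.mul measurable_id)) (hS.inter measurableSet_Icc)
  rw [measure_union hdisj hBm, affine_preimage_volume c hcpos (hS.inter measurableSet_Icc)]
  -- replace Icc by Ico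
  have hIccIco : volume (S ∩ Icc 0 pstar) = volume (S ∩ Ico 0 pstar) := by
    apply le_antisymm
    · have hsplit : S ∩ Icc 0 pstar ⊆ (S ∩ Ico 0 pstar) ∪ {pstar} := by
        rintro x ⟨hxS, hx0, hx1⟩
        rcases lt_or_eq_of_le hx1 with h | h
        · exact Or.inl ⟨hxS, hx0, h⟩
        · exact Or.inr (by simp [h])
      calc volume (S ∩ Icc 0 pstar) ≤ volume ((S ∩ Ico 0 pstar) ∪ {pstar}) := measure_mono hsplit
        _ ≤ volume (S ∩ Ico 0 pstar) + volume {pstar} := measure_union_le _ _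
        _ = volume (S ∩ Ico 0 pstar) := by rw [Real.volume_singleton, add_zero]
    · exact measure_mono (inter_subset_inter_right _ Ico_subset_Icc_self)
  rw [hIccIco]
  set a := volume (S ∩ Ico 0 pstar) with ha
  have hafin : a ≠ ⊤ := by
    have : a ≤ volume (Ico (0:ℝ) pstar) := measure_mono inter_subset_right
    rw [Real.volume_Ico] at this
    exact ne_top_of_le_ne_top ENNReal.ofReal_ne_top this
  have hmul : ENNReal.ofReal pstar * (ENNReal.ofReal c⁻¹ * a) = ENNReal.ofReal (1 - pstar) * a := by
    rw [← mul_assoc, ← ENNReal.ofReal_mul h0.le]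
    congr 2
    rw [hc, inv_div]
    field_simp
  rw [mul_add, hmul, ← add_mul, ← ENNReal.ofReal_add h0.le (by linarith),
    show pstar + (1 - pstar) = 1 by ring, ENNReal.ofReal_one, one_mul]

variable {Ω : Type*} [MeasurableSpace Ω] {n : ℕ}

/-- The masked p-value vector. -/
noncomputable def tentG (pstar : ℝ) (P : Fin n → Ω → ℝ) : Ω → Fin n → ℝ :=
  fun ω i => min (P i ω) (pstar / (1 - pstar) * (1 - P i ω))

/-- The sign bit of each p-value. -/
noncomputable def tentHb (pstar : ℝ) (P : Fin n → Ω → ℝ) (i : Fin n) (ω : Ω) : Bool :=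
  if P i ω < pstar then true else false

/-- All information available except the sign bit of coordinate `i`. -/
noncomputable def tentV (pstar : ℝ) (P : Fin n → Ω → ℝ) (i : Fin n) : Ω → Fin n → ℝ × Bool :=
  fun ω m => (tentG pstar P ω m, if m = i then false else tentHb pstar P m ω)

lemma tentG_meas (pstar : ℝ) {P : Fin n → Ω → ℝ} (hPm : ∀ i, Measurable (P i)) :
    Measurable (tentG pstar P) :=
  measurable_pi_lambda _ fun m =>
    (hPm m).min (measurable_const.mul (measurable_const.sub (hPm m)))

lemma tentHb_meas (pstar : ℝ) {P : Fin n → Ω → ℝ} (hPm : ∀ i, Measurable (P i)) (i : Fin n) :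
    Measurable (tentHb pstar P i) :=
  Measurable.ite (hPm i measurableSet_Iio) measurable_const measurable_const

lemma tentV_meas (pstar : ℝ) {P : Fin n → Ω → ℝ} (hPm : ∀ i, Measurable (P i)) (i : Fin n) :
    Measurable (tentV pstar P i) := by
  apply measurable_pi_lambda
  intro m
  apply Measurable.prodMk
  · exact ((hPm m).min (measurable_const.mul (measurable_const.sub (hPm m))))
  · by_cases hmi : m = i
    · simp only [tentV, hmi, if_pos rfl]; exact measurable_const
    · simp only [tentV, hmi, if_neg hmi]; exact tentHb_meas pstar hPm m

lemma uniform_lt (μ : Measure Ω) {pstar : ℝ} (h0 : 0 < pstar) (h1 : pstar < 1)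
    {Pf : Ω → ℝ} (hPm : Measurable Pf) (hunif : μ.map Pf = volume.restrict (Icc 0 1)) :
    μ {ω | Pf ω < pstar} = ENNReal.ofReal pstar := by
  have : {ω | Pf ω < pstar} = Pf ⁻¹' (Iio pstar) := rfl
  rw [this, ← Measure.map_apply hPm measurableSet_Iio, hunif,
    Measure.restrict_apply measurableSet_Iio]
  have : Iio pstar ∩ Icc 0 1 = Ico 0 pstar := by
    ext x; simp only [mem_inter_iff, mem_Iio, mem_Icc, mem_Ico]
    exact ⟨fun ⟨h, h2, h3⟩ => ⟨h2, h⟩, fun ⟨h2, h⟩ => ⟨h, h2, by linarith⟩⟩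
  rw [this, Real.volume_Ico, sub_zero]

/-- Per-coordinate observation map. -/
noncomputable def tentPsi0 (pstar : ℝ) (i m : Fin n) : ℝ → ℝ × Bool :=
  fun x => (min x (pstar / (1 - pstar) * (1 - x)),
    if m = i then false else if x < pstar then true else false)

lemma tentPsi0_meas (pstar : ℝ) (i m : Fin n) : Measurable (tentPsi0 pstar i m) := by
  apply Measurable.prodMk
  · exact measurable_id.min (measurable_const.mul (measurable_const.sub measurable_id))
  · by_cases hmi : m = i
    · simp only [tentPsi0, hmi, if_pos rfl]; exact measurable_const
    · simp only [tentPsi0, if_neg hmi]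
      exact Measurable.ite measurableSet_Iio measurable_const measurable_const

lemma tentV_eq_psi0 (pstar : ℝ) (P : Fin n → Ω → ℝ) (i : Fin n) (ω : Ω) (m : Fin n) :
    tentV pstar P i ω m = tentPsi0 pstar i m (P m ω) := rfl

/-- Core independence: the sign bit of coordinate `i` is Bernoulli(p*) independent of
everything else (the masked values and the other sign bits). -/
lemma indepCore (μ : Measure Ω) [IsProbabilityMeasure μ]
    (pstar : ℝ) (h0 : 0 < pstar) (h1 : pstar < 1)
    (P : Fin n → Ω → ℝ) (hPm : ∀ i, Measurable (P i))
    (hPindep : iIndepFun P μ)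
    (hunif : ∀ i, μ.map (P i) = volume.restrict (Icc 0 1))
    (i : Fin n) {M : Set (Fin n → ℝ × Bool)} (hM : MeasurableSet M) :
    μ ({ω | P i ω < pstar} ∩ tentV pstar P i ⁻¹' M)
      = ENNReal.ofReal pstar * μ (tentV pstar P i ⁻¹' M) := by
  have hVm : Measurable (tentV pstar P i) := tentV_meas pstar hPm i
  have hA : MeasurableSet {ω | P i ω < pstar} := hPm i measurableSet_Iio
  have hμA : μ {ω | P i ω < pstar} = ENNReal.ofReal pstar :=
    uniform_lt μ h0 h1 (hPm i) (hunif i)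
  set m1 : Measure (Fin n → ℝ × Bool) := (μ.restrict {ω | P i ω < pstar}).map (tentV pstar P i)
    with hm1
  set m2 : Measure (Fin n → ℝ × Bool) := ENNReal.ofReal pstar • μ.map (tentV pstar P i)
    with hm2
  have hfin : IsFiniteMeasure m1 := by
    constructor
    rw [hm1, Measure.map_apply hVm MeasurableSet.univ, preimage_univ,
      Measure.restrict_apply MeasurableSet.univ, univ_inter]
    exact measure_lt_top μ _
  have key : m1 = m2 := by
    apply ext_of_generate_finite _ generateFrom_pi.symm isPiSystem_pi
    · rintro _ ⟨s, hs, rfl⟩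
      simp only [mem_pi, mem_univ, forall_true_left, mem_setOf_eq] at hs
      have hpim : MeasurableSet (univ.pi s) := MeasurableSet.univ_pi fun m => hs m
      -- the two events as intersections of coordinate preimages
      have hCm : ∀ m : Fin n, MeasurableSet (tentPsi0 pstar i m ⁻¹' s m) :=
        fun m => tentPsi0_meas pstar i m (hs m)
      set D : Fin n → Set ℝ := fun m =>
        if m = i then Iio pstar ∩ tentPsi0 pstar i i ⁻¹' s i else tentPsi0 pstar i m ⁻¹' s m
        with hD
      have hDm : ∀ m, MeasurableSet (D m) := by
        intro m
        rw [hD]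
        by_cases hmi : m = i
        · simp only [if_pos hmi]; exact measurableSet_Iio.inter (hCm i)
        · simp only [if_neg hmi]; exact hCm m
      have hset1 : {ω | P i ω < pstar} ∩ tentV pstar P i ⁻¹' univ.pi s
          = ⋂ m, P m ⁻¹' D m := by
        ext ω
        simp only [mem_inter_iff, mem_setOf_eq, mem_preimage, mem_pi, mem_univ,
          forall_true_left, mem_iInter, hD]
        constructor
        · rintro ⟨hlt, hpi⟩ m
          by_cases hmi : m = i
          · subst hmi
            simp only [if_pos rfl, mem_inter_iff, mem_Iio, mem_preimage]
            exact ⟨hlt, by have := hpi m; rwa [tentV_eq_psi0] at this⟩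
          · simp only [if_neg hmi, mem_preimage]
            have := hpi m; rwa [tentV_eq_psi0] at this
        · intro h
          constructor
          · have := h i; simp only [if_pos rfl, mem_inter_iff, mem_Iio, mem_preimage] at this
            exact this.1
          · intro m
            rw [tentV_eq_psi0]
            by_cases hmi : m = i
            · subst hmi
              have := h m; simp only [if_pos rfl, mem_inter_iff, mem_preimage] at this
              exact this.2
            · have := h m; simpa only [if_neg hmi, mem_preimage] using this
      have hset2 : tentV pstar P i ⁻¹' univ.pi s
          = ⋂ m, P m ⁻¹' (tentPsi0 pstar i m ⁻¹' s m) := by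
        ext ω
        simp only [mem_preimage, mem_pi, mem_univ, forall_true_left, mem_iInter]
        constructor
        · intro h m; have := h m; rwa [tentV_eq_psi0] at this
        · intro h m; rw [tentV_eq_psi0]; exact h m
      have hprod1 : μ (⋂ m, P m ⁻¹' D m) = ∏ m, μ (P m ⁻¹' D m) :=
        hPindep.meas_iInter fun m => ⟨D m, hDm m, rfl⟩
      have hprod2 : μ (⋂ m, P m ⁻¹' (tentPsi0 pstar i m ⁻¹' s m))
          = ∏ m, μ (P m ⁻¹' (tentPsi0 pstar i m ⁻¹' s m)) :=
        hPindep.meas_iInter fun m => ⟨_, hCm m, rfl⟩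
      -- coordinate i
      have hTi : tentPsi0 pstar i i ⁻¹' s i
          = (fun x => min x (pstar / (1 - pstar) * (1 - x))) ⁻¹' ((fun y : ℝ => (y, false)) ⁻¹' s i) := by
        ext x; simp [tentPsi0]
      have hTmeas : MeasurableSet ((fun y : ℝ => (y, false)) ⁻¹' s i) :=
        (measurable_id.prodMk measurable_const) (hs i)
      have hcoordi : μ (P i ⁻¹' D i) = ENNReal.ofReal pstar * μ (P i ⁻¹' (tentPsi0 pstar i i ⁻¹' s i)) := by
        have e1 : μ (P i ⁻¹' D i) = (μ.map (P i)) (D i) :=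
          (Measure.map_apply (hPm i) (hDm i)).symm
        have e2 : μ (P i ⁻¹' (tentPsi0 pstar i i ⁻¹' s i)) = (μ.map (P i)) (tentPsi0 pstar i i ⁻¹' s i) :=
          (Measure.map_apply (hPm i) (hCm i)).symm
        rw [e1, e2, hunif i, hD]
        simp only [if_pos rfl]
        rw [hTi]
        exact L1 h0 h1 hTmeas
      -- assemble products
      have hprodeq : ∏ m, μ (P m ⁻¹' D m)
          = ENNReal.ofReal pstar * ∏ m, μ (P m ⁻¹' (tentPsi0 pstar i m ⁻¹' s m)) := by
        rw [← Finset.mul_prod_erase Finset.univ _ (Finset.mem_univ i),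
          ← Finset.mul_prod_erase Finset.univ
            (fun m => μ (P m ⁻¹' (tentPsi0 pstar i m ⁻¹' s m))) (Finset.mem_univ i),
          hcoordi, mul_assoc]
        congr 1
        congr 1
        apply Finset.prod_congr rfl
        intro m hm
        have hmi : m ≠ i := Finset.ne_of_mem_erase hm
        rw [hD]; simp only [if_neg hmi]
      rw [hm1, hm2, Measure.map_apply hVm hpim, Measure.restrict_apply (hVm hpim),
        Measure.smul_apply, Measure.map_apply hVm hpim, smul_eq_mul, inter_comm,
        hset1, hset2, hprod1, hprod2, hprodeq]
    · rw [hm1, hm2, Measure.map_apply hVm MeasurableSet.univ, preimage_univ,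
        Measure.restrict_apply MeasurableSet.univ, univ_inter, Measure.smul_apply,
        Measure.map_apply hVm MeasurableSet.univ, preimage_univ, smul_eq_mul,
        measure_univ, mul_one, hμA]
  have e1 : μ ({ω | P i ω < pstar} ∩ tentV pstar P i ⁻¹' M) = m1 M := by
    rw [hm1, Measure.map_apply hVm hM, Measure.restrict_apply (hVm hM), inter_comm]
  have e2 : m2 M = ENNReal.ofReal pstar * μ (tentV pstar P i ⁻¹' M) := by
    rw [hm2, Measure.smul_apply, Measure.map_apply hVm hM, smul_eq_mul]
  rw [e1, key, e2]

/-- Downward (strong) induction on `Fin n`. -/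
lemma fin_downward {n : ℕ} (Q : Fin n → Prop)
    (step : ∀ j, (∀ k, j < k → Q k) → Q j) : ∀ j, Q j := by
  have key : ∀ (m : ℕ) (j : Fin n), n - (j : ℕ) ≤ m → Q j := by
    intro m
    induction m with
    | zero =>
      intro j hj
      have := j.isLt
      omega
    | succ m ih =>
      intro j hj
      apply step
      intro k hk
      apply ih
      have hk' : (j : ℕ) < (k : ℕ) := hk
      have := k.isLt
      omega
  exact fun j => key n j (by omega)

lemma comap_pair {α β γ : Type*} [mβ : MeasurableSpace β] [mγ : MeasurableSpace γ]
    (f : α → β) (g : α → γ) :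
    MeasurableSpace.comap (fun a => (f a, g a)) inferInstance
      = MeasurableSpace.comap f inferInstance ⊔ MeasurableSpace.comap g inferInstance := by
  rw [show (inferInstance : MeasurableSpace (β × γ))
      = mβ.comap Prod.fst ⊔ mγ.comap Prod.snd from rfl,
    MeasurableSpace.comap_sup, MeasurableSpace.comap_comp, MeasurableSpace.comap_comp]
  rfl

lemma meas_comp_pi {P : Fin n → Ω → ℝ} (hPm : ∀ i, Measurable (P i))
    {q : Ω → Fin n} (hq : Measurable q) : Measurable fun ω => P (q ω) ω := by
  intro t ht
  have : (fun ω => P (q ω) ω) ⁻¹' t = ⋃ i, (q ⁻¹' {i} ∩ P i ⁻¹' t) := by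
    ext ω
    simp only [mem_preimage, mem_iUnion, mem_inter_iff, mem_singleton_iff]
    exact ⟨fun h => ⟨q ω, rfl, h⟩, fun ⟨i, hi, h⟩ => by rw [hi]; exact h⟩
  rw [this]
  exact MeasurableSet.iUnion fun i => (hq (measurableSet_singleton i)).inter (hPm i ht)

/-- The generating observation of the filtration at step `j`: all masked p-values, and the
revealed p-values of previously chosen indices. -/
noncomputable def tentPair (pstar : ℝ) (P : Fin n → Ω → ℝ) (π : Fin n → Ω → Fin n) (j : Fin n) :
    Ω → (Fin n → ℝ) × ({k : Fin n // j < k} → ℝ) :=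
  fun ω => (tentG pstar P ω, fun k => P (π k.val ω) ω)

section Structural

variable {pstar : ℝ} {P : Fin n → Ω → ℝ} {π : Fin n → Ω → Fin n}
  {F : Fin n → MeasurableSpace Ω}

lemma F_eq_comap_pair
    (hF : ∀ j, F j =
      MeasurableSpace.comap
        (fun ω (i : Fin n) => min (P i ω) (pstar / (1 - pstar) * (1 - P i ω))) inferInstance
      ⊔ MeasurableSpace.comap
        (fun ω (k : {k : Fin n // j < k}) => P (π k.val ω) ω) inferInstance) (j : Fin n) :
    F j = MeasurableSpace.comap (tentPair pstar P π j) inferInstance := by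
  rw [hF j]
  exact (comap_pair (fun ω => tentG pstar P ω) (fun ω (k : {k : Fin n // j < k}) => P (π k.val ω) ω)).symm

lemma pair_meas (hPm : ∀ i, Measurable (P i))
    (hF : ∀ j, F j =
      MeasurableSpace.comap
        (fun ω (i : Fin n) => min (P i ω) (pstar / (1 - pstar) * (1 - P i ω))) inferInstance
      ⊔ MeasurableSpace.comap
        (fun ω (k : {k : Fin n // j < k}) => P (π k.val ω) ω) inferInstance)
    (hπ : ∀ j, Measurable[F j] (π j)) :
    ∀ j, Measurable (tentPair pstar P π j) := by
  apply fin_downward (fun j => Measurable (tentPair pstar P π j))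
  intro j ih
  apply Measurable.prodMk
  · exact tentG_meas pstar hPm
  · apply measurable_pi_lambda
    intro k
    have hπk : Measurable (π k.val) := by
      have hle : F k.val ≤ (inferInstance : MeasurableSpace Ω) := by
        rw [F_eq_comap_pair hF k.val]
        exact (ih k.val k.2).comap_le
      exact (hπ k.val).mono hle le_rfl
    exact meas_comp_pi hPm hπk

lemma pi_meas (hPm : ∀ i, Measurable (P i))
    (hF : ∀ j, F j =
      MeasurableSpace.comap
        (fun ω (i : Fin n) => min (P i ω) (pstar / (1 - pstar) * (1 - P i ω))) inferInstance
      ⊔ MeasurableSpace.comap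
        (fun ω (k : {k : Fin n // j < k}) => P (π k.val ω) ω) inferInstance)
    (hπ : ∀ j, Measurable[F j] (π j)) :
    ∀ j, Measurable (π j) := by
  intro j
  refine (hπ j).mono ?_ le_rfl
  rw [F_eq_comap_pair hF j]
  exact (pair_meas hPm hF hπ j).comap_le

end Structural

/-- Reduced observation at step `j` with revealed-index pattern `σ`: masked values plus the
sign bits of the already revealed coordinates. -/
noncomputable def tentU (pstar : ℝ) (P : Fin n → Ω → ℝ) (j : Fin n)
    (σ : {k : Fin n // j < k} → Fin n) : Ω → (Fin n → ℝ) × ({k : Fin n // j < k} → Bool) :=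
  fun ω => (tentG pstar P ω, fun k => tentHb pstar P (σ k) ω)

lemma tentU_meas (pstar : ℝ) {P : Fin n → Ω → ℝ} (hPm : ∀ i, Measurable (P i))
    (j : Fin n) (σ : {k : Fin n // j < k} → Fin n) : Measurable (tentU pstar P j σ) :=
  (tentG_meas pstar hPm).prodMk
    (measurable_pi_lambda _ fun k => tentHb_meas pstar hPm (σ k))

/-- Reconstruction of the revealed p-values from masked values and sign bits. -/
noncomputable def tentPsi (pstar : ℝ) {j : Fin n} (σ : {k : Fin n // j < k} → Fin n) :
    (Fin n → ℝ) × ({k : Fin n // j < k} → Bool) → (Fin n → ℝ) × ({k : Fin n // j < k} → ℝ) :=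
  fun q => (q.1, fun k => if q.2 k = true then q.1 (σ k) else 1 - q.1 (σ k) / (pstar / (1 - pstar)))

lemma tentPsi_meas (pstar : ℝ) {j : Fin n} (σ : {k : Fin n // j < k} → Fin n) :
    Measurable (tentPsi pstar σ) := by
  apply Measurable.prodMk measurable_fst
  apply measurable_pi_lambda
  intro k
  have hset : MeasurableSet {q : (Fin n → ℝ) × ({k : Fin n // j < k} → Bool) | q.2 k = true} := by
    have h1 : Measurable (fun q : (Fin n → ℝ) × ({k : Fin n // j < k} → Bool) => q.2 k) :=
      (measurable_pi_apply k).comp measurable_snd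
    exact h1 (measurableSet_singleton true)
  exact Measurable.ite hset ((measurable_pi_apply (σ k)).comp measurable_fst)
    (measurable_const.sub (((measurable_pi_apply (σ k)).comp measurable_fst).div measurable_const))

/-- The event that the ordering reveals indices according to `σ` after step `j`. -/
def tentE (π : Fin n → Ω → Fin n) (j : Fin n) (σ : {k : Fin n // j < k} → Fin n) : Set Ω :=
  {ω | ∀ k : {k : Fin n // j < k}, π k.val ω = σ k}

lemma tentE_meas {π : Fin n → Ω → Fin n} (hπm : ∀ k, Measurable (π k))
    (j : Fin n) (σ : {k : Fin n // j < k} → Fin n) : MeasurableSet (tentE π j σ) := by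
  have : tentE π j σ = ⋂ k : {k : Fin n // j < k}, (π k.val) ⁻¹' {σ k} := by
    ext ω; simp [tentE]
  rw [this]
  exact MeasurableSet.iInter fun k => (hπm k.val) (measurableSet_singleton (σ k))

lemma recover_eq (pstar : ℝ) (h0 : 0 < pstar) (h1 : pstar < 1)
    (P : Fin n → Ω → ℝ) (i : Fin n) (ω : Ω) :
    (if tentHb pstar P i ω = true then tentG pstar P ω i
      else 1 - tentG pstar P ω i / (pstar / (1 - pstar))) = P i ω := by
  by_cases hlt : P i ω < pstar
  · simp only [tentHb, if_pos hlt, tentG]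
    exact min_eq_left_of_lt h1 hlt
  · push_neg at hlt
    simp only [tentHb, if_neg (by simp [not_lt.mpr hlt] : ¬ (P i ω < pstar)), if_false, tentG]
    exact recover_of_ge h0 h1 hlt

lemma psi_pair_eq (pstar : ℝ) (h0 : 0 < pstar) (h1 : pstar < 1)
    (P : Fin n → Ω → ℝ) (π : Fin n → Ω → Fin n) (j : Fin n)
    (σ : {k : Fin n // j < k} → Fin n) (ω : Ω) (hω : ω ∈ tentE π j σ) :
    tentPair pstar P π j ω = tentPsi pstar σ (tentU pstar P j σ ω) := by
  apply Prod.ext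
  · rfl
  · funext k
    show P (π k.val ω) ω = _
    rw [hω k]
    exact (recover_eq pstar h0 h1 P (σ k) ω).symm

section Rep

variable {pstar : ℝ} {P : Fin n → Ω → ℝ} {π : Fin n → Ω → Fin n}
  {F : Fin n → MeasurableSpace Ω}

/-- Representation lemma: the event that the revealed indices after step `j` follow the
pattern `σ` is measurable with respect to the masked values together with the sign bits
of the coordinates `σ k`. -/
lemma rep (h0 : 0 < pstar) (h1 : pstar < 1) (hPm : ∀ i, Measurable (P i))
    (hF : ∀ j, F j =
      MeasurableSpace.comap
        (fun ω (i : Fin n) => min (P i ω) (pstar / (1 - pstar) * (1 - P i ω))) inferInstance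
      ⊔ MeasurableSpace.comap
        (fun ω (k : {k : Fin n // j < k}) => P (π k.val ω) ω) inferInstance)
    (hπ : ∀ j, Measurable[F j] (π j)) :
    ∀ (j : Fin n) (σ : {k : Fin n // j < k} → Fin n),
      ∃ M, MeasurableSet M ∧ tentE π j σ = tentU pstar P j σ ⁻¹' M := by
  apply fin_downward
    (fun j => ∀ σ : {k : Fin n // j < k} → Fin n,
      ∃ M, MeasurableSet M ∧ tentE π j σ = tentU pstar P j σ ⁻¹' M)
  intro j ih σ
  by_cases hj : (j : ℕ) + 1 < n
  · -- successor exists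
    set j' : Fin n := ⟨(j : ℕ) + 1, hj⟩ with hj'
    have hjj' : j < j' := by
      rw [Fin.lt_def]
      simp [hj']
    set σ' : {k : Fin n // j' < k} → Fin n :=
      fun k => σ ⟨k.val, lt_trans hjj' k.2⟩ with hσ'
    obtain ⟨M₁, hM₁, hE1⟩ := ih j' hjj' σ'
    -- the event π j' = σ ⟨j', hjj'⟩ is F j'-measurable
    have hmeasev : MeasurableSet[F j'] ((π j') ⁻¹' {σ ⟨j', hjj'⟩}) :=
      hπ j' (measurableSet_singleton _)
    rw [F_eq_comap_pair hF j', MeasurableSpace.measurableSet_comap] at hmeasev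
    obtain ⟨C, hC, hCeq⟩ := hmeasev
    -- restriction map
    set ρ : (Fin n → ℝ) × ({k : Fin n // j < k} → Bool)
        → (Fin n → ℝ) × ({k : Fin n // j' < k} → Bool) :=
      fun q => (q.1, fun k => q.2 ⟨k.val, lt_trans hjj' k.2⟩) with hρ
    have hρm : Measurable ρ :=
      measurable_fst.prodMk
        (measurable_pi_lambda _ fun k => (measurable_pi_apply _).comp measurable_snd)
    have hUρ : ∀ ω, tentU pstar P j' σ' ω = ρ (tentU pstar P j σ ω) := fun ω => rfl
    -- the decomposition of the event
    have hdec : tentE π j σ = (π j') ⁻¹' {σ ⟨j', hjj'⟩} ∩ tentE π j' σ' := by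
      ext ω
      simp only [tentE, mem_setOf_eq, mem_inter_iff, mem_preimage, mem_singleton_iff]
      constructor
      · intro h
        exact ⟨h ⟨j', hjj'⟩, fun k => h ⟨k.val, lt_trans hjj' k.2⟩⟩
      · rintro ⟨h1, h2⟩ k
        by_cases hc : (k.val : ℕ) = (j : ℕ) + 1
        · have : k = ⟨j', hjj'⟩ := Subtype.ext (Fin.ext hc)
          rw [this]
          exact h1
        · have hk : (j : ℕ) < (k.val : ℕ) := k.2
          have hgt : j' < k.val := by
            rw [Fin.lt_def]
            simp only [hj']
            omega
          have hval := h2 ⟨k.val, hgt⟩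
          have he : σ' ⟨k.val, hgt⟩ = σ k := congrArg σ (Subtype.ext rfl)
          rw [← he]
          exact hval
    refine ⟨ρ ⁻¹' (M₁ ∩ tentPsi pstar σ' ⁻¹' C),
      hρm (hM₁.inter (tentPsi_meas pstar σ' hC)), ?_⟩
    rw [hdec]
    ext ω
    constructor
    · rintro ⟨hp1, hp2⟩
      have hU' : tentU pstar P j' σ' ω ∈ M₁ := by
        have hmem : ω ∈ tentU pstar P j' σ' ⁻¹' M₁ := by rw [← hE1]; exact hp2
        exact hmem
      show ρ (tentU pstar P j σ ω) ∈ M₁ ∩ tentPsi pstar σ' ⁻¹' C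
      rw [← hUρ ω]
      refine ⟨hU', ?_⟩
      have hpair : tentPair pstar P π j' ω = tentPsi pstar σ' (tentU pstar P j' σ' ω) :=
        psi_pair_eq pstar h0 h1 P π j' σ' ω hp2
      show tentPsi pstar σ' (tentU pstar P j' σ' ω) ∈ C
      rw [← hpair]
      have hmem : ω ∈ tentPair pstar P π j' ⁻¹' C := by
        rw [hCeq]
        exact hp1
      exact hmem
    · intro h
      have h' : ρ (tentU pstar P j σ ω) ∈ M₁ ∩ tentPsi pstar σ' ⁻¹' C := h
      rw [← hUρ ω] at h'
      obtain ⟨hm1', hc⟩ := h'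
      have h2 : ω ∈ tentE π j' σ' := by rw [hE1]; exact hm1'
      have hpair := psi_pair_eq pstar h0 h1 P π j' σ' ω h2
      have hpc : ω ∈ tentPair pstar P π j' ⁻¹' C := by
        rw [mem_preimage, hpair]
        exact hc
      rw [hCeq] at hpc
      exact ⟨hpc, h2⟩
  · -- j is the maximal index: no revealed coordinates yet
    refine ⟨univ, MeasurableSet.univ, ?_⟩
    rw [preimage_univ]
    apply eq_univ_of_forall
    intro ω k
    exfalso
    have hlt : (j : ℕ) < (k.val : ℕ) := k.2
    have := k.val.isLt
    omega

end Rep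

section Master

variable {pstar : ℝ} {P : Fin n → Ω → ℝ} {π : Fin n → Ω → Fin n}
  {F : Fin n → MeasurableSpace Ω}

/-- The master lemma: conditionally on any event from the σ-field available at step `j`,
the revealed sign `1{P_{π_j} < p*}` is Bernoulli(p*). -/
lemma master (μ : Measure Ω) [IsProbabilityMeasure μ]
    (h0 : 0 < pstar) (h1 : pstar < 1)
    (hPm : ∀ i, Measurable (P i))
    (hPindep : iIndepFun P μ)
    (hunif : ∀ i, μ.map (P i) = volume.restrict (Icc 0 1))
    (hperm : ∀ ω, Function.Bijective (fun j => π j ω))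
    (hF : ∀ j, F j =
      MeasurableSpace.comap
        (fun ω (i : Fin n) => min (P i ω) (pstar / (1 - pstar) * (1 - P i ω))) inferInstance
      ⊔ MeasurableSpace.comap
        (fun ω (k : {k : Fin n // j < k}) => P (π k.val ω) ω) inferInstance)
    (hπ : ∀ j, Measurable[F j] (π j))
    (j : Fin n) {B : Set Ω} (hB : MeasurableSet[F j] B) :
    μ ({ω | P (π j ω) ω < pstar} ∩ B) = ENNReal.ofReal pstar * μ B := by
  have hπm : ∀ k, Measurable (π k) := pi_meas hPm hF hπ
  -- representations of B and of {π j = i}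
  rw [F_eq_comap_pair hF j, MeasurableSpace.measurableSet_comap] at hB
  obtain ⟨D, hD, hDeq⟩ := hB
  have hBamb : MeasurableSet B := by
    rw [← hDeq]; exact pair_meas hPm hF hπ j hD
  have hHev : MeasurableSet {ω | P (π j ω) ω < pstar} :=
    meas_comp_pi hPm (hπm j) measurableSet_Iio
  -- the partition according to the realized ordering pattern
  set T := Fin n × ({k : Fin n // j < k} → Fin n) with hT
  set Et : T → Set Ω := fun t => (π j) ⁻¹' {t.1} ∩ tentE π j t.2 with hEt
  have hEtm : ∀ t, MeasurableSet (Et t) := fun t =>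
    (hπm j (measurableSet_singleton t.1)).inter (tentE_meas hπm j t.2)
  have hsum : ∀ (X : Set Ω), MeasurableSet X → μ X = ∑ t : T, μ (X ∩ Et t) := by
    intro X hX
    have hcover : X = ⋃ t : T, (X ∩ Et t) := by
      ext ω
      simp only [mem_iUnion, mem_inter_iff]
      constructor
      · intro hω
        exact ⟨(π j ω, fun k => π k.val ω), hω, rfl, fun k => rfl⟩
      · rintro ⟨t, hω, -⟩
        exact hω
    have hdisj : Pairwise (Function.onFun Disjoint fun t : T => X ∩ Et t) := by
      intro t t' hne
      simp only [Function.onFun]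
      rw [Set.disjoint_left]
      rintro ω ⟨-, hπ1, hE1⟩ ⟨-, hπ2, hE2⟩
      apply hne
      have e1 : π j ω = t.1 := hπ1
      have e2 : π j ω = t'.1 := hπ2
      refine Prod.ext (e1 ▸ e2) ?_
      funext k
      have f1 : π k.val ω = t.2 k := hE1 k
      have f2 : π k.val ω = t'.2 k := hE2 k
      rw [← f1, f2]
    conv_lhs => rw [hcover]
    rw [measure_iUnion hdisj fun t => hX.inter (hEtm t), tsum_fintype]
  -- per-piece computation
  have hterm : ∀ t : T,
      μ (({ω | P (π j ω) ω < pstar} ∩ B) ∩ Et t) = ENNReal.ofReal pstar * μ (B ∩ Et t) := by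
    rintro ⟨i, σ⟩
    by_cases hcase : ∀ k, σ k ≠ i
    · -- main case: coordinate i is not among the revealed ones
      obtain ⟨M₀, hM₀, hEeq⟩ := rep h0 h1 hPm hF hπ j σ
      have hmeasev : MeasurableSet[F j] ((π j) ⁻¹' {i}) := hπ j (measurableSet_singleton i)
      rw [F_eq_comap_pair hF j, MeasurableSpace.measurableSet_comap] at hmeasev
      obtain ⟨C, hC, hCeq⟩ := hmeasev
      have hEt' : Et (i, σ) = (π j) ⁻¹' {i} ∩ tentE π j σ := rfl
      -- rewrite using the representation through tentU
      have claim : B ∩ Et (i, σ)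
          = tentU pstar P j σ ⁻¹' (M₀ ∩ tentPsi pstar σ ⁻¹' (D ∩ C)) := by
        rw [hEt']
        ext ω
        constructor
        · rintro ⟨hBω, hπi, hEω⟩
          have hU0 : tentU pstar P j σ ω ∈ M₀ := by
            have : ω ∈ tentU pstar P j σ ⁻¹' M₀ := by rw [← hEeq]; exact hEω
            exact this
          have hpair := psi_pair_eq pstar h0 h1 P π j σ ω hEω
          refine ⟨hU0, ?_⟩
          show tentPsi pstar σ (tentU pstar P j σ ω) ∈ D ∩ C
          rw [← hpair]
          constructor
          · have : ω ∈ tentPair pstar P π j ⁻¹' D := by rw [hDeq]; exact hBω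
            exact this
          · have : ω ∈ tentPair pstar P π j ⁻¹' C := by rw [hCeq]; exact hπi
            exact this
        · rintro ⟨hU0, hDC⟩
          have hEω : ω ∈ tentE π j σ := by rw [hEeq]; exact hU0
          have hpair := psi_pair_eq pstar h0 h1 P π j σ ω hEω
          have hDC' : tentPair pstar P π j ω ∈ D ∩ C := by rw [hpair]; exact hDC
          refine ⟨?_, ?_, hEω⟩
          · rw [← hDeq]; exact hDC'.1
          · rw [← hCeq]; exact hDC'.2
      -- express tentU through tentV i
      set θ : (Fin n → ℝ × Bool) → (Fin n → ℝ) × ({k : Fin n // j < k} → Bool) :=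
        fun q => (fun m => (q m).1, fun k => (q (σ k)).2) with hθ
      have hθm : Measurable θ :=
        (measurable_pi_lambda _ fun m => measurable_fst.comp (measurable_pi_apply m)).prodMk
          (measurable_pi_lambda _ fun k => measurable_snd.comp (measurable_pi_apply (σ k)))
      have hUV : tentU pstar P j σ = θ ∘ tentV pstar P i := by
        funext ω
        apply Prod.ext
        · rfl
        · funext k
          show tentHb pstar P (σ k) ω = (tentV pstar P i ω (σ k)).2
          simp only [tentV]
          rw [if_neg (hcase k)]
      have hEq1 : ({ω | P (π j ω) ω < pstar} ∩ B) ∩ Et (i, σ)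
          = {ω | P i ω < pstar} ∩ (B ∩ Et (i, σ)) := by
        rw [hEt']
        ext ω
        simp only [mem_inter_iff, mem_setOf_eq, mem_preimage, mem_singleton_iff]
        constructor
        · rintro ⟨⟨hev, hBω⟩, hπi, hEω⟩
          rw [hπi] at hev
          exact ⟨hev, hBω, hπi, hEω⟩
        · rintro ⟨hev, hBω, hπi, hEω⟩
          rw [← hπi] at hev
          exact ⟨⟨hev, hBω⟩, hπi, hEω⟩
      have hN : MeasurableSet (θ ⁻¹' (M₀ ∩ tentPsi pstar σ ⁻¹' (D ∩ C))) :=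
        hθm (hM₀.inter (tentPsi_meas pstar σ (hD.inter hC)))
      have hBV : B ∩ Et (i, σ)
          = tentV pstar P i ⁻¹' (θ ⁻¹' (M₀ ∩ tentPsi pstar σ ⁻¹' (D ∩ C))) := by
        rw [claim, hUV, preimage_comp]
      rw [hEq1, hBV]
      exact indepCore μ pstar h0 h1 P hPm hPindep hunif i
        (hθm (hM₀.inter (tentPsi_meas pstar σ (hD.inter hC))))
    · -- degenerate case: i is among the revealed indices, the piece is empty
      push_neg at hcase
      obtain ⟨k, hk⟩ := hcase
      have hempty : Et (i, σ) = ∅ := by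
        show (π j) ⁻¹' {i} ∩ tentE π j σ = ∅
        apply eq_empty_iff_forall_notMem.mpr
        rintro ω ⟨hπi, hEω⟩
        have e1 : π j ω = i := hπi
        have e2 : π k.val ω = i := by rw [hEω k, hk]
        have : k.val = j := (hperm ω).injective (e2.trans e1.symm)
        have hlt : j < k.val := k.2
        rw [this] at hlt
        exact lt_irrefl j hlt
      rw [hempty, inter_empty, inter_empty, measure_empty, mul_zero]
  rw [hsum _ (hHev.inter hBamb), hsum B hBamb, Finset.mul_sum]
  exact Finset.sum_congr rfl fun t _ => hterm t

end Master

end TentAux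

/-- For i.i.d. uniform p-values `P_1,…,P_n` with tent masking and an
adaptive ordering `π_n,…,π_1` (each `π_j` measurable w.r.t. the σ-field generated by
all masked p-values and the revealed p-values of the previously chosen indices
`π_n,…,π_{j+1}`), the indicators `1{h(P_{π_j}) = 1} = 1{P_{π_j} < p*}` are mutually
independent Bernoulli(p*). -/
theorem adaptive_ordering_iid_bernoulli
    {Ω : Type*} [MeasurableSpace Ω] (μ : Measure Ω) [IsProbabilityMeasure μ]
    (n : ℕ) (pstar : ℝ) (hp : pstar ∈ Set.Ioo (0:ℝ) 1)
    (P : Fin n → Ω → ℝ) (hPm : ∀ i, Measurable (P i))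
    (hPindep : iIndepFun P μ)
    (hunif : ∀ i, μ.map (P i) = volume.restrict (Set.Icc 0 1))
    (π : Fin n → Ω → Fin n)
    (hperm : ∀ ω, Function.Bijective (fun j => π j ω))
    (F : Fin n → MeasurableSpace Ω)
    (hF : ∀ j, F j =
      MeasurableSpace.comap
        (fun ω (i : Fin n) => min (P i ω) (pstar / (1 - pstar) * (1 - P i ω))) inferInstance
      ⊔ MeasurableSpace.comap
        (fun ω (k : {k : Fin n // j < k}) => P (π k.val ω) ω) inferInstance)
    (hπ : ∀ j, Measurable[F j] (π j)) :
    iIndepFun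
      (fun (j : Fin n) (ω : Ω) => if P (π j ω) ω < pstar then (1:ℝ) else 0) μ ∧
    ∀ j, μ {ω | P (π j ω) ω < pstar} = ENNReal.ofReal pstar := by
  obtain ⟨h0, h1⟩ := hp
  have hπm : ∀ k, Measurable (π k) := TentAux.pi_meas hPm hF hπ
  set Hset : Fin n → Set Ω := fun j => {ω | P (π j ω) ω < pstar} with hHset
  have hHm : ∀ j, MeasurableSet (Hset j) := fun j =>
    TentAux.meas_comp_pi hPm (hπm j) measurableSet_Iio
  have hBern : ∀ j, μ (Hset j) = ENNReal.ofReal pstar := by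
    intro j
    have := TentAux.master μ h0 h1 hPm hPindep hunif hperm hF hπ j
      (MeasurableSet.univ (α := Ω))
    simpa [measure_univ] using this
  have hHFj : ∀ (j j' : Fin n), j < j' → MeasurableSet[F j] (Hset j') := by
    intro j j' hlt
    rw [TentAux.F_eq_comap_pair hF j, MeasurableSpace.measurableSet_comap]
    refine ⟨{q : (Fin n → ℝ) × ({k : Fin n // j < k} → ℝ) | q.2 ⟨j', hlt⟩ < pstar}, ?_, rfl⟩
    exact ((measurable_pi_apply (⟨j', hlt⟩ : {k : Fin n // j < k})).comp measurable_snd)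
      measurableSet_Iio
  have hInter : ∀ S : Finset (Fin n), μ (⋂ j ∈ S, Hset j) = ∏ j ∈ S, μ (Hset j) := by
    intro S
    induction S using Finset.strongInduction with
    | _ S ih =>
      rcases S.eq_empty_or_nonempty with rfl | hS
      · simp
      · set j0 := S.min' hS with hj0
        have hj0S : j0 ∈ S := S.min'_mem hS
        have hlt : ∀ j ∈ S.erase j0, j0 < j := by
          intro j hj
          exact lt_of_le_of_ne (S.min'_le j (Finset.mem_of_mem_erase hj))
            (Ne.symm (Finset.ne_of_mem_erase hj))
        have hBmeas : MeasurableSet[F j0] (⋂ j ∈ S.erase j0, Hset j) := by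
          apply Finset.measurableSet_biInter
          intro j hj
          exact hHFj j0 j (hlt j hj)
        have hrw : S = insert j0 (S.erase j0) := (Finset.insert_erase hj0S).symm
        rw [hrw, Finset.set_biInter_insert,
          Finset.prod_insert (Finset.notMem_erase j0 S),
          TentAux.master μ h0 h1 hPm hPindep hunif hperm hF hπ j0 hBmeas,
          ih (S.erase j0) (Finset.erase_ssubset hj0S), hBern j0]
  have hIndepSet : iIndepSet Hset μ := (iIndepSet_iff_meas_biInter hHm).2 hInter
  refine ⟨?_, hBern⟩
  have heq : (fun (j : Fin n) (ω : Ω) => if P (π j ω) ω < pstar then (1:ℝ) else 0)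
      = fun j => (Hset j).indicator fun _ => (1:ℝ) := by
    funext j ω
    by_cases h : P (π j ω) ω < pstar
    · rw [if_pos h, Set.indicator_of_mem (by exact h) (fun _ => (1:ℝ))]
    · rw [if_neg h, Set.indicator_of_notMem (by exact h) (fun _ => (1:ℝ))]
  rw [heq]
  exact hIndepSet.iIndepFun_indicator
end

section
/- Let P_1, ..., P_n be random variables on [0,1] and H_0 ⊆ {1,...,n} a deterministic set of null indices such that {P_i : i ∈ H_0} are i.i.d. uniform on [0,1] and independent of {P_i : i ∉ H_0}. Fix p* ∈ (0,1) and apply tent masking h(P_i) = 2·1{P_i < p*} - 1, g(P_i) = min{P_i, (p*/(1-p*))(1-P_i)}. Let (π_n, ..., π_1) be a random ordering where each π_j is measurable with respect to σ(g(P_1), ..., g(P_n), P_{π_n}, ..., P_{π_{j+1}}). Then for every j ∈ {1,...,n}, conditionally on the σ-field generated by {1{h(P_{π_k}) = 1}}_{k=j+1}^n and {1{π_k ∈ H_0}}_{k=j+1}^n, and on the event {π_j ∈ H_0}, the conditional probability that h(P_{π_j}) = 1 equals p*. -/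
open MeasureTheory ProbabilityTheory Set
open scoped ENNReal

section AdaptiveAux

variable {n : ℕ}

lemma measurable_eval_comp {α β : Type*} [MeasurableSpace α] [MeasurableSpace β]
    {F : Fin n → α → β} (hF : ∀ l, Measurable (F l)) {g : α → Fin n} (hg : Measurable g) :
    Measurable fun a => F (g a) a := by
  intro s hs
  have h : (fun a => F (g a) a) ⁻¹' s = ⋃ l, ({a | g a = l} ∩ F l ⁻¹' s) := by
    ext a
    simp only [Set.mem_preimage, Set.mem_iUnion, Set.mem_inter_iff, Set.mem_setOf_eq]
    constructor
    · intro h; exact ⟨g a, rfl, h⟩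
    · rintro ⟨l, hl, h⟩; rw [hl]; exact h
  rw [h]
  exact MeasurableSet.iUnion fun l => (hg (measurableSet_singleton l)).inter (hF l hs)

open Classical in
noncomputable def pickIdx {β : Type*} (A : Fin n → Set β) (d : Fin n) : List (Fin n) → β → Fin n
  | [], _ => d
  | l :: ls, b => if b ∈ A l then l else pickIdx A d ls b

lemma pickIdx_measurable {β : Type*} [MeasurableSpace β] {A : Fin n → Set β}
    (hA : ∀ l, MeasurableSet (A l)) (d : Fin n) :
    ∀ ls, Measurable (pickIdx A d ls)
  | [] => measurable_const
  | l :: ls => Measurable.ite (hA l) measurable_const (pickIdx_measurable hA d ls)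

lemma pickIdx_spec {β : Type*} {A : Fin n → Set β} {d t : Fin n} {b : β}
    (h1 : ∀ l, b ∈ A l → l = t) :
    ∀ ls : List (Fin n), (∃ l ∈ ls, b ∈ A l) → pickIdx A d ls b = t
  | [], h => absurd h (by simp)
  | l :: ls, h => by
      by_cases hb : b ∈ A l
      · simp only [pickIdx, if_pos hb]; exact h1 l hb
      · simp only [pickIdx, if_neg hb]
        apply pickIdx_spec h1 ls
        rcases h with ⟨l', hl', hbl'⟩
        rcases List.mem_cons.mp hl' with rfl | h'
        · exact absurd hbl' hb
        · exact ⟨l', h', hbl'⟩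

lemma exists_factor {α β : Type*} [MeasurableSpace β] {f : α → β} {g : α → Fin n}
    (hg : Measurable[MeasurableSpace.comap f inferInstance] g) (d : Fin n) :
    ∃ Φ : β → Fin n, Measurable Φ ∧ ∀ a, Φ (f a) = g a := by
  have h : ∀ l : Fin n, ∃ A : Set β, MeasurableSet A ∧ f ⁻¹' A = g ⁻¹' {l} :=
    fun l => MeasurableSpace.measurableSet_comap.mp (hg (measurableSet_singleton l))
  choose A hAm hAe using h
  refine ⟨pickIdx A d (List.finRange n), pickIdx_measurable hAm d _, fun a => ?_⟩
  apply pickIdx_spec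
  · intro l hl
    have h2 : a ∈ f ⁻¹' A l := hl
    rw [hAe l] at h2
    exact h2.symm
  · refine ⟨g a, List.mem_finRange _, ?_⟩
    have h3 : a ∈ g ⁻¹' {g a} := rfl
    rw [← hAe (g a)] at h3
    exact h3

lemma comap_pair_eq_sup {α β γ : Type*} [mβ : MeasurableSpace β] [mγ : MeasurableSpace γ]
    (f : α → β) (g : α → γ) :
    MeasurableSpace.comap (fun a => (f a, g a)) inferInstance =
      MeasurableSpace.comap f inferInstance ⊔ MeasurableSpace.comap g inferInstance := by
  have h : (inferInstance : MeasurableSpace (β × γ)) = mβ.comap Prod.fst ⊔ mγ.comap Prod.snd := rfl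
  rw [h, MeasurableSpace.comap_sup, MeasurableSpace.comap_comp, MeasurableSpace.comap_comp]
  rfl

noncomputable def tildePi (Ψ : (j : Fin n) → (Fin n → ℝ) → ({k : Fin n // j < k} → ℝ) → Fin n) :
    Fin n → (Fin n → ℝ) → Fin n
  | j, d => Ψ j d fun k => d (tildePi Ψ k.val d)
  termination_by j => n - j.val
  decreasing_by
    have h1 : j.val < k.val.val := k.2
    have h2 : k.val.val < n := k.val.isLt
    omega

lemma tildePi_eq (Ψ : (j : Fin n) → (Fin n → ℝ) → ({k : Fin n // j < k} → ℝ) → Fin n)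
    (j : Fin n) (d : Fin n → ℝ) :
    tildePi Ψ j d = Ψ j d fun k => d (tildePi Ψ k.val d) := by
  rw [tildePi]

lemma tildePi_measurable (Ψ : (j : Fin n) → (Fin n → ℝ) → ({k : Fin n // j < k} → ℝ) → Fin n)
    (hΨ : ∀ j : Fin n, Measurable fun p : (Fin n → ℝ) × ({k : Fin n // j < k} → ℝ) => Ψ j p.1 p.2) :
    ∀ j, Measurable (tildePi Ψ j) := by
  suffices H : ∀ m (j : Fin n), n - j.val ≤ m → Measurable (tildePi Ψ j) from
    fun j => H n j (Nat.sub_le _ _)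
  intro m
  induction m with
  | zero => intro j hj; exact absurd hj (by have := j.isLt; omega)
  | succ m IH =>
    intro j hj
    have he : tildePi Ψ j = fun d => Ψ j d fun k => d (tildePi Ψ k.val d) :=
      funext fun d => tildePi_eq Ψ j d
    rw [he]
    have hpair : Measurable fun d : Fin n → ℝ =>
        ((d, fun k : {k : Fin n // j < k} => d (tildePi Ψ k.val d)) :
          (Fin n → ℝ) × ({k : Fin n // j < k} → ℝ)) := by
      refine measurable_id.prodMk (measurable_pi_lambda _ fun k => ?_)
      have hk : Measurable (tildePi Ψ k.val) := by
        refine IH k.val ?_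
        have h1 : j.val < k.val.val := k.2
        have h2 : k.val.val < n := k.val.isLt
        omega
      exact measurable_eval_comp (F := fun l (d : Fin n → ℝ) => d l)
        (fun l => measurable_pi_apply l) hk
    exact (hΨ j).comp hpair

lemma rect_ext {Ω α β : Type*} [MeasurableSpace Ω] [MeasurableSpace α] [MeasurableSpace β]
    (μ : Measure Ω) [IsProbabilityMeasure μ] {E : Set Ω} (q : ℝ≥0∞)
    {Y : Ω → α} {Z : Ω → β} (hY : Measurable Y) (hZ : Measurable Z)
    (h : ∀ ⦃A : Set α⦄, MeasurableSet A → ∀ ⦃B : Set β⦄, MeasurableSet B →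
      μ (E ∩ (Y ⁻¹' A ∩ Z ⁻¹' B)) = q * μ (Y ⁻¹' A ∩ Z ⁻¹' B)) :
    ∀ ⦃U : Set (α × β)⦄, MeasurableSet U →
      μ (E ∩ (fun ω => (Y ω, Z ω)) ⁻¹' U) = q * μ ((fun ω => (Y ω, Z ω)) ⁻¹' U) := by
  have hW : Measurable fun ω => (Y ω, Z ω) := hY.prodMk hZ
  have hE' : μ E = q := by
    have := h MeasurableSet.univ MeasurableSet.univ
    simpa using this
  have key : Measure.map (fun ω => (Y ω, Z ω)) (μ.restrict E) =
      q • Measure.map (fun ω => (Y ω, Z ω)) μ := by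
    haveI : IsFiniteMeasure (Measure.map (fun ω => (Y ω, Z ω)) (μ.restrict E)) :=
      Measure.isFiniteMeasure_map _ _
    refine ext_of_generate_finite _ generateFrom_prod.symm isPiSystem_prod ?_ ?_
    · rintro s ⟨A, hA, B, hB, rfl⟩
      have hA' : MeasurableSet A := hA
      have hB' : MeasurableSet B := hB
      rw [Measure.map_apply hW (hA'.prod hB'), Measure.restrict_apply (hW (hA'.prod hB')),
        Measure.smul_apply, Measure.map_apply hW (hA'.prod hB'), smul_eq_mul,
        Set.mk_preimage_prod, Set.inter_comm _ E]
      exact h hA' hB'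
    · rw [Measure.map_apply hW MeasurableSet.univ, Measure.smul_apply,
        Measure.map_apply hW MeasurableSet.univ]
      simp [Measure.restrict_apply MeasurableSet.univ, hE']
  intro U hU
  have h2 := congrArg (fun ν : Measure (α × β) => ν U) key
  simp only [Measure.smul_apply, smul_eq_mul] at h2
  rw [Measure.map_apply hW hU, Measure.restrict_apply (hW hU), Measure.map_apply hW hU,
    Set.inter_comm] at h2
  exact h2

lemma tent_vol (p : ℝ) (hp0 : 0 < p) (hp1 : p < 1) {A : Set ℝ} (hA : MeasurableSet A) :
    volume (Iio p ∩ (fun x => min x (p / (1 - p) * (1 - x))) ⁻¹' A ∩ Icc 0 1)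
      = ENNReal.ofReal p * volume ((fun x => min x (p / (1 - p) * (1 - x))) ⁻¹' A ∩ Icc 0 1) := by
  set c := p / (1 - p) with hc
  have h1p : (0:ℝ) < 1 - p := by linarith
  have hcpos : 0 < c := div_pos hp0 h1p
  have hcp : c * (1 - p) = p := by rw [hc]; field_simp
  set g := fun x : ℝ => min x (c * (1 - x)) with hg
  have hleft : ∀ x : ℝ, 0 ≤ x → x < p → g x = x := by
    intro x hx0 hxp
    exact min_eq_left (by nlinarith)
  have hright : ∀ x : ℝ, p ≤ x → x ≤ 1 → g x = c * (1 - x) := by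
    intro x hxp hx1
    exact min_eq_right (by nlinarith)
  set h := fun x : ℝ => c + (-c) * x with hh
  have hhe : ∀ x, h x = c * (1 - x) := fun x => by simp only [hh]; ring
  have claim1 : Iio p ∩ g ⁻¹' A ∩ Icc 0 1 = A ∩ Ico 0 p := by
    ext x
    simp only [Set.mem_inter_iff, Set.mem_Iio, Set.mem_preimage, Set.mem_Icc, Set.mem_Ico]
    constructor
    · rintro ⟨⟨hxp, hxA⟩, hx0, hx1⟩
      rw [hleft x hx0 hxp] at hxA
      exact ⟨hxA, hx0, hxp⟩
    · rintro ⟨hxA, hx0, hxp⟩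
      exact ⟨⟨hxp, by rw [hleft x hx0 hxp]; exact hxA⟩, hx0, by linarith⟩
  have claim2a : g ⁻¹' A ∩ Icc p 1 = h ⁻¹' (A ∩ Icc 0 p) := by
    ext x
    simp only [Set.mem_inter_iff, Set.mem_preimage, Set.mem_Icc]
    constructor
    · rintro ⟨hxA, hxp, hx1⟩
      rw [hright x hxp hx1] at hxA
      refine ⟨by rw [hhe]; exact hxA, by rw [hhe]; constructor <;> nlinarith⟩
    · rintro ⟨hxA, hx0, hxp⟩
      rw [hhe] at hxA hx0 hxp
      have hx1 : x ≤ 1 := by nlinarith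
      have hxge : p ≤ x := by nlinarith
      exact ⟨by rw [hright x hxge hx1]; exact hxA, hxge, hx1⟩
  have claim2 : g ⁻¹' A ∩ Icc 0 1 = (A ∩ Ico 0 p) ∪ h ⁻¹' (A ∩ Icc 0 p) := by
    rw [← Set.Ico_union_Icc_eq_Icc (le_of_lt hp0) (le_of_lt hp1), Set.inter_union_distrib_left,
      claim2a]
    congr 1
    ext x
    simp only [Set.mem_inter_iff, Set.mem_preimage, Set.mem_Ico]
    constructor
    · rintro ⟨hxA, hx0, hxp⟩
      rw [hleft x hx0 hxp] at hxA
      exact ⟨hxA, hx0, hxp⟩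
    · rintro ⟨hxA, hx0, hxp⟩
      exact ⟨by rw [hleft x hx0 hxp]; exact hxA, hx0, hxp⟩
  have hhm : Measurable h := by
    simp only [hh]
    exact measurable_const.add (measurable_const.mul measurable_id)
  have hvolh : ∀ C : Set ℝ, volume (h ⁻¹' C) = ENNReal.ofReal c⁻¹ * volume C := by
    intro C
    have he : h ⁻¹' C = (fun x => (-c) * x) ⁻¹' ((fun y => c + y) ⁻¹' C) := rfl
    rw [he, Real.volume_preimage_mul_left (by linarith : (-c) ≠ 0), measure_preimage_add]
    congr 1
    rw [abs_inv, abs_neg, abs_of_pos hcpos]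
  have hbdry : volume (A ∩ Icc 0 p) = volume (A ∩ Ico 0 p) := by
    apply le_antisymm
    · calc volume (A ∩ Icc 0 p) ≤ volume ((A ∩ Ico 0 p) ∪ {p}) := by
            apply measure_mono
            rintro x ⟨hxA, hx0, hxp⟩
            rcases lt_or_eq_of_le hxp with h' | h'
            · exact Or.inl ⟨hxA, hx0, h'⟩
            · exact Or.inr (by simp [h'])
        _ ≤ volume (A ∩ Ico 0 p) + volume ({p} : Set ℝ) := measure_union_le _ _
        _ = volume (A ∩ Ico 0 p) := by simp
    · exact measure_mono (Set.inter_subset_inter_right _ Set.Ico_subset_Icc_self)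
  have hdisj : Disjoint (A ∩ Ico 0 p) (h ⁻¹' (A ∩ Icc 0 p)) := by
    rw [Set.disjoint_left]
    rintro x ⟨_, _, hxp⟩ hx2
    rw [Set.mem_preimage, hhe] at hx2
    simp only [Set.mem_inter_iff, Set.mem_Icc] at hx2
    obtain ⟨_, _, hle⟩ := hx2
    nlinarith
  rw [claim1, claim2, measure_union hdisj (hhm (hA.inter measurableSet_Icc)), hvolh, hbdry]
  have harith : ENNReal.ofReal p * (1 + ENNReal.ofReal c⁻¹) = 1 := by
    rw [← ENNReal.ofReal_one, ← ENNReal.ofReal_add (by norm_num) (by positivity),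
      ← ENNReal.ofReal_mul (le_of_lt hp0)]
    congr 1
    have : c⁻¹ = (1 - p) / p := by
      rw [hc]; field_simp
    rw [this]
    field_simp
    ring
  calc volume (A ∩ Ico 0 p)
      = (ENNReal.ofReal p * (1 + ENNReal.ofReal c⁻¹)) * volume (A ∩ Ico 0 p) := by
        rw [harith, one_mul]
    _ = ENNReal.ofReal p * (volume (A ∩ Ico 0 p) + ENNReal.ofReal c⁻¹ * volume (A ∩ Ico 0 p)) := by
        ring

end AdaptiveAux

/-- With null p-values (indices in `H0`) i.i.d. uniform and independent of
the non-nulls, tent masking, and an adaptive ordering `π_n,…,π_1`, for every `j`,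
conditionally on the σ-field generated by `{1{h(P_{π_k})=1}}_{k>j}` and
`{1{π_k ∈ H0}}_{k>j}`, and on the event `{π_j ∈ H0}`, the conditional probability of
`h(P_{π_j}) = 1` equals `p*`: for every set `S` measurable in that σ-field,
`ℙ({P_{π_j} < p*} ∩ {π_j ∈ H0} ∩ S) = p* · ℙ({π_j ∈ H0} ∩ S)`. -/
theorem adaptive_ordering_null_bernoulli
    {Ω : Type*} [MeasurableSpace Ω] (μ : Measure Ω) [IsProbabilityMeasure μ]
    (n : ℕ) (pstar : ℝ) (hp : pstar ∈ Set.Ioo (0:ℝ) 1)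
    (P : Fin n → Ω → ℝ) (hPm : ∀ i, Measurable (P i))
    (H0 : Finset (Fin n))
    (hnull_indep : iIndepFun
      (fun (i : {i : Fin n // i ∈ H0}) => P i.val) μ)
    (hnull_unif : ∀ i ∈ H0, μ.map (P i) = volume.restrict (Set.Icc 0 1))
    (hnull_nonnull_indep : IndepFun
      (fun ω (i : {i : Fin n // i ∈ H0}) => P i.val ω)
      (fun ω (i : {i : Fin n // i ∉ H0}) => P i.val ω) μ)
    (π : Fin n → Ω → Fin n)
    (hperm : ∀ ω, Function.Bijective (fun j => π j ω))
    (F : Fin n → MeasurableSpace Ω)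
    (hF : ∀ j, F j =
      MeasurableSpace.comap
        (fun ω (i : Fin n) => min (P i ω) (pstar / (1 - pstar) * (1 - P i ω))) inferInstance
      ⊔ MeasurableSpace.comap
        (fun ω (k : {k : Fin n // j < k}) => P (π k.val ω) ω) inferInstance)
    (hπ : ∀ j, Measurable[F j] (π j))
    (G : Fin n → MeasurableSpace Ω)
    (hG : ∀ j, G j =
      MeasurableSpace.comap
        (fun ω (k : {k : Fin n // j < k}) =>
          ((if P (π k.val ω) ω < pstar then (1:ℝ) else 0),
           (if π k.val ω ∈ H0 then (1:ℝ) else 0))) inferInstance) :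
    ∀ j : Fin n, ∀ S : Set Ω, MeasurableSet[G j] S →
      μ ({ω | P (π j ω) ω < pstar} ∩ {ω | π j ω ∈ H0} ∩ S)
        = ENNReal.ofReal pstar * μ ({ω | π j ω ∈ H0} ∩ S) := by
  obtain ⟨hp0, hp1⟩ := hp
  intro j S hS
  classical
  -- the masking function and masked vector
  set gf : ℝ → ℝ := fun x => min x (pstar / (1 - pstar) * (1 - x)) with hgf
  have hgfm : Measurable gf :=
    measurable_id.min (measurable_const.mul (measurable_const.sub measurable_id))
  set f1 : Ω → Fin n → ℝ := fun ω l => min (P l ω) (pstar / (1 - pstar) * (1 - P l ω)) with hf1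
  have hf1m : Measurable f1 := measurable_pi_lambda _ fun l => hgfm.comp (hPm l)
  -- global measurability of π
  have hπm : ∀ k, Measurable (π k) := by
    suffices H : ∀ m (k : Fin n), n - k.val ≤ m → Measurable (π k) from
      fun k => H n k (Nat.sub_le _ _)
    intro m
    induction m with
    | zero => intro k hk; exact absurd hk (by have := k.isLt; omega)
    | succ m IH =>
      intro k hk
      refine (hπ k).mono ?_ le_rfl
      rw [hF k]
      apply sup_le
      · exact Measurable.comap_le hf1m
      · refine Measurable.comap_le (measurable_pi_lambda _ fun k' => ?_)
        refine measurable_eval_comp hPm (IH k'.val ?_)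
        have h1 : k.val < k'.val.val := k'.2
        have h2 : k'.val.val < n := k'.val.isLt
        omega
  -- factorization of each π k through the masked data and previously revealed p-values
  have hΦex : ∀ k : Fin n, ∃ Φ : ((Fin n → ℝ) × ({k' : Fin n // k < k'} → ℝ)) → Fin n,
      Measurable Φ ∧
      ∀ ω, Φ (f1 ω, fun k' : {k' : Fin n // k < k'} => P (π k'.val ω) ω) = π k ω := by
    intro k
    refine exists_factor
      (f := fun ω => (f1 ω, fun k' : {k' : Fin n // k < k'} => P (π k'.val ω) ω)) ?_ k
    rw [comap_pair_eq_sup, ← hF k]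
    exact hπ k
  choose Φ hΦm hΦeq using hΦex
  -- the revealed-data function generating G j
  set sfun : Ω → {k : Fin n // j < k} → ℝ × ℝ := fun ω k =>
    ((if P (π k.val ω) ω < pstar then (1:ℝ) else 0),
     (if π k.val ω ∈ H0 then (1:ℝ) else 0)) with hsfun
  have hsfunm : Measurable sfun := by
    refine measurable_pi_lambda _ fun k => Measurable.prodMk ?_ ?_
    · exact Measurable.ite ((measurable_eval_comp hPm (hπm k.val)) measurableSet_Iio)
        measurable_const measurable_const
    · exact Measurable.ite ((hπm k.val) MeasurableSet.of_discrete)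
        measurable_const measurable_const
  rw [hG j] at hS
  obtain ⟨M, hM, rfl⟩ := MeasurableSpace.measurableSet_comap.mp hS
  -- the key per-index computation
  have key : ∀ i, i ∈ H0 →
      μ ({ω | P i ω < pstar} ∩ ({ω | π j ω = i} ∩ sfun ⁻¹' M))
        = ENNReal.ofReal pstar * μ ({ω | π j ω = i} ∩ sfun ⁻¹' M) := by
    intro i hi
    -- reconstructed data vector: coordinate i carries the masked value, others the raw p-values
    set Zi : Ω → Fin n → ℝ := fun ω l => if l = i then gf (P i ω) else P l ω with hZi
    set gvec : (Fin n → ℝ) → Fin n → ℝ := fun d l => if l = i then d i else gf (d l) with hgvec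
    have hgvm : Measurable gvec := by
      rw [hgvec]
      refine measurable_pi_lambda _ fun l => ?_
      by_cases hl : l = i
      · simpa only [if_pos hl] using measurable_pi_apply i
      · simp only [if_neg hl]; exact hgfm.comp (measurable_pi_apply l)
    have hZim : Measurable Zi := by
      rw [hZi]
      refine measurable_pi_lambda _ fun l => ?_
      by_cases hl : l = i
      · simp only [if_pos hl]; exact hgfm.comp (hPm i)
      · simpa only [if_neg hl] using hPm l
    set Ψ : (k : Fin n) → (Fin n → ℝ) → ({k' : Fin n // k < k'} → ℝ) → Fin n :=
      fun k d v => Φ k (gvec d, v) with hΨ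
    have hπtm : ∀ k, Measurable (tildePi Ψ k) := by
      refine tildePi_measurable Ψ fun k => ?_
      rw [hΨ]
      exact (hΦm k).comp ((hgvm.comp measurable_fst).prodMk measurable_snd)
    -- pointwise: the masked vector computed from Zi is the true masked vector
    have hgv : ∀ ω, gvec (Zi ω) = f1 ω := by
      intro ω; funext l
      by_cases hl : l = i
      · subst hl
        simp [hgvec, hZi, hf1, hgf]
      · simp only [hgvec, hZi, hf1, hgf, if_neg hl]
    -- one-step agreement between the reconstructed ordering and the true ordering
    have step : ∀ ω (k : Fin n),
        (∀ k' : Fin n, k < k' → tildePi Ψ k' (Zi ω) = π k' ω ∧ π k' ω ≠ i) →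
        tildePi Ψ k (Zi ω) = π k ω := by
      intro ω k hk
      rw [tildePi_eq]
      have harg : (fun k' : {k' : Fin n // k < k'} => Zi ω (tildePi Ψ k'.val (Zi ω)))
          = fun k' : {k' : Fin n // k < k'} => P (π k'.val ω) ω := by
        funext k'
        obtain ⟨h1, h2⟩ := hk k'.val k'.2
        rw [h1]
        simp only [hZi, if_neg h2]
      rw [harg]
      simp only [hΨ]
      rw [hgv ω]
      exact hΦeq k ω
    -- downward induction, direction A
    have dirA : ∀ ω, (∀ k' : Fin n, j < k' → π k' ω ≠ i) →
        ∀ k : Fin n, j ≤ k → tildePi Ψ k (Zi ω) = π k ω := by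
      intro ω hA
      suffices H : ∀ m (k : Fin n), j ≤ k → n - k.val ≤ m → tildePi Ψ k (Zi ω) = π k ω from
        fun k hk => H n k hk (Nat.sub_le _ _)
      intro m
      induction m with
      | zero => intro k _ hk; exact absurd hk (by have := k.isLt; omega)
      | succ m IH =>
        intro k hjk hk
        apply step
        intro k' hkk'
        have hjk' : j < k' := lt_of_le_of_lt hjk hkk'
        refine ⟨IH k' (le_of_lt hjk') ?_, hA k' hjk'⟩
        have h1 : k.val < k'.val := hkk'
        have h2 : k'.val < n := k'.isLt
        omega
    -- downward induction, direction B
    have dirB : ∀ ω, (∀ k' : Fin n, j < k' → tildePi Ψ k' (Zi ω) ≠ i) →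
        ∀ k : Fin n, j < k → tildePi Ψ k (Zi ω) = π k ω := by
      intro ω hB
      suffices H : ∀ m (k : Fin n), j < k → n - k.val ≤ m → tildePi Ψ k (Zi ω) = π k ω from
        fun k hk => H n k hk (Nat.sub_le _ _)
      intro m
      induction m with
      | zero => intro k _ hk; exact absurd hk (by have := k.isLt; omega)
      | succ m IH =>
        intro k hjk hk
        apply step
        intro k' hkk'
        have hjk' : j < k' := lt_trans hjk hkk'
        have he : tildePi Ψ k' (Zi ω) = π k' ω := by
          refine IH k' hjk' ?_
          have h1 : k.val < k'.val := hkk'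
          have h2 : k'.val < n := k'.isLt
          omega
        refine ⟨he, ?_⟩
        rw [← he]
        exact hB k' hjk'
    -- reconstructed revealed-data function
    set st : (Fin n → ℝ) → {k : Fin n // j < k} → ℝ × ℝ := fun d k =>
      ((if d (tildePi Ψ k.val d) < pstar then (1:ℝ) else 0),
       (if tildePi Ψ k.val d ∈ H0 then (1:ℝ) else 0)) with hst
    have hstm : Measurable st := by
      rw [hst]
      refine measurable_pi_lambda _ fun k => Measurable.prodMk ?_ ?_
      · refine Measurable.ite ?_ measurable_const measurable_const
        exact (measurable_eval_comp (F := fun l (d : Fin n → ℝ) => d l)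
          (fun l => measurable_pi_apply l) (hπtm k.val)) measurableSet_Iio
      · exact Measurable.ite ((hπtm k.val) MeasurableSet.of_discrete)
          measurable_const measurable_const
    have hstEq : ∀ ω, (∀ k' : Fin n, j < k' → π k' ω ≠ i) → st (Zi ω) = sfun ω := by
      intro ω hA
      have hdir := dirA ω hA
      funext k
      have h1 : tildePi Ψ k.val (Zi ω) = π k.val ω := hdir k.val (le_of_lt k.2)
      have h2 : π k.val ω ≠ i := hA k.val k.2
      simp only [hst, hsfun]
      rw [h1]
      simp only [hZi, if_neg h2]
    have hinj : ∀ ω, ∀ k' : Fin n, π k' ω = π j ω → k' = j := fun ω k' h => (hperm ω).1 h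
    set 𝒯 : Set (Fin n → ℝ) := {d | tildePi Ψ j d = i ∧
        (∀ k : {k : Fin n // j < k}, tildePi Ψ k.val d ≠ i) ∧ st d ∈ M} with h𝒯
    have hseteq : {ω | π j ω = i} ∩ sfun ⁻¹' M = Zi ⁻¹' 𝒯 := by
      ext ω
      simp only [Set.mem_inter_iff, Set.mem_setOf_eq, Set.mem_preimage, h𝒯]
      constructor
      · rintro ⟨hπj, hMem⟩
        have hA : ∀ k' : Fin n, j < k' → π k' ω ≠ i := by
          intro k' hk' he
          have h2 := hinj ω k' (he.trans hπj.symm)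
          subst h2
          exact absurd hk' (lt_irrefl _)
        have hdir := dirA ω hA
        refine ⟨(hdir j le_rfl).trans hπj, fun k => ?_, ?_⟩
        · rw [hdir k.val (le_of_lt k.2)]; exact hA k.val k.2
        · rw [hstEq ω hA]; exact hMem
      · rintro ⟨hπt, hne, hstM⟩
        have hdirB := dirB ω (fun k' hk' => hne ⟨k', hk'⟩)
        have hA : ∀ k' : Fin n, j < k' → π k' ω ≠ i := by
          intro k' hk'
          rw [← hdirB k' hk']
          exact hne ⟨k', hk'⟩
        have hdir := dirA ω hA
        constructor
        · rw [← hdir j le_rfl]; exact hπt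
        · show sfun ω ∈ M
          rw [← hstEq ω hA]
          exact hstM
    have h𝒯m : MeasurableSet 𝒯 := by
      rw [h𝒯]
      have m1 : MeasurableSet ((tildePi Ψ j) ⁻¹' {i}) := (hπtm j) (measurableSet_singleton i)
      have m2 : MeasurableSet (⋂ k : {k : Fin n // j < k}, (tildePi Ψ k.val) ⁻¹' ({i}ᶜ)) :=
        MeasurableSet.iInter fun k => (hπtm k.val) (measurableSet_singleton i).compl
      have m3 : MeasurableSet (st ⁻¹' M) := hstm hM
      have he : {d : Fin n → ℝ | tildePi Ψ j d = i ∧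
          (∀ k : {k : Fin n // j < k}, tildePi Ψ k.val d ≠ i) ∧ st d ∈ M}
          = (tildePi Ψ j) ⁻¹' {i} ∩ ((⋂ k : {k : Fin n // j < k},
              (tildePi Ψ k.val) ⁻¹' ({i}ᶜ)) ∩ st ⁻¹' M) := by
        ext d
        simp [Set.mem_iInter]
      rw [he]
      exact m1.inter (m2.inter m3)
    -- independence: P i is independent of everything else, and its masked value
    have hfin := hnull_indep.indepFun_finset {(⟨i, hi⟩ : {l : Fin n // l ∈ H0})}
      (Finset.univ.erase ⟨i, hi⟩)
      (Finset.disjoint_singleton_left.mpr (Finset.notMem_erase _ _)) (fun l => hPm l.val)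
    have hfin' := indepFun_iff_measure_inter_preimage_eq_mul.mp hfin
    have hNN := indepFun_iff_measure_inter_preimage_eq_mul.mp hnull_nonnull_indep
    have hPiN : ∀ ⦃A : Set ℝ⦄, MeasurableSet A →
        ∀ ⦃B : Set ({l : {l : Fin n // l ∈ H0} // l ∈ Finset.univ.erase ⟨i, hi⟩} → ℝ)⦄,
          MeasurableSet B →
        μ (P i ⁻¹' A ∩ (fun ω (l : {l : {l : Fin n // l ∈ H0} //
              l ∈ Finset.univ.erase ⟨i, hi⟩}) => P l.val.val ω) ⁻¹' B)
          = μ (P i ⁻¹' A) * μ ((fun ω (l : {l : {l : Fin n // l ∈ H0} //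
              l ∈ Finset.univ.erase ⟨i, hi⟩}) => P l.val.val ω) ⁻¹' B) := by
      intro A hA B hB
      have hSA : MeasurableSet ((fun v : {x // x ∈ ({⟨i, hi⟩} :
          Finset {l : Fin n // l ∈ H0})} → ℝ =>
          v ⟨⟨i, hi⟩, Finset.mem_singleton_self _⟩) ⁻¹' A) :=
        (measurable_pi_apply (⟨⟨i, hi⟩, Finset.mem_singleton_self _⟩ :
          {x // x ∈ ({⟨i, hi⟩} : Finset {l : Fin n // l ∈ H0})})) hA
      have h2 := hfin' _ _ hSA hB
      exact h2
    have htriple : ∀ ⦃A : Set ℝ⦄, MeasurableSet A →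
        ∀ ⦃B1 : Set ({l : {l : Fin n // l ∈ H0} // l ∈ Finset.univ.erase ⟨i, hi⟩} → ℝ)⦄,
          MeasurableSet B1 →
        ∀ ⦃B2 : Set ({l : Fin n // l ∉ H0} → ℝ)⦄, MeasurableSet B2 →
        μ (P i ⁻¹' A ∩ ((fun ω (l : {l : {l : Fin n // l ∈ H0} //
              l ∈ Finset.univ.erase ⟨i, hi⟩}) => P l.val.val ω) ⁻¹' B1
            ∩ (fun ω (l : {l : Fin n // l ∉ H0}) => P l.val ω) ⁻¹' B2))
          = μ (P i ⁻¹' A) * μ ((fun ω (l : {l : {l : Fin n // l ∈ H0} //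
              l ∈ Finset.univ.erase ⟨i, hi⟩}) => P l.val.val ω) ⁻¹' B1
            ∩ (fun ω (l : {l : Fin n // l ∉ H0}) => P l.val ω) ⁻¹' B2) := by
      intro A hA B1 hB1 B2 hB2
      have hDm : MeasurableSet ((fun v : {l : Fin n // l ∈ H0} → ℝ => v ⟨i, hi⟩) ⁻¹' A
          ∩ (fun v (l : {l : {l : Fin n // l ∈ H0} // l ∈ Finset.univ.erase ⟨i, hi⟩}) =>
              v l.val) ⁻¹' B1) := by
        apply MeasurableSet.inter
        · exact (measurable_pi_apply (⟨i, hi⟩ : {l : Fin n // l ∈ H0})) hA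
        · exact (measurable_pi_lambda (fun (v : {l : Fin n // l ∈ H0} → ℝ)
            (l : {l : {l : Fin n // l ∈ H0} // l ∈ Finset.univ.erase ⟨i, hi⟩}) => v l.val)
            (fun l => measurable_pi_apply _)) hB1
      have hD2m : MeasurableSet ((fun v (l : {l : {l : Fin n // l ∈ H0} //
          l ∈ Finset.univ.erase ⟨i, hi⟩}) => (v : {l : Fin n // l ∈ H0} → ℝ) l.val) ⁻¹' B1) :=
        (measurable_pi_lambda (fun (v : {l : Fin n // l ∈ H0} → ℝ)
            (l : {l : {l : Fin n // l ∈ H0} // l ∈ Finset.univ.erase ⟨i, hi⟩}) => v l.val)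
            (fun l => measurable_pi_apply _)) hB1
      have e1 : μ ((P i ⁻¹' A ∩ (fun ω (l : {l : {l : Fin n // l ∈ H0} //
              l ∈ Finset.univ.erase ⟨i, hi⟩}) => P l.val.val ω) ⁻¹' B1)
            ∩ (fun ω (l : {l : Fin n // l ∉ H0}) => P l.val ω) ⁻¹' B2)
          = μ (P i ⁻¹' A ∩ (fun ω (l : {l : {l : Fin n // l ∈ H0} //
              l ∈ Finset.univ.erase ⟨i, hi⟩}) => P l.val.val ω) ⁻¹' B1)
            * μ ((fun ω (l : {l : Fin n // l ∉ H0}) => P l.val ω) ⁻¹' B2) := hNN _ _ hDm hB2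
      have e2 : μ ((fun ω (l : {l : {l : Fin n // l ∈ H0} //
              l ∈ Finset.univ.erase ⟨i, hi⟩}) => P l.val.val ω) ⁻¹' B1
            ∩ (fun ω (l : {l : Fin n // l ∉ H0}) => P l.val ω) ⁻¹' B2)
          = μ ((fun ω (l : {l : {l : Fin n // l ∈ H0} //
              l ∈ Finset.univ.erase ⟨i, hi⟩}) => P l.val.val ω) ⁻¹' B1)
            * μ ((fun ω (l : {l : Fin n // l ∉ H0}) => P l.val ω) ⁻¹' B2) := hNN _ _ hD2m hB2
      rw [← Set.inter_assoc, e1, hPiN hA hB1, e2, mul_assoc]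
    -- the vector of all other coordinates
    set V : Ω → Fin n → ℝ := fun ω l => if l = i then (0:ℝ) else P l ω with hV
    have hVm : Measurable V := by
      rw [hV]
      refine measurable_pi_lambda _ fun l => ?_
      by_cases hl : l = i
      · simpa only [if_pos hl] using measurable_const
      · simpa only [if_neg hl] using hPm l
    set ξ : (({l : {l : Fin n // l ∈ H0} // l ∈ Finset.univ.erase ⟨i, hi⟩} → ℝ)
        × ({l : Fin n // l ∉ H0} → ℝ)) → (Fin n → ℝ) := fun q l =>
      if hl : l = i then 0 else if h2 : l ∈ H0 then
        q.1 ⟨⟨l, h2⟩, Finset.mem_erase.mpr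
          ⟨fun he => hl (congrArg Subtype.val he), Finset.mem_univ _⟩⟩
      else q.2 ⟨l, h2⟩ with hξ
    have hξm : Measurable ξ := by
      rw [hξ]
      refine measurable_pi_lambda _ fun l => ?_
      by_cases hl : l = i
      · simp only [dif_pos hl]; exact measurable_const
      · by_cases h2 : l ∈ H0
        · simp only [dif_neg hl, dif_pos h2]
          exact (measurable_pi_apply _).comp measurable_fst
        · simp only [dif_neg hl, dif_neg h2]
          exact (measurable_pi_apply _).comp measurable_snd
    have hVeq : ∀ ω, ξ (fun l : {l : {l : Fin n // l ∈ H0} //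
          l ∈ Finset.univ.erase ⟨i, hi⟩} => P l.val.val ω,
        fun l : {l : Fin n // l ∉ H0} => P l.val ω) = V ω := by
      intro ω; funext l
      by_cases hl : l = i
      · simp only [hξ, hV, dif_pos hl, if_pos hl]
      · by_cases h2 : l ∈ H0
        · simp only [hξ, hV, dif_neg hl, dif_pos h2, if_neg hl]
        · simp only [hξ, hV, dif_neg hl, dif_neg h2, if_neg hl]
    have hPiV : ∀ ⦃A : Set ℝ⦄, MeasurableSet A → ∀ ⦃B : Set (Fin n → ℝ)⦄, MeasurableSet B →
        μ (P i ⁻¹' A ∩ V ⁻¹' B) = μ (P i ⁻¹' A) * μ (V ⁻¹' B) := by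
      intro A hA B hB
      have hpre : V ⁻¹' B = (fun ω => ((fun l : {l : {l : Fin n // l ∈ H0} //
            l ∈ Finset.univ.erase ⟨i, hi⟩} => P l.val.val ω),
          fun l : {l : Fin n // l ∉ H0} => P l.val ω)) ⁻¹' (ξ ⁻¹' B) := by
        ext ω
        simp only [Set.mem_preimage]
        rw [hVeq ω]
      rw [hpre]
      exact rect_ext μ (μ (P i ⁻¹' A))
        (measurable_pi_lambda _ fun l => hPm _)
        (measurable_pi_lambda _ fun l => hPm _)
        (fun B1 hB1 B2 hB2 => htriple hA hB1 hB2) (hξm hB)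
    -- the law of the masked null p-value
    have hrect2 : ∀ ⦃A : Set ℝ⦄, MeasurableSet A → ∀ ⦃B : Set (Fin n → ℝ)⦄, MeasurableSet B →
        μ ({ω | P i ω < pstar} ∩ ((fun ω => gf (P i ω)) ⁻¹' A ∩ V ⁻¹' B))
          = ENNReal.ofReal pstar * μ ((fun ω => gf (P i ω)) ⁻¹' A ∩ V ⁻¹' B) := by
      intro A hA B hB
      have hgA : MeasurableSet (gf ⁻¹' A) := hgfm hA
      have hDm : MeasurableSet (Iio pstar ∩ gf ⁻¹' A) := measurableSet_Iio.inter hgA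
      have e1 : {ω | P i ω < pstar} ∩ ((fun ω => gf (P i ω)) ⁻¹' A ∩ V ⁻¹' B)
          = P i ⁻¹' (Iio pstar ∩ gf ⁻¹' A) ∩ V ⁻¹' B := by
        ext ω
        simp only [Set.mem_inter_iff, Set.mem_setOf_eq, Set.mem_preimage, Set.mem_Iio]
        tauto
      rw [e1, hPiV hDm hB]
      have e2 : μ (P i ⁻¹' (Iio pstar ∩ gf ⁻¹' A)) = ENNReal.ofReal pstar
          * μ (P i ⁻¹' (gf ⁻¹' A)) := by
        rw [← Measure.map_apply (hPm i) hDm, ← Measure.map_apply (hPm i) hgA, hnull_unif i hi,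
          Measure.restrict_apply hDm, Measure.restrict_apply hgA]
        have ht := tent_vol pstar hp0 hp1 hA
        rw [← hgf] at ht
        exact ht
      rw [e2, mul_assoc, ← hPiV hgA hB]
      rfl
    have hmain := rect_ext μ (ENNReal.ofReal pstar) (hgfm.comp (hPm i)) hVm hrect2
    -- Zi factors through the pair (masked value of coordinate i, other coordinates)
    set upd : ℝ × (Fin n → ℝ) → (Fin n → ℝ) := fun q l => if l = i then q.1 else q.2 l with hupd
    have hupdm : Measurable upd := by
      rw [hupd]
      refine measurable_pi_lambda _ fun l => ?_
      by_cases hl : l = i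
      · simp only [if_pos hl]; exact measurable_fst
      · simp only [if_neg hl]; exact (measurable_pi_apply _).comp measurable_snd
    have hZieq : Zi ⁻¹' 𝒯 = (fun ω => (gf (P i ω), V ω)) ⁻¹' (upd ⁻¹' 𝒯) := by
      have hupdeq : ∀ ω, upd (gf (P i ω), V ω) = Zi ω := by
        intro ω; funext l
        by_cases hl : l = i
        · simp only [hupd, hZi, hV, if_pos hl]
        · simp only [hupd, hZi, hV, if_neg hl]
      ext ω
      simp only [Set.mem_preimage]
      rw [hupdeq ω]
    rw [hseteq, hZieq]
    exact hmain (hupdm h𝒯m)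
  -- decomposition over the null index chosen at step j
  have hSmeas : MeasurableSet (sfun ⁻¹' M) := hsfunm hM
  have hAmeas : MeasurableSet {ω | P (π j ω) ω < pstar} :=
    (measurable_eval_comp hPm (hπm j)) measurableSet_Iio
  have hBdecomp : ∀ X : Set Ω, MeasurableSet X →
      μ ({ω | π j ω ∈ H0} ∩ X) = ∑ i ∈ H0, μ ({ω | π j ω = i} ∩ X) := by
    intro X hX
    have hU : {ω | π j ω ∈ H0} ∩ X = ⋃ i ∈ H0, ({ω | π j ω = i} ∩ X) := by
      ext ω
      simp only [Set.mem_inter_iff, Set.mem_setOf_eq, Set.mem_iUnion]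
      constructor
      · rintro ⟨h1, h2⟩; exact ⟨π j ω, h1, rfl, h2⟩
      · rintro ⟨i, hi, h1, h2⟩; exact ⟨h1 ▸ hi, h2⟩
    rw [hU]
    refine measure_biUnion_finset ?_ fun i _ => by exact ((hπm j) (measurableSet_singleton i)).inter hX
    intro a _ b _ hab
    simp only [Function.onFun]
    rw [Set.disjoint_left]
    rintro ω ⟨h1, _⟩ ⟨h2, _⟩
    exact hab (h1.symm.trans h2)
  have hrw1 : {ω | P (π j ω) ω < pstar} ∩ {ω | π j ω ∈ H0} ∩ sfun ⁻¹' M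
      = {ω | π j ω ∈ H0} ∩ ({ω | P (π j ω) ω < pstar} ∩ sfun ⁻¹' M) := by
    ext ω; simp only [Set.mem_inter_iff, Set.mem_setOf_eq]; tauto
  rw [hrw1, hBdecomp _ (hAmeas.inter hSmeas), hBdecomp _ hSmeas, Finset.mul_sum]
  refine Finset.sum_congr rfl fun i hi => ?_
  have hrw2 : {ω | π j ω = i} ∩ ({ω | P (π j ω) ω < pstar} ∩ sfun ⁻¹' M)
      = {ω | P i ω < pstar} ∩ ({ω | π j ω = i} ∩ sfun ⁻¹' M) := by
    ext ω
    simp only [Set.mem_inter_iff, Set.mem_setOf_eq]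
    constructor
    · rintro ⟨h1, h2, h3⟩; rw [h1] at h2; exact ⟨h2, h1, h3⟩
    · rintro ⟨h1, h2, h3⟩; rw [← h2] at h1; exact ⟨h2, h1, h3⟩
  rw [hrw2]
  exact key i hi
end

section
/- Let A_1, ..., A_n be i.i.d. Bernoulli(p*) random variables with p* ∈ (0,1), set M_t = Σ_{j=1}^t A_j, and for a constant integer v ≥ 1 define the stopping time τ = min{ t ∈ {1,...,n} : t - M_t ≥ v or t = n }. Then M_τ is stochastically dominated by a negative binomial distribution NB(v, p*): for every integer k ≥ 0, ℙ(M_τ ≥ k) ≤ ℙ(N ≥ k), where N has distribution ℙ(N = i) = C(v + i - 1, i) · p*^i · (1 - p*)^v for i = 0, 1, 2, .... -/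
open MeasureTheory ProbabilityTheory Set

/-- Tail of a binomial distribution: `btail p m k = P(Bin(m,p) ≥ k)`. -/
noncomputable def btail (p : ℝ) : ℕ → ℕ → ℝ
  | _, 0 => 1
  | 0, _ + 1 => 0
  | m + 1, k + 1 => p * btail p m k + (1 - p) * btail p m (k + 1)

lemma btail_zero (p : ℝ) (m : ℕ) : btail p m 0 = 1 := by cases m <;> rfl

lemma btail_nil (p : ℝ) (k : ℕ) : btail p 0 (k + 1) = 0 := rfl

lemma btail_succ (p : ℝ) (m k : ℕ) :
    btail p (m + 1) (k + 1) = p * btail p m k + (1 - p) * btail p m (k + 1) := rfl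

lemma btail_of_lt (p : ℝ) : ∀ m k, m < k → btail p m k = 0
  | 0, 0, h => absurd h (lt_irrefl 0)
  | 0, k + 1, _ => rfl
  | m + 1, 0, h => absurd h (by omega)
  | m + 1, k + 1, h => by
      rw [btail_succ, btail_of_lt p m k (by omega), btail_of_lt p m (k + 1) (by omega)]
      ring

lemma btail_nonneg {p : ℝ} (h0 : 0 ≤ p) (h1 : p ≤ 1) : ∀ m k, 0 ≤ btail p m k
  | m, 0 => by rw [btail_zero]; norm_num
  | 0, k + 1 => by rw [btail_nil]
  | m + 1, k + 1 => by
      rw [btail_succ]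
      have ha := btail_nonneg h0 h1 m k
      have hb := btail_nonneg h0 h1 m (k + 1)
      nlinarith

lemma btail_succ_le {p : ℝ} (h0 : 0 ≤ p) (h1 : p ≤ 1) :
    ∀ m k, btail p m k ≤ btail p (m + 1) k
  | m, 0 => by rw [btail_zero, btail_zero]
  | 0, k + 1 => by rw [btail_nil]; exact btail_nonneg h0 h1 1 (k + 1)
  | m + 1, k + 1 => by
      rw [btail_succ, btail_succ]
      have h2 := btail_succ_le h0 h1 m k
      have h3 := btail_succ_le h0 h1 m (k + 1)
      nlinarith

lemma btail_le {p : ℝ} (h0 : 0 ≤ p) (h1 : p ≤ 1) {m m' : ℕ} (h : m ≤ m') (k : ℕ) :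
    btail p m k ≤ btail p m' k := by
  induction m' with
  | zero =>
      have : m = 0 := by omega
      subst this; exact le_refl _
  | succ m' ih =>
      rcases Nat.lt_or_ge m (m' + 1) with hlt | hge
      · exact (ih (by omega)).trans (btail_succ_le h0 h1 m' k)
      · have : m = m' + 1 := by omega
        subst this; exact le_refl _

/-- Tail of the negative binomial distribution `NB(v,p)` starting at `k`. -/
noncomputable def Tnb (p : ℝ) (v k : ℕ) : ℝ :=
  ∑' i : ℕ, ((v + (k + i) - 1).choose (k + i) : ℝ) * p ^ (k + i) * (1 - p) ^ v

lemma summable_core {p : ℝ} (h0 : 0 ≤ p) (h1 : p < 1) (w : ℕ) :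
    Summable (fun j : ℕ => ((j + w).choose w : ℝ) * p ^ j) :=
  summable_choose_mul_geometric_of_norm_lt_one w
    (by rw [Real.norm_eq_abs, abs_of_nonneg h0]; exact h1)

lemma summable_Tnb {p : ℝ} (h0 : 0 ≤ p) (h1 : p < 1) (v k : ℕ) :
    Summable (fun i : ℕ =>
      ((v + (k + i) - 1).choose (k + i) : ℝ) * p ^ (k + i) * (1 - p) ^ v) := by
  cases v with
  | zero =>
      apply summable_of_ne_finset_zero (s := ({0} : Finset ℕ))
      intro i hi
      have hi0 : i ≠ 0 := by simpa using hi
      have hc : ((0 + (k + i) - 1).choose (k + i)) = 0 :=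
        Nat.choose_eq_zero_of_lt (by omega)
      rw [hc]
      simp
  | succ w =>
      have h1' : Summable (fun i : ℕ => (((i + k) + w).choose w : ℝ) * p ^ (i + k)) :=
        (summable_nat_add_iff k).mpr (summable_core h0 h1 w)
      have h2 := h1'.mul_right ((1 - p) ^ (w + 1))
      apply h2.congr
      intro i
      have e1 : w + 1 + (k + i) - 1 = (i + k) + w := by omega
      rw [e1, show (((i + k) + w).choose w) = (((i + k) + w).choose (k + i)) from
        Nat.choose_symm_of_eq_add (by omega), Nat.add_comm i k]

lemma Tnb_mass {p : ℝ} (h0 : 0 < p) (h1 : p < 1) (w : ℕ) : Tnb p (w + 1) 0 = 1 := by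
  have hnorm : ‖p‖ < 1 := by rw [Real.norm_eq_abs, abs_of_nonneg h0.le]; exact h1
  have H := hasSum_choose_mul_geometric_of_norm_lt_one (𝕜 := ℝ) w hnorm
  have hq : (1 - p) ^ (w + 1) ≠ 0 := pow_ne_zero _ (by linarith)
  have H2 : HasSum (fun j : ℕ => ((j + w).choose w : ℝ) * p ^ j * (1 - p) ^ (w + 1)) 1 := by
    have := H.mul_right ((1 - p) ^ (w + 1))
    rwa [one_div, inv_mul_cancel₀ hq] at this
  have e : Tnb p (w + 1) 0
      = ∑' j : ℕ, ((j + w).choose w : ℝ) * p ^ j * (1 - p) ^ (w + 1) := by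
    unfold Tnb
    apply tsum_congr
    intro i
    have e1 : w + 1 + (0 + i) - 1 = i + w := by omega
    rw [e1, show (0 : ℕ) + i = i from by omega,
      show (i + w).choose i = (i + w).choose w from Nat.choose_symm_add]
  rw [e, H2.tsum_eq]

lemma Tnb_zero_left (p : ℝ) (k : ℕ) : Tnb p 0 (k + 1) = 0 := by
  unfold Tnb
  have h : ∀ i : ℕ, ((0 + (k + 1 + i) - 1).choose (k + 1 + i) : ℝ) * p ^ (k + 1 + i)
      * (1 - p) ^ 0 = 0 := by
    intro i
    have hc : ((0 + (k + 1 + i) - 1).choose (k + 1 + i)) = 0 :=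
      Nat.choose_eq_zero_of_lt (by omega)
    rw [hc]
    simp
  simp only [h, tsum_zero]

lemma Tnb_rec {p : ℝ} (h0 : 0 ≤ p) (h1 : p < 1) (v k : ℕ) :
    Tnb p (v + 1) (k + 1) = p * Tnb p (v + 1) k + (1 - p) * Tnb p v (k + 1) := by
  have ha : Summable (fun i : ℕ =>
      p * (((v + 1 + (k + i) - 1).choose (k + i) : ℝ) * p ^ (k + i) * (1 - p) ^ (v + 1))) :=
    (summable_Tnb h0 h1 (v + 1) k).mul_left p
  have hb : Summable (fun i : ℕ =>
      (1 - p) * (((v + (k + 1 + i) - 1).choose (k + 1 + i) : ℝ) * p ^ (k + 1 + i)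
        * (1 - p) ^ v)) :=
    (summable_Tnb h0 h1 v (k + 1)).mul_left (1 - p)
  have key : Tnb p (v + 1) (k + 1)
      = ∑' i : ℕ,
        (p * (((v + 1 + (k + i) - 1).choose (k + i) : ℝ) * p ^ (k + i) * (1 - p) ^ (v + 1))
        + (1 - p) * (((v + (k + 1 + i) - 1).choose (k + 1 + i) : ℝ) * p ^ (k + 1 + i)
          * (1 - p) ^ v)) := by
    unfold Tnb
    apply tsum_congr
    intro i
    have e1 : v + 1 + (k + 1 + i) - 1 = (v + k + i) + 1 := by omega
    have e2 : k + 1 + i = (k + i) + 1 := by omega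
    have e3 : v + 1 + (k + i) - 1 = v + k + i := by omega
    rw [e1, e2, e3, show v + ((k + i) + 1) - 1 = v + k + i from by omega,
      Nat.choose_succ_succ]
    push_cast
    ring
  rw [key, Summable.tsum_add ha hb, tsum_mul_left, tsum_mul_left]
  rfl

lemma btail_eq_Tnb {p : ℝ} (h0 : 0 < p) (h1 : p < 1) :
    ∀ w k, btail p (k + w) k = Tnb p (w + 1) k := by
  intro w
  induction w with
  | zero =>
      intro k
      induction k with
      | zero => rw [btail_zero]; exact (Tnb_mass h0 h1 0).symm
      | succ k ih =>
          have ih' : btail p k k = Tnb p (0 + 1) k := ih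
          rw [show k + 1 + 0 = k + 1 from by omega, btail_succ,
            btail_of_lt p k (k + 1) (by omega), ih',
            Tnb_rec h0.le h1 0 k, Tnb_zero_left]
  | succ w ih =>
      intro k
      induction k with
      | zero => rw [btail_zero]; exact (Tnb_mass h0 h1 (w + 1)).symm
      | succ k ihk =>
          rw [show k + 1 + (w + 1) = (k + (w + 1)) + 1 from by omega, btail_succ, ihk,
            show k + (w + 1) = (k + 1) + w from by omega, ih (k + 1),
            Tnb_rec h0.le h1 (w + 1) k]

lemma measure_sum_indicator_tail_le {Ω : Type*} [MeasurableSpace Ω] (μ : Measure Ω)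
    [IsProbabilityMeasure μ] {n : ℕ} {p : ℝ} (hp : p ∈ Set.Ioo (0 : ℝ) 1)
    (A : Fin n → Ω → ℕ) (hAm : ∀ j, Measurable (A j))
    (hA01 : ∀ j ω, A j ω = 0 ∨ A j ω = 1)
    (hindep : iIndepFun A μ)
    (hber : ∀ j, μ {ω | A j ω = 1} = ENNReal.ofReal p) :
    ∀ (s : Finset (Fin n)) (k : ℕ),
      μ {ω | k ≤ ∑ j ∈ s, A j ω} ≤ ENNReal.ofReal (btail p s.card k) := by
  classical
  intro s
  induction s using Finset.induction_on with
  | empty =>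
      intro k
      cases k with
      | zero => simp [btail_zero]
      | succ k => simp [btail_nil]
  | @insert i s hi ih =>
      intro k
      cases k with
      | zero => simp [btail_zero]
      | succ k =>
          set S : Ω → ℕ := fun ω => ∑ j ∈ s, A j ω with hS
          have hSm : Measurable S := Finset.measurable_sum s (fun j _ => hAm j)
          have hind : IndepFun S (A i) μ := by
            have h := hindep.indepFun_finsetSum_of_notMem hAm hi
            have he : (∑ j ∈ s, A j) = S := by
              funext ω; simp [hS, Finset.sum_apply]
            rwa [he] at h
          have hA1 : (A i) ⁻¹' {1} = {ω | A i ω = 1} := by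
            ext ω; simp
          have hA0compl : (A i) ⁻¹' {0} = ((A i) ⁻¹' {1})ᶜ := by
            ext ω
            rcases hA01 i ω with h | h <;> simp [h]
          have hmeas1 : μ ((A i) ⁻¹' {1}) = ENNReal.ofReal p := by
            rw [hA1]; exact hber i
          have hmeas0 : μ ((A i) ⁻¹' {0}) = ENNReal.ofReal (1 - p) := by
            rw [hA0compl, measure_compl ((hAm i) (measurableSet_singleton 1))
              (measure_ne_top μ _), measure_univ, hmeas1,
              ENNReal.ofReal_sub 1 hp.1.le, ENNReal.ofReal_one]
          have hsplit : {ω | k + 1 ≤ ∑ j ∈ insert i s, A j ω}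
              = ((A i) ⁻¹' {1} ∩ S ⁻¹' {x | k ≤ x})
                ∪ ((A i) ⁻¹' {0} ∩ S ⁻¹' {x | k + 1 ≤ x}) := by
            ext ω
            simp only [Finset.sum_insert hi, Set.mem_setOf_eq, Set.mem_union,
              Set.mem_inter_iff, Set.mem_preimage, Set.mem_singleton_iff, hS]
            rcases hA01 i ω with h | h <;> simp [h] <;> omega
          have hmk : MeasurableSet ({x : ℕ | k ≤ x}) := measurableSet_Ici
          have hmk1 : MeasurableSet ({x : ℕ | k + 1 ≤ x}) := measurableSet_Ici
          have h1 : μ ((A i) ⁻¹' {1} ∩ S ⁻¹' {x | k ≤ x})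
              = ENNReal.ofReal p * μ (S ⁻¹' {x | k ≤ x}) := by
            rw [Set.inter_comm,
              hind.measure_inter_preimage_eq_mul _ _ hmk (measurableSet_singleton 1),
              hmeas1, mul_comm]
          have h2 : μ ((A i) ⁻¹' {0} ∩ S ⁻¹' {x | k + 1 ≤ x})
              = ENNReal.ofReal (1 - p) * μ (S ⁻¹' {x | k + 1 ≤ x}) := by
            rw [Set.inter_comm,
              hind.measure_inter_preimage_eq_mul _ _ hmk1 (measurableSet_singleton 0),
              hmeas0, mul_comm]
          have hsub1 : μ (S ⁻¹' {x | k ≤ x}) ≤ ENNReal.ofReal (btail p s.card k) := ih k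
          have hsub2 : μ (S ⁻¹' {x | k + 1 ≤ x})
              ≤ ENNReal.ofReal (btail p s.card (k + 1)) := ih (k + 1)
          calc μ {ω | k + 1 ≤ ∑ j ∈ insert i s, A j ω}
              ≤ μ ((A i) ⁻¹' {1} ∩ S ⁻¹' {x | k ≤ x})
                + μ ((A i) ⁻¹' {0} ∩ S ⁻¹' {x | k + 1 ≤ x}) := by
                rw [hsplit]; exact measure_union_le _ _
            _ = ENNReal.ofReal p * μ (S ⁻¹' {x | k ≤ x})
                + ENNReal.ofReal (1 - p) * μ (S ⁻¹' {x | k + 1 ≤ x}) := by rw [h1, h2]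
            _ ≤ ENNReal.ofReal p * ENNReal.ofReal (btail p s.card k)
                + ENNReal.ofReal (1 - p) * ENNReal.ofReal (btail p s.card (k + 1)) := by
                exact add_le_add (mul_le_mul_right hsub1 _) (mul_le_mul_right hsub2 _)
            _ = ENNReal.ofReal (p * btail p s.card k
                + (1 - p) * btail p s.card (k + 1)) := by
                rw [← ENNReal.ofReal_mul hp.1.le, ← ENNReal.ofReal_mul (by linarith [hp.2]),
                  ← ENNReal.ofReal_add
                    (mul_nonneg hp.1.le (btail_nonneg hp.1.le hp.2.le _ _))
                    (mul_nonneg (by linarith [hp.2]) (btail_nonneg hp.1.le hp.2.le _ _))]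
            _ = ENNReal.ofReal (btail p (insert i s).card (k + 1)) := by
                rw [Finset.card_insert_of_notMem hi, btail_succ]

/-- For i.i.d. Bernoulli(p*) variables `A_1,…,A_n`, partial sums
`M_t = Σ_{j≤t} A_j`, and the stopping time
`τ = min{t ∈ {1,…,n} : t - M_t ≥ v or t = n}` (where `v ≥ 1`), the stopped sum `M_τ`
is stochastically dominated by `NB(v, p*)`: for every `k`,
`ℙ(M_τ ≥ k) ≤ Σ_{i ≥ k} C(v+i-1, i)·p*^i·(1-p*)^v`. -/
theorem stopped_bernoulli_sum_negBinomial_dominated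
    {Ω : Type*} [MeasurableSpace Ω] (μ : Measure Ω) [IsProbabilityMeasure μ]
    (n v : ℕ) (hn : 1 ≤ n) (hv : 1 ≤ v)
    (pstar : ℝ) (hp : pstar ∈ Set.Ioo (0:ℝ) 1)
    (A : Fin n → Ω → ℕ) (hAm : ∀ j, Measurable (A j))
    (hA01 : ∀ j ω, A j ω = 0 ∨ A j ω = 1)
    (hindep : iIndepFun A μ)
    (hber : ∀ j, μ {ω | A j ω = 1} = ENNReal.ofReal pstar)
    (M : ℕ → Ω → ℕ)
    (hM : ∀ t ω, M t ω = ∑ j ∈ Finset.univ.filter (fun j : Fin n => j.val < t), A j ω)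
    (τ : Ω → ℕ)
    (hτ : ∀ ω, τ ω = sInf {t : ℕ | 1 ≤ t ∧ t ≤ n ∧ (v ≤ t - M t ω ∨ t = n)}) :
    ∀ k : ℕ, μ {ω | k ≤ M (τ ω) ω}
      ≤ ENNReal.ofReal (∑' i : ℕ,
          ((v + (k + i) - 1).choose (k + i) : ℝ) * pstar ^ (k + i) * (1 - pstar) ^ v) := by
  classical
  -- Basic facts about M
  have hM0 : ∀ ω, M 0 ω = 0 := by
    intro ω
    rw [hM]
    have : Finset.univ.filter (fun j : Fin n => j.val < 0) = ∅ := by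
      ext j; simp
    rw [this, Finset.sum_empty]
  have hMono : ∀ ω {t t' : ℕ}, t ≤ t' → M t ω ≤ M t' ω := by
    intro ω t t' htt
    rw [hM, hM]
    apply Finset.sum_le_sum_of_subset
    intro j hj
    simp only [Finset.mem_filter, Finset.mem_univ, true_and] at hj ⊢
    omega
  have hMsucc : ∀ ω t, M (t + 1) ω ≤ M t ω + 1 := by
    intro ω t
    rw [hM, hM]
    have hsplit : Finset.univ.filter (fun j : Fin n => j.val < t + 1)
        = Finset.univ.filter (fun j : Fin n => j.val < t)
          ∪ Finset.univ.filter (fun j : Fin n => j.val = t) := by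
      ext j
      simp only [Finset.mem_filter, Finset.mem_univ, true_and, Finset.mem_union]
      omega
    have hdisj : Disjoint (Finset.univ.filter (fun j : Fin n => j.val < t))
        (Finset.univ.filter (fun j : Fin n => j.val = t)) := by
      rw [Finset.disjoint_left]
      intro j hj1 hj2
      simp only [Finset.mem_filter, Finset.mem_univ, true_and] at hj1 hj2
      omega
    rw [hsplit, Finset.sum_union hdisj]
    have hlast : ∑ j ∈ Finset.univ.filter (fun j : Fin n => j.val = t), A j ω ≤ 1 := by
      by_cases ht : t < n
      · have : Finset.univ.filter (fun j : Fin n => j.val = t) = {⟨t, ht⟩} := by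
          ext j
          simp only [Finset.mem_filter, Finset.mem_univ, true_and, Finset.mem_singleton,
            Fin.ext_iff]
        rw [this, Finset.sum_singleton]
        rcases hA01 ⟨t, ht⟩ ω with h | h <;> omega
      · have : Finset.univ.filter (fun j : Fin n => j.val = t) = ∅ := by
          ext j
          simp only [Finset.mem_filter, Finset.mem_univ, true_and, Finset.notMem_empty,
            iff_false]
          intro h
          exact ht (h ▸ j.isLt)
        rw [this, Finset.sum_empty]
        exact Nat.zero_le 1
    omega
  -- Pathwise: if k ≥ 1 and k ≤ M_τ then k ≤ M_{k+v-1}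
  have pathwise : ∀ ω k, 1 ≤ k → k ≤ M (τ ω) ω → k ≤ M (k + v - 1) ω := by
    intro ω k hk hkM
    have hnS : n ∈ {t : ℕ | 1 ≤ t ∧ t ≤ n ∧ (v ≤ t - M t ω ∨ t = n)} :=
      ⟨hn, le_refl n, Or.inr rfl⟩
    have hτn : τ ω ≤ n := by rw [hτ]; exact Nat.sInf_le hnS
    have hτU : τ ω ∈ {t : ℕ | k ≤ M t ω} := hkM
    have hsU : sInf {t : ℕ | k ≤ M t ω} ∈ {t : ℕ | k ≤ M t ω} := Nat.sInf_mem ⟨τ ω, hτU⟩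
    have hsle : sInf {t : ℕ | k ≤ M t ω} ≤ τ ω := Nat.sInf_le hτU
    have hs0 : sInf {t : ℕ | k ≤ M t ω} ≠ 0 := by
      intro h
      have h2 : k ≤ M 0 ω := by
        have := hsU
        rw [h] at this
        exact this
      rw [hM0] at h2
      omega
    obtain ⟨s', hs'⟩ : ∃ s', sInf {t : ℕ | k ≤ M t ω} = s' + 1 :=
      ⟨sInf {t : ℕ | k ≤ M t ω} - 1, by omega⟩
    rw [hs'] at hsU hsle
    have hup : k ≤ M (s' + 1) ω := hsU
    have hlt : M s' ω < k := by
      by_contra h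
      push_neg at h
      have h2 : sInf {t : ℕ | k ≤ M t ω} ≤ s' := Nat.sInf_le h
      omega
    have hstep : M (s' + 1) ω ≤ M s' ω + 1 := hMsucc ω s'
    have hMs' : M s' ω = k - 1 := by omega
    have hs'le : s' ≤ k + v - 2 := by
      rcases Nat.eq_zero_or_pos s' with h0 | hpos
      · omega
      · have hlt2 : s' < τ ω := by omega
        rw [hτ] at hlt2
        have hnotin := Nat.notMem_of_lt_sInf hlt2
        have hs'n : s' < n := by omega
        have hv2 : ¬(v ≤ s' - M s' ω) := fun hcon => hnotin ⟨hpos, hs'n.le, Or.inl hcon⟩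
        omega
    exact le_trans hup (hMono ω (by omega : s' + 1 ≤ k + v - 1))
  -- main
  intro k
  rcases Nat.eq_zero_or_pos k with rfl | hk
  · have hmass : Tnb pstar v 0 = 1 := by
      obtain ⟨w, rfl⟩ : ∃ w, v = w + 1 := ⟨v - 1, by omega⟩
      exact Tnb_mass hp.1 hp.2 w
    calc μ {ω | 0 ≤ M (τ ω) ω} ≤ 1 := prob_le_one
      _ = ENNReal.ofReal (Tnb pstar v 0) := by rw [hmass, ENNReal.ofReal_one]
      _ = _ := rfl
  · set sfin : Finset (Fin n) := Finset.univ.filter (fun j : Fin n => j.val < k + v - 1)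
      with hsfin
    have hsubset : {ω | k ≤ M (τ ω) ω} ⊆ {ω | k ≤ ∑ j ∈ sfin, A j ω} := by
      intro ω hω
      have := pathwise ω k hk hω
      rwa [hM] at this
    have hcard : sfin.card ≤ k + v - 1 := by
      calc sfin.card ≤ (Finset.range (k + v - 1)).card := by
            apply Finset.card_le_card_of_injOn (fun j => j.val)
            · intro j hj
              simp only [hsfin, Finset.mem_filter, Finset.mem_univ, true_and] at hj
              simpa using hj
            · intro a _ b _ hab
              exact Fin.val_injective hab
        _ = k + v - 1 := Finset.card_range _
    calc μ {ω | k ≤ M (τ ω) ω}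
        ≤ μ {ω | k ≤ ∑ j ∈ sfin, A j ω} := measure_mono hsubset
      _ ≤ ENNReal.ofReal (btail pstar sfin.card k) :=
          measure_sum_indicator_tail_le μ hp A hAm hA01 hindep hber sfin k
      _ ≤ ENNReal.ofReal (btail pstar (k + v - 1) k) :=
          ENNReal.ofReal_le_ofReal (btail_le hp.1.le hp.2.le hcard k)
      _ = ENNReal.ofReal (Tnb pstar v k) := by
          congr 1
          have e : k + v - 1 = k + (v - 1) := by omega
          rw [e, btail_eq_Tnb hp.1 hp.2 (v - 1) k, show v - 1 + 1 = v from by omega]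
      _ = _ := rfl
end

section
/- Let a_1, ..., a_n ∈ {0,1} be any binary sequence, set M_t = Σ_{j=1}^t a_j, and fix an integer v ≥ 1. Define the forward stopping time τ° = min{ t ∈ {1,...,n} : t - M_t ≥ v or t = n } and the backward stopping time τᵇ = max{ s ∈ {1,...,n} : s - M_s < v or s = 1 }. Then M_{τᵇ} = M_{τ°}. -/
/-- For any binary sequence `a_1,…,a_n` with partial sums
`M_t = Σ_{j=1}^t a_j` and an integer `v ≥ 1`, the forward stopping time
`τ° = min{t ∈ {1,…,n} : t - M_t ≥ v or t = n}` and the backward stopping time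
`τᵇ = max{s ∈ {1,…,n} : s - M_s < v or s = 1}` satisfy `M_{τᵇ} = M_{τ°}`. -/
theorem forward_backward_stopping_same_sum
    (n v : ℕ) (hn : 1 ≤ n) (hv : 1 ≤ v)
    (a : ℕ → ℕ) (ha : ∀ j, a j = 0 ∨ a j = 1)
    (M : ℕ → ℕ) (hM : ∀ t, M t = ∑ j ∈ Finset.Icc 1 t, a j)
    (τo τb : ℕ)
    (hτo : τo = sInf {t : ℕ | 1 ≤ t ∧ t ≤ n ∧ (v ≤ t - M t ∨ t = n)})
    (hτb : τb = sSup {s : ℕ | 1 ≤ s ∧ s ≤ n ∧ (s - M s < v ∨ s = 1)}) :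
    M τb = M τo := by
  have ha1 : ∀ j, a j ≤ 1 := fun j => by rcases ha j with h|h <;> omega
  have hstep : ∀ t, M (t+1) = M t + a (t+1) := by
    intro t
    rw [hM, hM, Finset.sum_Icc_succ_top (by omega : 1 ≤ t + 1)]
  have hMle : ∀ t, M t ≤ t := by
    intro t
    induction t with
    | zero => rw [hM]; simp
    | succ t ih => rw [hstep]; have := ha1 (t+1); omega
  have hZmono : ∀ s t, s ≤ t → s - M s ≤ t - M t := by
    intro s t h
    induction t with
    | zero => omega
    | succ t ih =>
      by_cases hs : s ≤ t
      · have h1 := ih hs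
        have h2 := hstep t
        have h3 := hMle t
        have h4 := ha1 (t+1)
        omega
      · have hst : s = t + 1 := by omega
        subst hst
        omega
  have hbdd : BddAbove {s : ℕ | 1 ≤ s ∧ s ≤ n ∧ (s - M s < v ∨ s = 1)} :=
    ⟨n, fun s hs => hs.2.1⟩
  have hoS : τo ∈ {t : ℕ | 1 ≤ t ∧ t ≤ n ∧ (v ≤ t - M t ∨ t = n)} := by
    rw [hτo]; exact Nat.sInf_mem ⟨n, hn, le_refl n, Or.inr rfl⟩
  have hbT : τb ∈ {s : ℕ | 1 ≤ s ∧ s ≤ n ∧ (s - M s < v ∨ s = 1)} := by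
    rw [hτb]; exact Nat.sSup_mem ⟨1, le_refl 1, hn, Or.inr rfl⟩ hbdd
  have hτo_min : ∀ t, t ∈ {t : ℕ | 1 ≤ t ∧ t ≤ n ∧ (v ≤ t - M t ∨ t = n)} → τo ≤ t := by
    intro t ht; rw [hτo]; exact Nat.sInf_le ht
  have hτb_max : ∀ s, s ∈ {s : ℕ | 1 ≤ s ∧ s ≤ n ∧ (s - M s < v ∨ s = 1)} → s ≤ τb := by
    intro s hs; rw [hτb]; exact le_csSup hbdd hs
  obtain ⟨ho1, hon, hoC⟩ := hoS
  obtain ⟨hb1, hbn, hbC⟩ := hbT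
  by_cases hZn : v ≤ n - M n
  · have hZo : v ≤ τo - M τo := by
      rcases hoC with h|h
      · exact h
      · rw [h]; exact hZn
    by_cases ho : τo = 1
    · subst ho
      have h1 : 1 - M 1 ≤ τb - M τb := hZmono 1 τb hb1
      have hb : τb = 1 := by rcases hbC with h|h <;> omega
      rw [hb]
    · have ho2 : 2 ≤ τo := by omega
      obtain ⟨k, rfl⟩ : ∃ k, τo = k + 1 := ⟨τo - 1, by omega⟩
      have hZprev : k - M k < v := by
        by_contra hc
        push_neg at hc
        exact absurd (hτo_min k ⟨by omega, by omega, Or.inl hc⟩) (by omega)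
      have hprevT : k ∈ {s : ℕ | 1 ≤ s ∧ s ≤ n ∧ (s - M s < v ∨ s = 1)} :=
        ⟨by omega, by omega, Or.inl hZprev⟩
      have hge : k ≤ τb := hτb_max k hprevT
      have hle : τb ≤ k := by
        rcases hbC with h|h
        · by_contra hc
          push_neg at hc
          have : k + 1 - M (k+1) ≤ τb - M τb := hZmono (k+1) τb (by omega)
          omega
        · omega
      have hb : τb = k := le_antisymm hle hge
      have h2 := hstep k
      have h3 := hMle k
      have h4 := ha1 (k+1)
      rw [hb]
      omega
  · have hτo_eq : τo = n := by
      rcases hoC with h|h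
      · exact absurd (le_trans h (hZmono τo n hon)) hZn
      · exact h
    have hτb_eq : τb = n := le_antisymm hbn
      (hτb_max n ⟨hn, le_refl n, Or.inl (by omega)⟩)
    rw [hτo_eq, hτb_eq]
end
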